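/- arXiv:0910.4048 — 12 statements merged into one kernel-verified Lean document; each statement's English description precedes it below -/
import Mathlib

section
/- For each real u > 0, the limit as m tends to infinity of the sum over k from 1 to m of binom(m,k) * (-1)^(k+1) / (k*u + 1) equals 1. -/
open Filter Finset Real

-- product lower bound
lemma prod_one_add_ge (m : ℕ) (a : ℕ → ℝ) (ha : ∀ i, 0 ≤ a i) :
    1 + ∑ i ∈ range m, a i ≤ ∏ i ∈ range m, (1 + a i) := by
  induction m with
  | zero => simp
  | succ n ih =>
    rw [Finset.sum_range_succ, Finset.prod_range_succ]
    have h1 : (0:ℝ) ≤ ∑ i ∈ range n, a i := Finset.sum_nonneg fun i _ => ha i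
    nlinarith [ha n, ih]

lemma key (u : ℝ) (hu : 0 < u) : ∀ m : ℕ, ∀ c : ℝ, 0 < c →
    ∑ k ∈ range (m+1), (m.choose k : ℝ) * (-1)^k / (k*u + c)
      = u^m * m.factorial / ∏ j ∈ range (m+1), (j*u + c) := by
  intro m
  induction m with
  | zero => intro c hc; simp
  | succ n ih =>
    intro c hc
    have hpos : ∀ j : ℕ, (0:ℝ) < j*u + c := by
      intro j; positivity
    have hP : (0:ℝ) < ∏ j ∈ range (n+1), (j*u + c) :=
      Finset.prod_pos fun j _ => hpos j
    have hP' : (0:ℝ) < ∏ j ∈ range (n+1), (j*u + (c+u)) := by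
      apply Finset.prod_pos; intro j _; positivity
    rw [Finset.sum_range_succ']
    have split : ∀ i : ℕ, ((n+1).choose (i+1) : ℝ) * (-1)^(i+1) / (((i+1:ℕ):ℝ)*u + c)
        = (n.choose (i+1) : ℝ) * (-1)^(i+1) / (((i+1:ℕ):ℝ)*u + c)
          + (-(1:ℝ)) * ((n.choose i : ℝ) * (-1)^i / (i*u + (c+u))) := by
      intro i
      rw [Nat.choose_succ_succ]
      push_cast
      have h : ((i:ℝ)+1)*u + c = (i:ℝ)*u + (c+u) := by ring
      rw [h]
      ring
    simp only [split]
    rw [Finset.sum_add_distrib, ← Finset.mul_sum]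
    have h1 : ∑ i ∈ range (n+1), (n.choose (i+1) : ℝ) * (-1)^(i+1) / (((i+1:ℕ):ℝ)*u + c)
        = (∑ k ∈ range (n+1), (n.choose k : ℝ) * (-1)^k / (k*u + c))
          - (n.choose 0 : ℝ) * (-1)^0 / (((0:ℕ):ℝ)*u + c) := by
      have h2 := Finset.sum_range_succ' (fun k => (n.choose k : ℝ) * (-1)^k / (k*u + c)) (n+1)
      rw [Finset.sum_range_succ] at h2
      simp only [Nat.choose_succ_self, Nat.cast_zero, zero_mul, zero_div, add_zero] at h2
      rw [h2]; ring
    rw [h1, ih c hc, ih (c+u) (by positivity)]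
    simp only [Nat.choose_zero_right]
    -- now algebra
    have hprod2 : ∏ j ∈ range (n+2), (j*u + c)
        = (∏ j ∈ range (n+1), (j*u + (c+u))) * c := by
      rw [Finset.prod_range_succ' (fun j => (j:ℝ)*u + c) (n+1)]
      congr 1
      · apply Finset.prod_congr rfl; intro j _; push_cast; ring
      · simp
    have hprod3 : ∏ j ∈ range (n+2), (j*u + c)
        = (∏ j ∈ range (n+1), (j*u + c)) * ((n+1)*u + c) := by
      rw [Finset.prod_range_succ]; push_cast; ring
    have hd : ((n:ℝ)+1)*u + c ≠ 0 := by positivity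
    have hc' : (c:ℝ) ≠ 0 := ne_of_gt hc
    rw [hprod3]
    field_simp
    rw [Nat.factorial_succ]
    push_cast
    have hprod23 : (∏ j ∈ range (n+1), ((j:ℝ)*u + (c+u))) * c
        = (∏ j ∈ range (n+1), ((j:ℝ)*u + c)) * (((n:ℝ)+1)*u + c) := by
      rw [← hprod2, hprod3]
    have e1 : ∏ x ∈ range (n+1), (u*(x:ℝ)+c) = ∏ x ∈ range (n+1), ((x:ℝ)*u+c) :=
      Finset.prod_congr rfl fun _ _ => by ring
    have e2 : ∏ x ∈ range (n+1), (u*(x:ℝ)+c+u) = ∏ x ∈ range (n+1), ((x:ℝ)*u+(c+u)) :=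
      Finset.prod_congr rfl fun _ _ => by ring
    have e3 : ∏ x ∈ range (n+1), (u*(x:ℝ)+(c+u)) = ∏ x ∈ range (n+1), ((x:ℝ)*u+(c+u)) :=
      Finset.prod_congr rfl fun _ _ => by ring
    simp only [e1, e2, e3]
    linear_combination (u^n * (n.factorial : ℝ) * c * (∏ j ∈ range (n+1), ((j:ℝ)*u + c))) * hprod23

theorem stmt0 (u : ℝ) (hu : 0 < u) :
    Tendsto (fun m : ℕ => ∑ k ∈ Icc 1 m, (m.choose k : ℝ) * (-1) ^ (k + 1) / (k * u + 1))
      atTop (nhds 1) := by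
  set T : ℕ → ℝ := fun m => u^m * m.factorial / ∏ j ∈ range (m+1), ((j:ℝ)*u + 1) with hT
  have hsum : ∀ m : ℕ, ∑ k ∈ Icc 1 m, (m.choose k : ℝ) * (-1) ^ (k + 1) / (k * u + 1)
      = 1 - T m := by
    intro m
    simp only [hT]
    rw [← key u hu m 1 one_pos]
    have hr : ∑ k ∈ range (m+1), (m.choose k : ℝ) * (-1)^k / (k*u + 1)
        = (m.choose 0 : ℝ) * (-1)^0 / (((0:ℕ):ℝ)*u + 1)
          + ∑ k ∈ Icc 1 m, (m.choose k : ℝ) * (-1)^k / (k*u + 1) := by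
      rw [Finset.range_eq_Ico, Finset.sum_eq_sum_Ico_succ_bot (Nat.succ_pos m)]
      congr 1
    rw [hr]
    have hneg : ∑ k ∈ Icc 1 m, (m.choose k : ℝ) * (-1)^(k+1) / (k*u + 1)
        = - ∑ k ∈ Icc 1 m, (m.choose k : ℝ) * (-1)^k / (k*u + 1) := by
      rw [← Finset.sum_neg_distrib]
      apply Finset.sum_congr rfl
      intro k _
      ring
    rw [hneg]
    simp
  -- lower bound on the product
  have hfact : ∀ m : ℕ, ∏ j ∈ range m, (((j:ℝ)+1)*u) = u^m * m.factorial := by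
    intro m
    rw [Finset.prod_mul_distrib, Finset.prod_const, Finset.card_range]
    have : ∏ j ∈ range m, ((j:ℝ)+1) = (m.factorial : ℝ) := by
      exact_mod_cast congrArg (fun n : ℕ => (n:ℝ)) (Finset.prod_range_add_one_eq_factorial m)
    rw [this]; ring
  set S : ℕ → ℝ := fun m => ∑ i ∈ range m, 1/(((i:ℝ)+1)*u) with hS
  have hSpos : ∀ m, 0 ≤ S m := by
    intro m
    apply Finset.sum_nonneg
    intro i _
    positivity
  have hbound : ∀ m : ℕ, u^m * m.factorial * (1 + S m)
      ≤ ∏ j ∈ range (m+1), ((j:ℝ)*u + 1) := by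
    intro m
    have e1 : ∏ j ∈ range (m+1), ((j:ℝ)*u + 1) = ∏ j ∈ range m, (((j:ℝ)+1)*u + 1) := by
      rw [Finset.prod_range_succ' (fun j => (j:ℝ)*u + 1) m]
      push_cast
      simp
    have e2 : ∏ j ∈ range m, (((j:ℝ)+1)*u + 1)
        = (∏ j ∈ range m, (((j:ℝ)+1)*u)) * ∏ j ∈ range m, (1 + 1/(((j:ℝ)+1)*u)) := by
      rw [← Finset.prod_mul_distrib]
      apply Finset.prod_congr rfl
      intro j _
      have : ((j:ℝ)+1)*u ≠ 0 := by positivity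
      field_simp
    rw [e1, e2, hfact]
    have h1 : 1 + S m ≤ ∏ j ∈ range m, (1 + 1/(((j:ℝ)+1)*u)) := by
      apply prod_one_add_ge
      intro i
      positivity
    have h2 : (0:ℝ) ≤ u^m * m.factorial := by positivity
    nlinarith [h1, h2, hSpos m]
  have hPpos : ∀ m : ℕ, (0:ℝ) < ∏ j ∈ range (m+1), ((j:ℝ)*u + 1) := by
    intro m
    apply Finset.prod_pos
    intro j _
    positivity
  have hT0 : ∀ m, 0 ≤ T m := by
    intro m
    simp only [hT]
    positivity
  have hTle : ∀ m, T m ≤ (1 + S m)⁻¹ := by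
    intro m
    simp only [hT]
    have hA : (0:ℝ) < u^m * m.factorial := by positivity
    have hden : (0:ℝ) < 1 + S m := by linarith [hSpos m]
    rw [div_le_iff₀ (hPpos m), inv_mul_eq_div, le_div_iff₀ hden]
    linarith [hbound m]
  have hStop : Tendsto (fun m => 1 + S m) atTop atTop := by
    apply tendsto_atTop_add_const_left
    have heq : S = fun m => (1/u) * ∑ i ∈ range m, 1/((i:ℝ)+1) := by
      funext m
      rw [hS, Finset.mul_sum]
      apply Finset.sum_congr rfl
      intro i _
      rw [one_div_mul_one_div, mul_comm u]
    rw [heq]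
    exact Tendsto.const_mul_atTop (by positivity) tendsto_sum_range_one_div_nat_succ_atTop
  have hTzero : Tendsto T atTop (nhds 0) :=
    squeeze_zero hT0 hTle hStop.inv_tendsto_atTop
  have hfin : Tendsto (fun m => 1 - T m) atTop (nhds 1) := by
    have := hTzero.const_sub 1
    simpa using this
  exact hfin.congr fun m => (hsum m).symm
end

section
/- For each z ≥ 1 and each positive integer m, one has 0 < m!/(z*(z+1)*...*(z+m)) ≤ 1/(1 + 1/2 + 1/3 + ... + 1/m), and consequently for fixed z > 0 the quantity m!/(z*(z+1)*...*(z+m)) tends to 0 as m → ∞. -/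
open Filter Finset

lemma prod_pos' {z : ℝ} (hz : 0 < z) (m : ℕ) : 0 < ∏ i ∈ range (m + 1), (z + i) := by
  apply Finset.prod_pos
  intro i _
  positivity

lemma fact_eq_prod (m : ℕ) : ((m+1).factorial : ℝ) = ∏ i ∈ range (m + 1), ((1:ℝ) + i) := by
  induction m with
  | zero => simp
  | succ n ih => rw [Finset.prod_range_succ, ← ih]; push_cast [Nat.factorial_succ]; ring

lemma key_bound {z : ℝ} (hz : 0 < z) (hz1 : z ≤ 1) (m : ℕ) :
    ∏ i ∈ range (m + 1), (z + i) ≥ z * (m.factorial : ℝ) * ((m : ℝ) + 1) ^ z := by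
  induction m with
  | zero => simp
  | succ n ih =>
      rw [ge_iff_le, Finset.prod_range_succ]
      push_cast [Nat.factorial_succ]
      have h1 : (0:ℝ) < (n:ℝ) + 1 := by positivity
      have hfac : (0:ℝ) < (n.factorial : ℝ) := by exact_mod_cast n.factorial_pos
      have hb : ((1 + 1/((n:ℝ)+1)) : ℝ) ^ z ≤ 1 + z * (1/((n:ℝ)+1)) := by
        apply rpow_one_add_le_one_add_mul_self _ hz.le hz1
        have : (0:ℝ) ≤ 1/((n:ℝ)+1) := by positivity
        linarith
      have hpow : ((n:ℝ) + 1 + 1) ^ z ≤ ((n:ℝ) + 1) ^ z * (1 + z * (1/((n:ℝ)+1))) := by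
        have he : ((n:ℝ) + 1 + 1) = ((n:ℝ)+1) * (1 + 1/((n:ℝ)+1)) := by field_simp
        rw [he, Real.mul_rpow (by positivity) (by positivity)]
        exact mul_le_mul_of_nonneg_left hb (Real.rpow_nonneg (by positivity) z)
      have hpos : (0:ℝ) ≤ z * (n.factorial : ℝ) := by positivity
      calc z * (((n:ℝ)+1) * (n.factorial : ℝ)) * (((n:ℝ) + 1) + 1) ^ z
          ≤ z * (((n:ℝ)+1) * (n.factorial : ℝ)) * (((n:ℝ) + 1) ^ z * (1 + z * (1/((n:ℝ)+1)))) := by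
            apply mul_le_mul_of_nonneg_left hpow (by positivity)
        _ = (z * (n.factorial : ℝ) * ((n:ℝ)+1) ^ z) * (((n:ℝ) + 1) + z) := by
            field_simp
        _ ≤ (∏ i ∈ range (n + 1), (z + i)) * (z + ((n:ℝ)+1)) := by
            apply mul_le_mul ih (by linarith) (by positivity)
            exact le_trans (by positivity) ih
theorem stmt2 :
    (∀ z : ℝ, 1 ≤ z → ∀ m : ℕ, 0 < m →
      0 < (m.factorial : ℝ) / ∏ i ∈ range (m + 1), (z + i) ∧
      (m.factorial : ℝ) / ∏ i ∈ range (m + 1), (z + i) ≤ 1 / ∑ i ∈ Icc 1 m, (1 : ℝ) / i) ∧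
    (∀ z : ℝ, 0 < z →
      Tendsto (fun m : ℕ => (m.factorial : ℝ) / ∏ i ∈ range (m + 1), (z + i))
        atTop (nhds 0)) := by
  have hprodmono : ∀ (w z : ℝ), 0 < w → w ≤ z → ∀ m : ℕ,
      ∏ i ∈ range (m + 1), (w + i) ≤ ∏ i ∈ range (m + 1), (z + i) := by
    intro w z hw hwz m
    apply Finset.prod_le_prod
    · intro i _; positivity
    · intro i _; linarith
  constructor
  · intro z hz m hm
    have hz0 : (0:ℝ) < z := lt_of_lt_of_le one_pos hz
    have hp := prod_pos' hz0 m
    have hfac : (0:ℝ) < (m.factorial : ℝ) := by exact_mod_cast m.factorial_pos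
    refine ⟨by positivity, ?_⟩
    have h1 : ((m+1).factorial : ℝ) ≤ ∏ i ∈ range (m + 1), (z + i) := by
      rw [fact_eq_prod]
      apply Finset.prod_le_prod
      · intro i _; positivity
      · intro i _; linarith
    have hH : (0:ℝ) < ∑ i ∈ Icc 1 m, (1 : ℝ) / i := by
      apply Finset.sum_pos
      · intro i hi
        simp only [Finset.mem_Icc] at hi
        have : (0:ℝ) < i := by exact_mod_cast hi.1
        positivity
      · exact ⟨1, Finset.mem_Icc.mpr ⟨le_refl 1, hm⟩⟩
    have hHle : ∑ i ∈ Icc 1 m, (1 : ℝ) / i ≤ ((m+1).factorial : ℝ) / (m.factorial : ℝ) := by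
      have he : ((m+1).factorial : ℝ) / (m.factorial : ℝ) = (m:ℝ) + 1 := by
        rw [Nat.factorial_succ]; push_cast; field_simp
      rw [he]
      calc ∑ i ∈ Icc 1 m, (1 : ℝ) / i ≤ ∑ i ∈ Icc 1 m, (1:ℝ) := by
            apply Finset.sum_le_sum
            intro i hi
            simp only [Finset.mem_Icc] at hi
            have : (1:ℝ) ≤ i := by exact_mod_cast hi.1
            rw [div_le_one (by linarith)]; exact this
        _ = m := by simp
        _ ≤ (m:ℝ) + 1 := by linarith
    rw [div_le_div_iff₀ hp hH, one_mul]
    calc (m.factorial : ℝ) * (∑ i ∈ Icc 1 m, (1 : ℝ) / i)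
        ≤ (m.factorial : ℝ) * (((m+1).factorial : ℝ) / (m.factorial : ℝ)) :=
          mul_le_mul_of_nonneg_left hHle hfac.le
      _ = ((m+1).factorial : ℝ) := by field_simp
      _ ≤ _ := h1
  · intro z hz
    set w : ℝ := min z 1 with hwdef
    have hw : 0 < w := lt_min hz one_pos
    have hw1 : w ≤ 1 := min_le_right _ _
    have hwz : w ≤ z := min_le_left _ _
    have hle : ∀ m : ℕ, (m.factorial : ℝ) / ∏ i ∈ range (m + 1), (z + i)
        ≤ 1 / (w * ((m:ℝ) + 1) ^ w) := by
      intro m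
      have hpw := prod_pos' hw m
      have hpz := prod_pos' hz m
      have hfac : (0:ℝ) < (m.factorial : ℝ) := by exact_mod_cast m.factorial_pos
      have h1 : (m.factorial : ℝ) / ∏ i ∈ range (m + 1), (z + i)
          ≤ (m.factorial : ℝ) / ∏ i ∈ range (m + 1), (w + i) :=
        div_le_div_of_nonneg_left hfac.le hpw (hprodmono w z hw hwz m)
      refine le_trans h1 ?_
      have hkey := key_bound hw hw1 m
      rw [div_le_div_iff₀ hpw (by positivity), one_mul]
      calc (m.factorial : ℝ) * (w * ((m:ℝ) + 1) ^ w)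
          = w * (m.factorial : ℝ) * ((m:ℝ) + 1) ^ w := by ring
        _ ≤ _ := hkey
    have hpos : ∀ m : ℕ, 0 ≤ (m.factorial : ℝ) / ∏ i ∈ range (m + 1), (z + i) := by
      intro m
      have h1 := prod_pos' hz m
      have h2 : (0:ℝ) < (m.factorial : ℝ) := by exact_mod_cast m.factorial_pos
      positivity
    apply squeeze_zero hpos hle
    have h2 : Tendsto (fun m : ℕ => w * ((m:ℝ) + 1) ^ w) atTop atTop := by
      apply Tendsto.const_mul_atTop hw
      apply (tendsto_rpow_atTop hw).comp
      exact tendsto_atTop_add_const_right _ 1 tendsto_natCast_atTop_atTop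
    exact Tendsto.congr (fun m => (one_div _).symm) h2.inv_tendsto_atTop
end

section
/- For each real u > 0, the limit as m tends to infinity of the sum over k from 1 to m of binom(m,k) * (-1)^(k+1) / k * ln(k*u + 1) equals u. -/
open Filter Finset Real

lemma derivlem (m : ℕ) (t : ℝ) (ht : 0 ≤ t) :
    HasDerivAt (fun x : ℝ => x - ∑ k ∈ Icc 1 m, (m.choose k : ℝ) * (-1)^(k+1) / k * Real.log (k*x+1))
      (1 - ∑ k ∈ Icc 1 m, (m.choose k : ℝ) * (-1)^(k+1) / (k*t+1)) t := by
  have hsum : HasDerivAt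
      (fun x : ℝ => ∑ k ∈ Icc 1 m, (m.choose k : ℝ) * (-1)^(k+1) / k * Real.log (k*x+1))
      (∑ k ∈ Icc 1 m, (m.choose k : ℝ) * (-1)^(k+1) / (k*t+1)) t := by
    apply HasDerivAt.fun_sum
    intro k hk
    simp only [Finset.mem_Icc] at hk
    have hk1 : (1:ℝ) ≤ (k:ℝ) := by exact_mod_cast hk.1
    have hne : (k:ℝ)*t + 1 ≠ 0 := by nlinarith
    have hlin : HasDerivAt (fun x : ℝ => (k:ℝ)*x+1) (k:ℝ) t := by
      simpa using ((hasDerivAt_id t).const_mul (k:ℝ)).add_const 1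
    have hlog : HasDerivAt (fun x : ℝ => Real.log ((k:ℝ)*x+1)) (((k:ℝ)*t+1)⁻¹ * (k:ℝ)) t :=
      by have := (Real.hasDerivAt_log hne).comp t hlin; exact this
    have := hlog.const_mul ((m.choose k : ℝ) * (-1)^(k+1) / k)
    convert this using 1
    · rfl
    have hk0 : (k:ℝ) ≠ 0 := by linarith
    field_simp
  simpa using (hasDerivAt_id t).fun_sub hsum

lemma keyA (t : ℝ) (ht : 0 ≤ t) : ∀ (m : ℕ) (s : ℝ), 0 < s →
    ∑ k ∈ range (m+1), (m.choose k : ℝ) * (-1)^k / (k * t + s)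
      = (m.factorial : ℝ) * t^m / ∏ j ∈ range (m+1), (j * t + s) := by
  intro m
  induction m with
  | zero => intro s hs; simp
  | succ m ih =>
    intro s hs
    have hpos : ∀ (j : ℕ) (r : ℝ), 0 < r → (0:ℝ) < j * t + r := by
      intro j r hr; positivity
    have hts : 0 < t + s := by linarith
    -- rewrite LHS via Pascal
    have split : ∑ k ∈ range (m+2), ((m+1).choose k : ℝ) * (-1)^k / (k * t + s)
        = (∑ k ∈ range (m+1), (m.choose k : ℝ) * (-1)^k / (k * t + s))
          - ∑ k ∈ range (m+1), (m.choose k : ℝ) * (-1)^k / (k * t + (t+s)) := by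
      rw [Finset.sum_range_succ' (fun k => ((m+1).choose k : ℝ) * (-1)^k / (k * t + s)) (m+1)]
      push_cast
      have h1 : ∀ i : ℕ, ((m+1).choose (i+1) : ℝ) * (-1)^(i+1) / ((i+1) * t + s)
          = (m.choose (i+1) : ℝ) * (-1)^(i+1) / ((i+1) * t + s)
            - (m.choose i : ℝ) * (-1)^i / (i * t + (t+s)) := by
        intro i
        have : ((m+1).choose (i+1) : ℝ) = (m.choose i : ℝ) + (m.choose (i+1) : ℝ) := by
          rw [Nat.choose_succ_succ]; push_cast; ring
        have he : (i:ℝ) * t + (t + s) = ((i:ℝ)+1) * t + s := by ring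
        rw [this, he, pow_succ]
        push_cast
        ring
      rw [Finset.sum_congr rfl (fun i _ => h1 i)]
      rw [Finset.sum_sub_distrib]
      have h2 : (∑ i ∈ range (m+1), (m.choose (i+1) : ℝ) * (-1)^(i+1) / ((i+1) * t + s))
          + ((m+1).choose 0 : ℝ) * (-1)^0 / ((0:ℕ) * t + s)
          = ∑ k ∈ range (m+1), (m.choose k : ℝ) * (-1)^k / (k * t + s) := by
        have := Finset.sum_range_succ' (fun k => (m.choose k : ℝ) * (-1)^k / (k * t + s)) (m+1)
        rw [Finset.sum_range_succ] at this
        simp only [Nat.choose_succ_self, Nat.cast_zero, zero_mul, zero_div, add_zero] at this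
        push_cast at this ⊢
        rw [this]
        norm_num
      push_cast at h2 ⊢
      linarith [h2]
    rw [split, ih s hs, ih (t+s) hts]
    -- now the algebra
    have hB : ∏ j ∈ range (m+1), ((j:ℝ) * t + (t+s)) = ∏ j ∈ range (m+1), (((j:ℝ)+1) * t + s) := by
      apply Finset.prod_congr rfl; intro j _; ring
    have hA : (0:ℝ) < ∏ j ∈ range (m+1), ((j:ℝ) * t + s) :=
      Finset.prod_pos (fun j _ => hpos j s hs)
    have hC : (0:ℝ) < ∏ j ∈ range (m+1), (((j:ℝ)+1) * t + s) := by
      apply Finset.prod_pos; intro j _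
      have := hpos (j+1) s hs; push_cast at this; linarith
    have hD1 : ∏ j ∈ range (m+2), ((j:ℝ) * t + s)
        = (∏ j ∈ range (m+1), (((j:ℝ)+1) * t + s)) * s := by
      rw [Finset.prod_range_succ' (fun j => (j:ℝ) * t + s) (m+1)]
      push_cast
      norm_num
    have hD2 : ∏ j ∈ range (m+2), ((j:ℝ) * t + s)
        = (∏ j ∈ range (m+1), ((j:ℝ) * t + s)) * (((m:ℝ)+1) * t + s) := by
      rw [Finset.prod_range_succ]
      push_cast; ring
    have hCs : (∏ j ∈ range (m+1), (((j:ℝ)+1) * t + s)) * s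
        = (∏ j ∈ range (m+1), ((j:ℝ) * t + s)) * (((m:ℝ)+1) * t + s) := by
      rw [← hD1, hD2]
    rw [hB, hD1]
    have hfac : ((m+1).factorial : ℝ) = ((m:ℝ)+1) * (m.factorial : ℝ) := by
      rw [Nat.factorial_succ]; push_cast; ring
    rw [hfac]
    set A := ∏ j ∈ range (m+1), ((j:ℝ) * t + s) with hAdef
    set C := ∏ j ∈ range (m+1), (((j:ℝ)+1) * t + s) with hCdef
    have hA0 : A ≠ 0 := ne_of_gt hA
    have hC0 : C ≠ 0 := ne_of_gt hC
    have hs0 : s ≠ 0 := ne_of_gt hs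
    rw [div_sub_div _ _ hA0 hC0, div_eq_div_iff (mul_ne_zero hA0 hC0) (mul_ne_zero hC0 hs0)]
    linear_combination ((m.factorial : ℝ) * t^m * C) * hCs

lemma prodform (t : ℝ) (ht : 0 ≤ t) (m : ℕ) :
    (m.factorial : ℝ) * t^m / ∏ j ∈ range (m+1), ((j:ℝ) * t + 1)
      = ∏ j ∈ Icc 1 m, ((j:ℝ)*t/((j:ℝ)*t+1)) := by
  have h1 : ∏ j ∈ range (m+1), ((j:ℝ) * t + 1) = ∏ j ∈ Icc 1 m, ((j:ℝ)*t+1) := by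
    have : range (m+1) = insert 0 (Icc 1 m) := by
      ext x; simp [Finset.mem_range, Finset.mem_insert, Finset.mem_Icc]; omega
    rw [this, Finset.prod_insert (by simp)]
    norm_num
  have h2 : (m.factorial : ℝ) * t^m = ∏ j ∈ Icc 1 m, ((j:ℝ)*t) := by
    rw [Finset.prod_mul_distrib]
    rw [Finset.prod_const]
    rw [Nat.card_Icc]
    have : ∏ j ∈ Icc 1 m, (j:ℝ) = (m.factorial : ℝ) := by
      rw [← Nat.cast_prod, ← Finset.Ico_add_one_right_eq_Icc, Finset.prod_Ico_id_eq_factorial]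
    rw [this]
    norm_num
  rw [h1, h2, Finset.prod_div_distrib]

lemma boundlem (u t : ℝ) (hu : 0 < u) (ht : 0 ≤ t) (htu : t ≤ u) (m : ℕ) :
    ∏ j ∈ Icc 1 m, ((j:ℝ)*t/((j:ℝ)*t+1))
      ≤ Real.exp (-(1/(1+u)) * ∑ i ∈ range m, 1/((i:ℝ)+1)) := by
  have key : ∀ j ∈ Icc 1 m, (j:ℝ)*t/((j:ℝ)*t+1) ≤ Real.exp (-(1/(1+u)) * (1/(j:ℝ))) := by
    intro j hj
    simp only [Finset.mem_Icc] at hj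
    have hj1 : (1:ℝ) ≤ (j:ℝ) := by exact_mod_cast hj.1
    have hjt : (0:ℝ) < (j:ℝ)*t + 1 := by nlinarith
    have e1 : (j:ℝ)*t/((j:ℝ)*t+1) = 1 - 1/((j:ℝ)*t+1) := by field_simp; ring
    have e2 : 1 - 1/((j:ℝ)*t+1) ≤ Real.exp (-(1/((j:ℝ)*t+1))) := by
      have := Real.add_one_le_exp (-(1/((j:ℝ)*t+1)))
      linarith
    have e3 : (1/(1+u)) * (1/(j:ℝ)) ≤ 1/((j:ℝ)*t+1) := by
      rw [div_mul_div_comm, one_mul, div_le_div_iff₀ (by positivity) hjt]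
      nlinarith
    calc (j:ℝ)*t/((j:ℝ)*t+1) ≤ Real.exp (-(1/((j:ℝ)*t+1))) := by rw [e1]; exact e2
      _ ≤ Real.exp (-(1/(1+u)) * (1/(j:ℝ))) := by
          apply Real.exp_le_exp.2; rw [neg_mul]; linarith
  calc ∏ j ∈ Icc 1 m, ((j:ℝ)*t/((j:ℝ)*t+1))
      ≤ ∏ j ∈ Icc 1 m, Real.exp (-(1/(1+u)) * (1/(j:ℝ))) := by
        apply Finset.prod_le_prod
        · intro j hj
          simp only [Finset.mem_Icc] at hj
          have hj1 : (1:ℝ) ≤ (j:ℝ) := by exact_mod_cast hj.1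
          positivity
        · exact key
    _ = Real.exp (∑ j ∈ Icc 1 m, (-(1/(1+u)) * (1/(j:ℝ)))) := (Real.exp_sum _ _).symm
    _ = Real.exp (-(1/(1+u)) * ∑ i ∈ range m, 1/((i:ℝ)+1)) := by
        congr 1
        rw [← Finset.mul_sum]
        congr 1
        rw [← Finset.Ico_add_one_right_eq_Icc, Finset.sum_Ico_eq_sum_range]
        simp [add_comm]

theorem stmt3 (u : ℝ) (hu : 0 < u) :
    Tendsto (fun m : ℕ =>
        ∑ k ∈ Icc 1 m, (m.choose k : ℝ) * (-1) ^ (k + 1) / k * Real.log (k * u + 1))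
      atTop (nhds u) := by
  set f : ℕ → ℝ := fun m =>
    ∑ k ∈ Icc 1 m, (m.choose k : ℝ) * (-1) ^ (k + 1) / k * Real.log (k * u + 1) with hf
  set C : ℕ → ℝ := fun m => Real.exp (-(1/(1+u)) * ∑ i ∈ range m, 1/((i:ℝ)+1)) with hC
  have key : ∀ m : ℕ, ‖f m - u‖ ≤ C m * u := by
    intro m
    set F : ℝ → ℝ := fun x =>
      x - ∑ k ∈ Icc 1 m, (m.choose k : ℝ) * (-1)^(k+1) / k * Real.log (k*x+1) with hF
    set g : ℝ → ℝ := fun t => (m.factorial : ℝ) * t^m / ∏ j ∈ range (m+1), ((j:ℝ) * t + 1)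
      with hg
    have hsum_eq : ∀ t : ℝ, 0 ≤ t →
        1 - ∑ k ∈ Icc 1 m, (m.choose k : ℝ) * (-1)^(k+1) / (k*t+1) = g t := by
      intro t ht
      have h0 : 1 - ∑ k ∈ Icc 1 m, (m.choose k : ℝ) * (-1)^(k+1) / (k*t+1)
          = ∑ k ∈ range (m+1), (m.choose k : ℝ) * (-1)^k / (k*t+1) := by
        have hins : range (m+1) = insert 0 (Icc 1 m) := by
          ext x; simp [Finset.mem_range, Finset.mem_insert, Finset.mem_Icc]; omega
        rw [hins, Finset.sum_insert (by simp)]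
        have hterm : ∀ k : ℕ, (m.choose k : ℝ) * (-1)^(k+1) / (k*t+1)
            = -((m.choose k : ℝ) * (-1)^k / (k*t+1)) := by
          intro k; rw [pow_succ]; ring
        rw [Finset.sum_congr rfl (fun k _ => hterm k), Finset.sum_neg_distrib]
        norm_num
      rw [h0]
      have := keyA t ht m 1 one_pos
      simpa using this
    have hderivwithin : ∀ t ∈ Set.Icc (0:ℝ) u, HasDerivWithinAt F (g t) (Set.Icc 0 u) t := by
      intro t htu
      have ht : 0 ≤ t := htu.1
      have := (derivlem m t ht).hasDerivWithinAt (s := Set.Icc 0 u)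
      rwa [hsum_eq t ht] at this
    have hbound : ∀ t ∈ Set.Icc (0:ℝ) u, ‖g t‖ ≤ C m := by
      intro t htu
      have ht : 0 ≤ t := htu.1
      have hpos : (0:ℝ) < ∏ j ∈ range (m+1), ((j:ℝ) * t + 1) := by
        apply Finset.prod_pos; intro j _; positivity
      have hg0 : 0 ≤ g t := by
        rw [hg]; positivity
      rw [Real.norm_of_nonneg hg0, hg]
      calc (m.factorial : ℝ) * t^m / ∏ j ∈ range (m+1), ((j:ℝ) * t + 1)
          = ∏ j ∈ Icc 1 m, ((j:ℝ)*t/((j:ℝ)*t+1)) := prodform t ht m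
        _ ≤ C m := boundlem u t hu ht htu.2 m
    have hmvt := (convex_Icc (0:ℝ) u).norm_image_sub_le_of_norm_hasDerivWithin_le
      hderivwithin hbound (Set.left_mem_Icc.2 hu.le) (Set.right_mem_Icc.2 hu.le)
    have hF0 : F 0 = 0 := by
      simp [hF]
    have hFu : F u = u - f m := rfl
    rw [hF0, hFu] at hmvt
    calc ‖f m - u‖ = ‖(u - f m) - 0‖ := by rw [norm_sub_rev]; norm_num
      _ ≤ C m * ‖u - 0‖ := hmvt
      _ = C m * u := by rw [sub_zero, Real.norm_of_nonneg hu.le]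
  have hCtend : Tendsto (fun m => C m * u) atTop (nhds 0) := by
    have h1 : Tendsto (fun m : ℕ => -(1/(1+u)) * ∑ i ∈ range m, 1/((i:ℝ)+1)) atTop atBot := by
      apply Filter.Tendsto.const_mul_atTop_of_neg
      · have : (0:ℝ) < 1/(1+u) := by positivity
        linarith
      · exact tendsto_sum_range_one_div_nat_succ_atTop
    have h2 : Tendsto C atTop (nhds 0) := Real.tendsto_exp_atBot.comp h1
    have := h2.mul_const u
    rwa [zero_mul] at this
  have := squeeze_zero_norm key hCtend
  rw [← tendsto_sub_nhds_zero_iff]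
  exact this
end

section
/- For each real u > 0, u equals the sum over m from 1 to infinity of (1/m) times the sum over k from 1 to m of binom(m,k) * (-1)^(k+1) * ln(k*u + 1). -/
open Finset Real

noncomputable def qfun (n : ℕ) (t : ℝ) : ℝ :=
  ∏ j ∈ range n, (((j:ℝ)+1)*t/(1+((j:ℝ)+1)*t))

lemma qfun_nonneg (n : ℕ) {t : ℝ} (ht : 0 ≤ t) : 0 ≤ qfun n t := by
  refine Finset.prod_nonneg fun j _ => ?_
  have h1 : (0:ℝ) < 1+((j:ℝ)+1)*t := by positivity
  positivity

lemma qfun_eq (n : ℕ) {t : ℝ} (ht : 0 ≤ t) :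
    qfun n t = (n.factorial : ℝ) * t^n / ∏ j ∈ range n, (1+((j:ℝ)+1)*t) := by
  rw [qfun, Finset.prod_div_distrib, Finset.prod_mul_distrib]
  congr 2
  · have := Finset.prod_range_add_one_eq_factorial n
    calc ∏ j ∈ range n, ((j:ℝ)+1) = ((∏ j ∈ range n, (j+1) : ℕ) : ℝ) := by push_cast; rfl
    _ = n.factorial := by rw [this]
  · exact Finset.prod_const t ▸ by simp

lemma qfun_sub (m : ℕ) {t : ℝ} (ht : 0 ≤ t) :
    qfun m t - qfun (m+1) t = qfun m t / (1+((m:ℝ)+1)*t) := by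
  have hne : (1+((m:ℝ)+1)*t) ≠ 0 := by positivity
  simp only [qfun, Finset.prod_range_succ]
  generalize (∏ j ∈ range m, (((j:ℝ)+1)*t/(1+((j:ℝ)+1)*t))) = P
  field_simp
  ring

lemma qfun_mono_t (n : ℕ) {t s : ℝ} (ht : 0 ≤ t) (hts : t ≤ s) : qfun n t ≤ qfun n s := by
  refine Finset.prod_le_prod (fun j _ => ?_) (fun j _ => ?_)
  · have h1 : (0:ℝ) < 1+((j:ℝ)+1)*t := by positivity
    positivity
  · have h0s : (0:ℝ) ≤ s := ht.trans hts
    have h1 : (0:ℝ) < 1+((j:ℝ)+1)*t := by positivity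
    have h2 : (0:ℝ) < 1+((j:ℝ)+1)*s := by positivity
    rw [div_le_div_iff₀ h1 h2]
    nlinarith [Nat.cast_nonneg (α := ℝ) j]

lemma qfun_le_exp (n : ℕ) {t : ℝ} (ht : 0 ≤ t) :
    qfun n t ≤ Real.exp (-∑ j ∈ range n, 1/(1+((j:ℝ)+1)*t)) := by
  rw [← Finset.sum_neg_distrib, Real.exp_sum]
  refine Finset.prod_le_prod (fun j _ => ?_) (fun j _ => ?_)
  · have h1 : (0:ℝ) < 1+((j:ℝ)+1)*t := by positivity
    positivity
  · have h1 : (0:ℝ) < 1+((j:ℝ)+1)*t := by positivity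
    have := Real.add_one_le_exp (-(1/(1+((j:ℝ)+1)*t)))
    have heq : ((j:ℝ)+1)*t/(1+((j:ℝ)+1)*t) = -(1/(1+((j:ℝ)+1)*t)) + 1 := by
      field_simp
      ring
    rw [heq]
    exact this


lemma partfrac (m : ℕ) : ∀ x t : ℝ, 0 < x → 0 ≤ t →
    ∑ k ∈ range (m+1), ((m.choose k : ℝ) * (-1)^k / (x + k*t))
      = (m.factorial : ℝ) * t^m / ∏ j ∈ range (m+1), (x + j*t) := by
  induction m with
  | zero => intro x t hx ht; simp
  | succ m ih =>
    intro x t hx ht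
    have hpos : ∀ (y : ℝ), 0 < y → ∀ j ∈ range (m+1), 0 < y + j*t := by
      intro y hy j _; positivity
    have hP : ∀ (y : ℝ), 0 < y → 0 < ∏ j ∈ range (m+1), (y + j*t) :=
      fun y hy => Finset.prod_pos (hpos y hy)
    have key : ∑ k ∈ range (m+2), ((m+1).choose k : ℝ) * (-1)^k / (x + k*t)
        = (∑ k ∈ range (m+1), ((m.choose k : ℝ) * (-1)^k / (x + k*t)))
          - ∑ k ∈ range (m+1), ((m.choose k : ℝ) * (-1)^k / ((x+t) + k*t)) := by
      rw [Finset.sum_range_succ' (fun k => ((m+1).choose k : ℝ) * (-1)^k / (x + k*t)) (m+1)]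
      rw [Finset.sum_range_succ' (fun k => ((m.choose k : ℝ) * (-1)^k / (x + k*t))) m]
      push_cast
      have hsplit : ∀ k ∈ range (m+1),
          ((m+1).choose (k+1) : ℝ) * (-1)^(k+1) / (x + ((k:ℝ)+1)*t)
          = (m.choose k : ℝ) * (-1)^(k+1) / (x + ((k:ℝ)+1)*t)
            + (m.choose (k+1) : ℝ) * (-1)^(k+1) / (x + ((k:ℝ)+1)*t) := by
        intro k _
        rw [Nat.choose_succ_succ]
        push_cast
        ring
      rw [Finset.sum_congr rfl hsplit, Finset.sum_add_distrib]
      have h1 : ∑ k ∈ range (m+1), (m.choose k : ℝ) * (-1)^(k+1) / (x + ((k:ℝ)+1)*t)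
          = - ∑ k ∈ range (m+1), ((m.choose k : ℝ) * (-1)^k / ((x+t) + k*t)) := by
        rw [← Finset.sum_neg_distrib]
        refine Finset.sum_congr rfl fun k _ => ?_
        have : x + ((k:ℝ)+1)*t = (x+t) + k*t := by ring
        rw [this]
        ring
      have h2 : ∑ k ∈ range (m+1), (m.choose (k+1) : ℝ) * (-1)^(k+1) / (x + ((k:ℝ)+1)*t)
          = ∑ k ∈ range m, (m.choose (k+1) : ℝ) * (-1)^(k+1) / (x + ((k:ℝ)+1)*t) := by
        rw [Finset.sum_range_succ]
        simp
      rw [h1, h2]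
      simp only [Nat.choose_zero_right, Nat.cast_one]
      ring
    rw [key, ih x t hx ht, ih (x+t) t (by positivity) ht]
    have hprodshift : ∏ j ∈ range (m+1), ((x+t) + j*t) = ∏ j ∈ range (m+1), (x + (j+1)*t) := by
      refine Finset.prod_congr rfl fun j _ => by push_cast; ring
    have hQ1 : ∏ j ∈ range (m+2), (x + j*t)
        = (∏ j ∈ range (m+1), (x + j*t)) * (x + ((m:ℝ)+1)*t) := by
      rw [Finset.prod_range_succ]; push_cast; ring
    have hQ2 : ∏ j ∈ range (m+2), (x + j*t)
        = x * ∏ j ∈ range (m+1), (x + ((j:ℝ)+1)*t) := by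
      rw [Finset.prod_range_succ' (fun j => x + j*t) (m+1)]
      push_cast; ring
    have hA1 : (0:ℝ) < ∏ j ∈ range (m+1), (x + j*t) := hP x hx
    have hA2 : (0:ℝ) < ∏ j ∈ range (m+1), (x + ((j:ℝ)+1)*t) := by
      rw [← hprodshift]; exact hP (x+t) (by positivity)
    have hrel : (∏ j ∈ range (m+1), (x + j*t)) * (x + ((m:ℝ)+1)*t)
        = x * ∏ j ∈ range (m+1), (x + ((j:ℝ)+1)*t) := by rw [← hQ1, hQ2]
    rw [hprodshift, hQ1, Nat.factorial_succ]
    rw [div_sub_div _ _ hA1.ne' hA2.ne', div_eq_div_iff (by positivity) (by positivity)]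
    push_cast
    linear_combination (-((m.factorial:ℝ) * t^m * (∏ j ∈ range (m+1), (x + j*t)))) * hrel

lemma sum_Icc_one (f : ℕ → ℝ) (n : ℕ) :
    ∑ k ∈ Icc 1 (n+1), f k = (∑ k ∈ range (n+2), f k) - f 0 := by
  have h : ∑ k ∈ range (n+2), f k = f 0 + ∑ k ∈ Ico 1 (n+2), f k := by
    rw [Finset.range_eq_Ico]
    exact Finset.sum_eq_sum_Ico_succ_bot (by omega) f
  have e : n+1+1 = n+2 := rfl
  rw [← Finset.Ico_add_one_right_eq_Icc, e, h]
  ring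

lemma alt_sum_one (n : ℕ) :
    ∑ k ∈ Icc 1 (n+1), ((n+1).choose k : ℝ) * (-1)^(k+1) = 1 := by
  have hz : ∑ k ∈ range (n+2), ((-1):ℝ)^k * ((n+1).choose k : ℝ) = 0 := by
    have := Int.alternating_sum_range_choose_of_ne (Nat.succ_ne_zero n)
    have := congrArg (Int.cast : ℤ → ℝ) this
    push_cast at this
    convert this using 2
  rw [sum_Icc_one (fun k => ((n+1).choose k : ℝ) * (-1)^(k+1)) n]
  have : ∑ k ∈ range (n+2), ((n+1).choose k : ℝ) * (-1)^(k+1)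
      = - ∑ k ∈ range (n+2), ((-1):ℝ)^k * ((n+1).choose k : ℝ) := by
    rw [← Finset.sum_neg_distrib]
    exact Finset.sum_congr rfl fun k _ => by ring
  rw [this, hz]
  simp

lemma integrand_id (m : ℕ) {t : ℝ} (ht : 0 < t) :
    ∑ k ∈ Icc 1 (m+1), ((m+1).choose k : ℝ) * (-1)^(k+1) * ((k:ℝ)/(1+(k:ℝ)*t))
      = ((m:ℝ)+1) * (qfun m t - qfun (m+1) t) := by
  have hfull := partfrac (m+1) 1 t one_pos ht.le
  have hsplit : ∀ k ∈ Icc 1 (m+1),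
      ((m+1).choose k : ℝ) * (-1)^(k+1) * ((k:ℝ)/(1+(k:ℝ)*t))
      = (1/t) * (((m+1).choose k : ℝ) * (-1)^(k+1))
        + (1/t) * (((m+1).choose k : ℝ) * (-1)^k / (1+(k:ℝ)*t)) := by
    intro k _
    have hk1 : (0:ℝ) < 1+(k:ℝ)*t := by positivity
    field_simp
    ring
  rw [Finset.sum_congr rfl hsplit, Finset.sum_add_distrib, ← Finset.mul_sum, ← Finset.mul_sum,
    alt_sum_one m,
    sum_Icc_one (fun k => ((m+1).choose k : ℝ) * (-1)^k / (1+(k:ℝ)*t)) m]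
  have hD : (0:ℝ) < ∏ j ∈ range m, (1+((j:ℝ)+1)*t) := by
    refine Finset.prod_pos fun j _ => by positivity
  have hP : ∏ j ∈ range (m+2), (1+(j:ℝ)*t)
      = (∏ j ∈ range m, (1+((j:ℝ)+1)*t)) * (1+((m:ℝ)+1)*t) := by
    rw [Finset.prod_range_succ' (fun j => 1+(j:ℝ)*t) (m+1)]
    push_cast
    rw [Finset.prod_range_succ]
    ring
  rw [hfull, hP, qfun_sub m ht.le, qfun_eq m ht.le, Nat.factorial_succ]
  have h1 : (0:ℝ) < 1+((m:ℝ)+1)*t := by positivity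
  field_simp
  push_cast
  simp only [Nat.choose_zero_right, Nat.cast_one]
  ring

lemma qfun_contOn (n : ℕ) (u : ℝ) : ContinuousOn (fun t => qfun n t) (Set.Icc (0:ℝ) u) := by
  simp only [qfun]
  refine continuousOn_finset_prod _ fun j _ => ?_
  refine ContinuousOn.div (by fun_prop) (by fun_prop) ?_
  intro t ht
  have h0 := ht.1
  positivity

lemma qfun_intble (n : ℕ) {u : ℝ} (hu : 0 ≤ u) :
    IntervalIntegrable (fun t => qfun n t) MeasureTheory.volume 0 u :=
  ContinuousOn.intervalIntegrable_of_Icc hu (qfun_contOn n u)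

lemma frac_intble (k : ℕ) {u : ℝ} (hu : 0 ≤ u) :
    IntervalIntegrable (fun t => (k:ℝ)/(1+(k:ℝ)*t)) MeasureTheory.volume 0 u := by
  refine ContinuousOn.intervalIntegrable_of_Icc hu ?_
  refine ContinuousOn.div (by fun_prop) (by fun_prop) ?_
  intro t ht
  have h0 := ht.1
  positivity

lemma log_int (k : ℕ) {u : ℝ} (hu : 0 ≤ u) :
    ∫ t in (0:ℝ)..u, (k:ℝ)/(1+(k:ℝ)*t) = Real.log ((k:ℝ)*u+1) := by
  have hd : ∀ t ∈ Set.uIcc (0:ℝ) u,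
      HasDerivAt (fun s => Real.log (1+(k:ℝ)*s)) ((k:ℝ)/(1+(k:ℝ)*t)) t := by
    intro t ht
    rw [Set.uIcc_of_le hu] at ht
    have h0 : (0:ℝ) < 1+(k:ℝ)*t := by have := ht.1; positivity
    have h1 : HasDerivAt (fun s : ℝ => 1+(k:ℝ)*s) (k:ℝ) t := by
      simpa using ((hasDerivAt_id t).const_mul (k:ℝ)).const_add 1
    simpa using h1.log h0.ne'
  rw [intervalIntegral.integral_eq_sub_of_hasDerivAt hd (frac_intble k hu)]
  rw [mul_zero, add_zero, Real.log_one, sub_zero, add_comm]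

lemma term_eq (m : ℕ) {u : ℝ} (hu : 0 < u) :
    (1/((m:ℝ)+1)) * ∑ k ∈ Icc 1 (m+1), ((m+1).choose k : ℝ) * (-1)^(k+1) * Real.log ((k:ℝ)*u+1)
    = ∫ t in (0:ℝ)..u, (qfun m t - qfun (m+1) t) := by
  have h1 : ∀ k ∈ Icc 1 (m+1), ((m+1).choose k : ℝ)*(-1)^(k+1)*Real.log ((k:ℝ)*u+1)
      = ∫ t in (0:ℝ)..u, ((m+1).choose k : ℝ)*(-1)^(k+1)*((k:ℝ)/(1+(k:ℝ)*t)) := by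
    intro k _
    rw [intervalIntegral.integral_const_mul, log_int k hu.le]
  rw [Finset.sum_congr rfl h1, ← intervalIntegral.integral_finset_sum
    (fun k _ => (frac_intble k hu.le).const_mul _)]
  have h2 : (∫ t in (0:ℝ)..u,
        ∑ k ∈ Icc 1 (m+1), ((m+1).choose k : ℝ)*(-1)^(k+1)*((k:ℝ)/(1+(k:ℝ)*t)))
      = ∫ t in (0:ℝ)..u, ((m:ℝ)+1) * (qfun m t - qfun (m+1) t) := by
    refine intervalIntegral.integral_congr_ae (MeasureTheory.ae_of_all _ fun t ht => ?_)
    rw [Set.uIoc_of_le hu.le] at ht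
    exact integrand_id m ht.1
  rw [h2, intervalIntegral.integral_const_mul]
  have hm : ((m:ℝ)+1) ≠ 0 := by positivity
  field_simp

lemma term_nonneg (m : ℕ) {u : ℝ} (hu : 0 < u) :
    0 ≤ (1/((m:ℝ)+1)) * ∑ k ∈ Icc 1 (m+1),
        ((m+1).choose k : ℝ) * (-1)^(k+1) * Real.log ((k:ℝ)*u+1) := by
  rw [term_eq m hu]
  refine intervalIntegral.integral_nonneg hu.le fun t ht => ?_
  have ht0 := ht.1
  rw [sub_nonneg, qfun, Finset.prod_range_succ, ← qfun]
  have h1 : (0:ℝ) < 1+((m:ℝ)+1)*t := by positivity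
  refine mul_le_of_le_one_right (qfun_nonneg m ht0) ?_
  rw [div_le_one h1]
  linarith

lemma remainder_tendsto {u : ℝ} (hu : 0 < u) :
    Filter.Tendsto (fun n => ∫ t in (0:ℝ)..u, qfun n t) Filter.atTop (nhds 0) := by
  have hS : Filter.Tendsto (fun n => ∑ j ∈ range n, 1/(1+((j:ℝ)+1)*u))
      Filter.atTop Filter.atTop := by
    refine Filter.tendsto_atTop_mono (fun n => ?_)
      (Filter.Tendsto.const_mul_atTop (show (0:ℝ) < 1/(1+u) by positivity)
        Real.tendsto_sum_range_one_div_nat_succ_atTop)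
    rw [Finset.mul_sum]
    refine Finset.sum_le_sum fun j _ => ?_
    have h1 : (0:ℝ) < 1+((j:ℝ)+1)*u := by positivity
    have h2 : (0:ℝ) < (1+u)*((j:ℝ)+1) := by positivity
    have h3 : 1+((j:ℝ)+1)*u ≤ (1+u)*((j:ℝ)+1) := by nlinarith [Nat.cast_nonneg (α := ℝ) j]
    calc 1/(1+u) * (1/((j:ℝ)+1)) = 1/((1+u)*((j:ℝ)+1)) := by rw [one_div_mul_one_div]
    _ ≤ 1/(1+((j:ℝ)+1)*u) := by exact one_div_le_one_div_of_le h1 h3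
  have hq0 : Filter.Tendsto (fun n => qfun n u) Filter.atTop (nhds 0) := by
    refine squeeze_zero (fun n => qfun_nonneg n hu.le) (fun n => qfun_le_exp n hu.le) ?_
    exact Real.tendsto_exp_atBot.comp (Filter.tendsto_neg_atBot_iff.mpr hS)
  refine squeeze_zero (g := fun n => u * qfun n u)
    (fun n => intervalIntegral.integral_nonneg hu.le fun t ht => qfun_nonneg n ht.1)
    (fun n => ?_) ?_
  · have := intervalIntegral.integral_mono_on (μ := MeasureTheory.volume) hu.le
      (qfun_intble n hu.le) intervalIntegrable_const
      (fun t ht => qfun_mono_t n ht.1 ht.2)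
    simpa using this
  · simpa using hq0.const_mul u

theorem stmt4 (u : ℝ) (hu : 0 < u) :
    HasSum (fun m : ℕ =>
        (1 / (m + 1 : ℝ)) *
          ∑ k ∈ Icc 1 (m + 1), (Nat.choose (m + 1) k : ℝ) * (-1) ^ (k + 1) * Real.log (k * u + 1))
      u := by
  rw [hasSum_iff_tendsto_nat_of_nonneg (fun m => term_nonneg m hu)]
  have hps : ∀ n : ℕ, (∑ m ∈ range n, (1 / ((m:ℝ) + 1)) *
      ∑ k ∈ Icc 1 (m + 1), ((m+1).choose k : ℝ) * (-1) ^ (k + 1) * Real.log ((k:ℝ) * u + 1))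
      = u - ∫ t in (0:ℝ)..u, qfun n t := by
    intro n
    rw [Finset.sum_congr rfl (fun m _ => term_eq m hu)]
    rw [← intervalIntegral.integral_finset_sum
      (fun m _ => (qfun_intble m hu.le).sub (qfun_intble (m+1) hu.le))]
    have h3 : ∀ t : ℝ, (∑ m ∈ range n, (qfun m t - qfun (m+1) t)) = 1 - qfun n t := by
      intro t
      rw [Finset.sum_range_sub' (fun m => qfun m t)]
      simp [qfun]
    simp only [h3]
    rw [intervalIntegral.integral_sub intervalIntegrable_const (qfun_intble n hu.le)]
    simp
  simp only [hps]
  simpa using Filter.Tendsto.const_sub u (remainder_tendsto hu)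
end

section
/- For each real u > 0, the limit as m tends to infinity of the sum over k from 1 to m of binom(m,k) * (-1)^(k+1) * ln(k + u) equals ln u. -/
open Filter Finset Real

lemma diffD (n : ℕ) (f : ℕ → ℝ) :
    ∑ k ∈ range (n + 2), (-1 : ℝ) ^ k * ((n+1).choose k) * f k
      = ∑ k ∈ range (n + 1), (-1 : ℝ) ^ k * (n.choose k) * (f k - f (k+1)) := by
  rw [Finset.sum_range_succ' (fun k => (-1 : ℝ) ^ k * ((n+1).choose k) * f k)]
  have key : ∀ k, (-1 : ℝ) ^ (k+1) * ((n+1).choose (k+1)) * f (k+1)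
      = (-1:ℝ)^(k+1) * (n.choose k) * f (k+1) + (-1:ℝ)^(k+1) * (n.choose (k+1)) * f (k+1) := by
    intro k
    rw [Nat.choose_succ_succ' n k]
    push_cast
    ring
  rw [Finset.sum_congr rfl (fun k _ => key k)]
  have h2 : (∑ k ∈ range (n+1), (-1:ℝ)^(k+1) * (n.choose (k+1)) * f (k+1))
      + (-1:ℝ)^0 * (n.choose 0) * f 0
      = ∑ k ∈ range (n + 2), (-1 : ℝ) ^ k * (n.choose k) * f k := by
    rw [Finset.sum_range_succ' (fun k => (-1 : ℝ) ^ k * (n.choose k) * f k)]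
  have h3 : ∑ k ∈ range (n + 2), (-1 : ℝ) ^ k * (n.choose k) * f k
      = ∑ k ∈ range (n + 1), (-1 : ℝ) ^ k * (n.choose k) * f k := by
    rw [Finset.sum_range_succ]
    simp [Nat.choose_succ_self]
  have h0 : (-1:ℝ)^0 * ((n+1).choose 0) * f 0 = (-1:ℝ)^0 * (n.choose 0) * f 0 := by simp
  calc (∑ k ∈ range (n+1), ((-1:ℝ)^(k+1) * (n.choose k) * f (k+1) + (-1:ℝ)^(k+1) * (n.choose (k+1)) * f (k+1)))
        + (-1:ℝ)^0 * ((n+1).choose 0) * f 0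
      = (∑ k ∈ range (n+1), (-1:ℝ)^(k+1) * (n.choose k) * f (k+1))
        + ((∑ k ∈ range (n+1), (-1:ℝ)^(k+1) * (n.choose (k+1)) * f (k+1))
          + (-1:ℝ)^0 * (n.choose 0) * f 0) := by
        rw [Finset.sum_add_distrib, h0]; ring
    _ = (∑ k ∈ range (n+1), (-1:ℝ)^(k+1) * (n.choose k) * f (k+1))
        + ∑ k ∈ range (n + 1), (-1 : ℝ) ^ k * (n.choose k) * f k := by rw [h2, h3]
    _ = ∑ k ∈ range (n + 1), (-1 : ℝ) ^ k * (n.choose k) * (f k - f (k+1)) := by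
        rw [← Finset.sum_add_distrib]
        apply Finset.sum_congr rfl
        intro k _
        ring

lemma betaC (n : ℕ) : ∀ v : ℝ, 0 < v →
    ∑ k ∈ range (n + 1), (-1 : ℝ) ^ k * (n.choose k) * (1 / (v + k))
      = (n.factorial : ℝ) / ∏ i ∈ range (n + 1), (v + i) := by
  induction n with
  | zero => intro v hv; simp
  | succ n ih =>
    intro v hv
    have hD := diffD n (fun k => 1 / (v + k))
    rw [hD]
    have this1 : ∑ k ∈ range (n + 1), (-1 : ℝ) ^ k * (n.choose k) *
        ((fun k : ℕ => 1 / (v + k)) k - (fun k : ℕ => 1 / (v + k)) (k+1))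
        = (∑ k ∈ range (n + 1), (-1 : ℝ) ^ k * (n.choose k) * (1 / (v + k)))
          - ∑ k ∈ range (n + 1), (-1 : ℝ) ^ k * (n.choose k) * (1 / ((v+1) + k)) := by
      rw [← Finset.sum_sub_distrib]
      apply Finset.sum_congr rfl
      intro k _
      simp only []
      push_cast
      ring
    rw [this1, ih v hv, ih (v+1) (by linarith)]
    have hP1 : ∏ i ∈ range (n + 2), (v + i) = v * ∏ i ∈ range (n+1), ((v+1) + i) := by
      rw [Finset.prod_range_succ' (fun i => (v + (i:ℝ)))]
      have : (∏ i ∈ range (n+1), (v + ((i+1:ℕ):ℝ))) = ∏ i ∈ range (n+1), ((v+1)+(i:ℝ)) :=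
        Finset.prod_congr rfl (fun i _ => by push_cast; ring)
      rw [this]
      push_cast
      ring
    have hP2 : ∏ i ∈ range (n + 2), (v + i) = (∏ i ∈ range (n+1), (v + i)) * (v + ((n:ℝ)+1)) := by
      rw [Finset.prod_range_succ]
      push_cast
      ring
    have hA : (0:ℝ) < ∏ i ∈ range (n+1), (v + i) := by
      apply Finset.prod_pos; intro i _; positivity
    have hB : (0:ℝ) < ∏ i ∈ range (n+1), ((v+1) + i) := by
      apply Finset.prod_pos; intro i _; positivity
    have hC : (0:ℝ) < ∏ i ∈ range (n+2), (v + i) := by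
      apply Finset.prod_pos; intro i _; positivity
    rw [div_sub_div _ _ (ne_of_gt hA) (ne_of_gt hB), div_eq_div_iff (by positivity) (ne_of_gt hC)]
    have hfac : (((n+1).factorial : ℕ) : ℝ) = (n.factorial : ℝ) * ((n:ℝ)+1) := by
      rw [Nat.factorial_succ]; push_cast; ring
    rw [hfac]
    linear_combination (n.factorial : ℝ) * (∏ i ∈ range (n+1), ((v+1) + i)) * hP2
      - (n.factorial : ℝ) * (∏ i ∈ range (n+1), (v + i)) * hP1

noncomputable def Taux (u : ℝ) (m : ℕ) : ℝ :=
  ∑ k ∈ range (m+1), (-1:ℝ)^k * (m.choose k) * Real.log (k + u)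

lemma hS (u : ℝ) (m : ℕ) :
    ∑ k ∈ Icc 1 m, (m.choose k : ℝ) * (-1)^(k+1) * Real.log (k + u)
      = Real.log u - Taux u m := by
  have hIcc : ∀ g : ℕ → ℝ, ∑ k ∈ Icc 1 m, g k = ∑ i ∈ range m, g (1+i) := by
    intro g
    rw [← Finset.Ico_add_one_right_eq_Icc, Finset.sum_Ico_eq_sum_range]
    simp
  have h1 : Taux u m = Real.log u + ∑ k ∈ Icc 1 m, (-1:ℝ)^k * (m.choose k) * Real.log (k + u) := by
    rw [Taux, Finset.sum_range_succ' (fun k => (-1:ℝ)^k * (m.choose k) * Real.log (k + u))]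
    rw [hIcc (fun k => (-1:ℝ)^k * (m.choose k) * Real.log (k + u))]
    simp only [Nat.cast_zero, zero_add, Nat.choose_zero_right, Nat.cast_one, pow_zero, one_mul]
    rw [add_comm]
    congr 1
    apply Finset.sum_congr rfl
    intro i _
    rw [add_comm 1 i]
  rw [h1]
  have : ∀ k, (m.choose k : ℝ) * (-1)^(k+1) * Real.log (k + u)
      = -((-1:ℝ)^k * (m.choose k) * Real.log (k + u)) := by
    intro k; rw [pow_succ]; ring
  rw [Finset.sum_congr rfl (fun k _ => this k), Finset.sum_neg_distrib]
  ring

lemma keybound (u : ℝ) (hu : 0 < u) (n : ℕ) :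
    ‖Taux u (n+1)‖ ≤ (n.factorial : ℝ) / ∏ i ∈ range (n+1), (u + i) := by
  have h1 : Taux u (n+1) = ∑ k ∈ range (n+1), (-1:ℝ)^k * (n.choose k) *
      ((fun k : ℕ => Real.log (k + u)) k - (fun k : ℕ => Real.log (k + u)) (k+1)) :=
    diffD n (fun k => Real.log (k + u))
  have h2 : ∀ k : ℕ, (fun k : ℕ => Real.log (k + u)) k - (fun k : ℕ => Real.log (k + u)) (k+1)
      = -∫ t in (0:ℝ)..1, 1/(t + ((k:ℝ)+u)) := by
    intro k
    have hc : (0:ℝ) < (k:ℝ) + u := by positivity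
    rw [intervalIntegral.integral_comp_add_right (fun x => 1/x) ((k:ℝ)+u)]
    rw [integral_one_div (by
      apply Set.notMem_uIcc_of_lt <;> positivity)]
    rw [Real.log_div (by positivity) (by positivity)]
    simp only []
    push_cast
    ring
  have hint : ∀ k ∈ range (n+1), IntervalIntegrable
      (fun t => (-1:ℝ)^k * (n.choose k) * (1/(t + ((k:ℝ)+u)))) MeasureTheory.volume 0 1 := by
    intro k _
    apply ContinuousOn.intervalIntegrable
    apply ContinuousOn.mul continuousOn_const
    apply ContinuousOn.div continuousOn_const
    · exact continuousOn_id.add continuousOn_const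
    · intro t ht
      rw [Set.uIcc_of_le (by norm_num : (0:ℝ) ≤ 1)] at ht
      have : (0:ℝ) ≤ t := ht.1
      positivity
  have h3 : Taux u (n+1) = -∫ t in (0:ℝ)..1,
      ∑ k ∈ range (n+1), (-1:ℝ)^k * (n.choose k) * (1/(t + ((k:ℝ)+u))) := by
    rw [h1, Finset.sum_congr rfl (fun k _ => by rw [h2 k])]
    rw [intervalIntegral.integral_finset_sum hint]
    rw [← Finset.sum_neg_distrib]
    apply Finset.sum_congr rfl
    intro k _
    rw [intervalIntegral.integral_const_mul]
    ring
  have hnorm : ∀ t ∈ Set.uIoc (0:ℝ) 1,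
      ‖∑ k ∈ range (n+1), (-1:ℝ)^k * (n.choose k) * (1/(t + ((k:ℝ)+u)))‖
        ≤ (n.factorial : ℝ) / ∏ i ∈ range (n+1), (u + i) := by
    intro t ht
    rw [Set.uIoc_of_le (by norm_num : (0:ℝ) ≤ 1)] at ht
    have ht0 : 0 < t := ht.1
    have hv : 0 < u + t := by linarith
    have heq : ∑ k ∈ range (n+1), (-1:ℝ)^k * (n.choose k) * (1/(t + ((k:ℝ)+u)))
        = ∑ k ∈ range (n+1), (-1:ℝ)^k * (n.choose k) * (1/((u+t) + (k:ℝ))) := by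
      apply Finset.sum_congr rfl
      intro k _
      ring_nf
    rw [heq, betaC n (u+t) hv, Real.norm_eq_abs, abs_of_nonneg (by positivity)]
    have hPpos : (0:ℝ) < ∏ i ∈ range (n+1), (u + i) := by
      apply Finset.prod_pos; intro i _; positivity
    apply div_le_div_of_nonneg_left (by positivity) hPpos
    apply Finset.prod_le_prod
    · intro i _; positivity
    · intro i _; linarith
  rw [h3, norm_neg]
  calc ‖∫ t in (0:ℝ)..1, ∑ k ∈ range (n+1), (-1:ℝ)^k * (n.choose k) * (1/(t + ((k:ℝ)+u)))‖
      ≤ ((n.factorial : ℝ) / ∏ i ∈ range (n+1), (u + i)) * |1 - 0| :=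
        intervalIntegral.norm_integral_le_of_norm_le_const hnorm
    _ = (n.factorial : ℝ) / ∏ i ∈ range (n+1), (u + i) := by norm_num

lemma prodlb (u : ℝ) (hu : 0 < u) (n : ℕ) :
    u * (1 + u * ∑ i ∈ range n, (1/((i:ℝ)+1))) * (n.factorial : ℝ)
      ≤ ∏ i ∈ range (n+1), (u + i) := by
  induction n with
  | zero => simp
  | succ n ih =>
    have hH : ∑ i ∈ range (n+1), (1/((i:ℝ)+1))
        = (∑ i ∈ range n, (1/((i:ℝ)+1))) + 1/((n:ℝ)+1) := Finset.sum_range_succ _ n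
    have hHnn : (0:ℝ) ≤ ∑ i ∈ range n, (1/((i:ℝ)+1)) := by
      apply Finset.sum_nonneg; intro i _; positivity
    have hfac : ((n+1).factorial : ℝ) = ((n:ℝ)+1) * (n.factorial : ℝ) := by
      rw [Nat.factorial_succ]; push_cast; ring
    have hinv : (1/((n:ℝ)+1)) * ((n:ℝ)+1) = 1 := by field_simp
    have hfacpos : (0:ℝ) < (n.factorial : ℝ) := by positivity
    rw [Finset.prod_range_succ, hH, hfac]
    have hcast : (((n+1:ℕ)):ℝ) = (n:ℝ)+1 := by push_cast; ring
    rw [hcast]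
    set S := ∑ i ∈ range n, (1/((i:ℝ)+1)) with hSdef
    have key : u * u * (n.factorial:ℝ) ≤ u * (1 + u * S) * (n.factorial:ℝ) * u := by
      nlinarith [mul_nonneg (mul_nonneg (mul_nonneg hu.le hu.le) hu.le) (mul_nonneg hHnn hfacpos.le)]
    calc u * (1 + u * (S + 1/((n:ℝ)+1))) * (((n:ℝ)+1) * (n.factorial:ℝ))
        = u * (1 + u * S) * (n.factorial:ℝ) * ((n:ℝ)+1)
          + u * u * ((1/((n:ℝ)+1)) * ((n:ℝ)+1)) * (n.factorial:ℝ) := by ring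
      _ = u * (1 + u * S) * (n.factorial:ℝ) * ((n:ℝ)+1) + u * u * (n.factorial:ℝ) := by
          rw [hinv]; ring
      _ ≤ u * (1 + u * S) * (n.factorial:ℝ) * ((n:ℝ)+1) + u * (1 + u * S) * (n.factorial:ℝ) * u := by
          linarith [key]
      _ = (u * (1 + u * S) * (n.factorial:ℝ)) * (u + ((n:ℝ)+1)) := by ring
      _ ≤ (∏ i ∈ range (n+1), (u + i)) * (u + ((n:ℝ)+1)) := by
          apply mul_le_mul_of_nonneg_right ih
          positivity

lemma blim (u : ℝ) (hu : 0 < u) :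
    Tendsto (fun n : ℕ => (n.factorial : ℝ) / ∏ i ∈ range (n+1), (u + i)) atTop (nhds 0) := by
  have hP : ∀ n : ℕ, (0:ℝ) < ∏ i ∈ range (n+1), (u + i) := by
    intro n; apply Finset.prod_pos; intro i _; positivity
  have hD : ∀ n : ℕ, (0:ℝ) < u * (1 + u * ∑ i ∈ range n, (1/((i:ℝ)+1))) := by
    intro n
    have h0 : (0:ℝ) ≤ ∑ i ∈ range n, (1/((i:ℝ)+1)) := by
      apply Finset.sum_nonneg; intro i _; positivity
    have h1 : (0:ℝ) < 1 + u * ∑ i ∈ range n, (1/((i:ℝ)+1)) := by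
      nlinarith [mul_nonneg hu.le h0]
    exact mul_pos hu h1
  apply squeeze_zero (g := fun n => 1 / (u * (1 + u * ∑ i ∈ range n, (1/((i:ℝ)+1)))))
  · intro n; positivity
  · intro n
    rw [div_le_div_iff₀ (hP n) (hD n)]
    calc (n.factorial : ℝ) * (u * (1 + u * ∑ i ∈ range n, (1/((i:ℝ)+1))))
        = u * (1 + u * ∑ i ∈ range n, (1/((i:ℝ)+1))) * (n.factorial : ℝ) := by ring
      _ ≤ ∏ i ∈ range (n+1), (u + i) := prodlb u hu n
      _ = 1 * ∏ i ∈ range (n+1), (u + i) := by ring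
  · have h1 : Tendsto (fun n : ℕ => u * (1 + u * ∑ i ∈ range n, (1/((i:ℝ)+1)))) atTop atTop := by
      apply Tendsto.const_mul_atTop hu
      apply tendsto_atTop_add_const_left
      exact Tendsto.const_mul_atTop hu tendsto_sum_range_one_div_nat_succ_atTop
    exact h1.inv_tendsto_atTop.congr fun n => (one_div _).symm

theorem stmt5 (u : ℝ) (hu : 0 < u) :
    Tendsto (fun m : ℕ =>
        ∑ k ∈ Icc 1 m, (m.choose k : ℝ) * (-1) ^ (k + 1) * Real.log (k + u))
      atTop (nhds (Real.log u)) := by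
  have hT0 : Tendsto (fun m : ℕ => Taux u m) atTop (nhds 0) := by
    apply squeeze_zero_norm' (a := fun m : ℕ =>
      (((m-1).factorial : ℕ) : ℝ) / ∏ i ∈ range ((m-1)+1), (u + i))
    · filter_upwards [eventually_ge_atTop 1] with m hm
      obtain ⟨n, rfl⟩ := Nat.exists_eq_add_of_le hm
      have : (1 + n) - 1 = n := by omega
      rw [this]
      have h1n : 1 + n = n + 1 := by omega
      rw [h1n]
      exact keybound u hu n
    · exact (blim u hu).comp (tendsto_sub_atTop_nat 1)
  have h1 : Tendsto (fun m : ℕ => Real.log u - Taux u m) atTop (nhds (Real.log u)) := by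
    simpa using tendsto_const_nhds.sub hT0
  exact h1.congr fun m => (hS u m).symm
end

section
/- For each real u > 0, ln u equals the sum over m from 0 to infinity of the inner sum over k from 0 to m of binom(m,k) * (-1)^k * ln(k + u + 1). -/
open Finset Real

noncomputable def bb (x : ℝ) (n : ℕ) : ℝ :=
  ∑ k ∈ range (n + 1), (n.choose k : ℝ) * (-1) ^ k * Real.log (k + x)

noncomputable def RR (x : ℝ) (m : ℕ) : ℝ :=
  ∑ k ∈ range (m + 1), (m.choose k : ℝ) * (-1) ^ k * ((k : ℝ) + x)⁻¹

lemma key_s6 (f : ℝ → ℝ) (n : ℕ) (x : ℝ) :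
    ∑ k ∈ range (n + 2), ((n + 1).choose k : ℝ) * (-1) ^ k * f (k + x)
      = ∑ k ∈ range (n + 1), (n.choose k : ℝ) * (-1) ^ k * f (k + x)
        - ∑ k ∈ range (n + 1), (n.choose k : ℝ) * (-1) ^ k * f (k + (x + 1)) := by
  rw [Finset.sum_range_succ' (fun k => ((n + 1).choose k : ℝ) * (-1) ^ k * f (k + x)) (n + 1)]
  have hch : ∀ k : ℕ, (((n + 1).choose (k + 1) : ℕ) : ℝ) = (n.choose k : ℝ) + n.choose (k + 1) := by
    intro k; exact_mod_cast Nat.choose_succ_succ n k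
  have hsplit :
      ∑ k ∈ range (n + 1), ((n + 1).choose (k + 1) : ℝ) * (-1) ^ (k + 1) * f ((k + 1 : ℕ) + x)
        = (∑ k ∈ range (n + 1), (n.choose (k + 1) : ℝ) * (-1) ^ (k + 1) * f ((k + 1 : ℕ) + x))
          + ∑ k ∈ range (n + 1), (n.choose k : ℝ) * (-1) ^ (k + 1) * f ((k + 1 : ℕ) + x) := by
    rw [← Finset.sum_add_distrib]
    refine Finset.sum_congr rfl fun k _ => ?_
    rw [hch k]; ring
  simp only [hsplit]
  have h2 : ∑ k ∈ range (n + 1), (n.choose k : ℝ) * (-1) ^ (k + 1) * f ((k + 1 : ℕ) + x)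
      = - ∑ k ∈ range (n + 1), (n.choose k : ℝ) * (-1) ^ k * f (k + (x + 1)) := by
    rw [← Finset.sum_neg_distrib]
    refine Finset.sum_congr rfl fun k _ => ?_
    have : ((k + 1 : ℕ) : ℝ) + x = (k : ℝ) + (x + 1) := by push_cast; ring
    rw [this]; ring
  have h1 : (∑ k ∈ range (n + 1), (n.choose (k + 1) : ℝ) * (-1) ^ (k + 1) * f ((k + 1 : ℕ) + x))
        + ((n + 1).choose 0 : ℝ) * (-1) ^ 0 * f ((0 : ℕ) + x)
      = ∑ k ∈ range (n + 1), (n.choose k : ℝ) * (-1) ^ k * f (k + x) := by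
    rw [Finset.sum_range_succ' (fun k => (n.choose k : ℝ) * (-1) ^ k * f (k + x)) n]
    rw [Finset.sum_range_succ]
    simp [Nat.choose_succ_self]
  rw [h2]
  linarith [h1]

lemma bb_rec (n : ℕ) (x : ℝ) : bb x (n + 1) = bb x n - bb (x + 1) n := by
  have := key_s6 Real.log n x
  simpa [bb] using this

lemma RR_rec (n : ℕ) (x : ℝ) : RR x (n + 1) = RR x n - RR (x + 1) n := by
  have := key_s6 (fun y => y⁻¹) n x
  simpa [RR] using this

lemma RR_contOn (m : ℕ) (x : ℝ) (hx : 0 < x) :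
    ContinuousOn (fun t => RR (x + t) m) (Set.uIcc (0 : ℝ) 1) := by
  unfold RR
  apply continuousOn_finset_sum
  intro k _
  apply ContinuousOn.mul continuousOn_const
  apply ContinuousOn.inv₀
  · exact (continuous_const.add (continuous_const.add continuous_id)).continuousOn
  · intro t ht
    rw [Set.uIcc_of_le (by norm_num : (0:ℝ) ≤ 1)] at ht
    have : (0:ℝ) ≤ t := ht.1
    positivity

lemma RR_intble (m : ℕ) (x : ℝ) (hx : 0 < x) :
    IntervalIntegrable (fun t => RR (x + t) m) MeasureTheory.volume 0 1 :=
  (RR_contOn m x hx).intervalIntegrable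

lemma bb_int (m : ℕ) : ∀ x : ℝ, 0 < x → bb x (m + 1) = -∫ t in (0:ℝ)..1, RR (x + t) m := by
  induction m with
  | zero =>
    intro x hx
    have h1 : ∫ t in (0:ℝ)..1, (x + t)⁻¹ = Real.log (x + 1) - Real.log x := by
      rw [intervalIntegral.integral_comp_add_left (fun y => y⁻¹) x]
      rw [integral_inv]
      · rw [add_zero, Real.log_div (by positivity) (by positivity)]
      · rw [add_zero]
        intro h
        rw [Set.uIcc_of_le (by linarith)] at h
        exact absurd h.1 (by linarith)
    have h2 : ∀ t : ℝ, RR (x + t) 0 = (x + t)⁻¹ := by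
      intro t; simp [RR]
    simp only [h2]
    rw [h1]
    simp [bb, Finset.sum_range_succ]
    rw [add_comm (1:ℝ) x]
    ring
  | succ m ih =>
    intro x hx
    rw [bb_rec, ih x hx, ih (x + 1) (by linarith)]
    have h1 : ∫ t in (0:ℝ)..1, RR (x + 1 + t) m = ∫ t in (0:ℝ)..1, RR ((x + t) + 1) m := by
      congr 1; ext t; ring_nf
    rw [h1]
    have h2 : ∫ t in (0:ℝ)..1, RR (x + t) (m + 1)
        = (∫ t in (0:ℝ)..1, RR (x + t) m) - ∫ t in (0:ℝ)..1, RR ((x + t) + 1) m := by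
      have hint2 : IntervalIntegrable (fun t => RR ((x + t) + 1) m) MeasureTheory.volume 0 1 := by
        have := RR_intble m (x + 1) (by linarith)
        apply this.congr
        intro t _
        show RR (x + 1 + t) m = RR (x + t + 1) m
        ring_nf
      rw [← intervalIntegral.integral_sub (RR_intble m x hx) hint2]
      congr 1; ext t
      rw [RR_rec]
    rw [h2]
    ring

lemma prod_pos_aux (m : ℕ) (y : ℝ) (hy : 0 < y) : 0 < ∏ j ∈ range (m + 1), (y + j) := by
  apply Finset.prod_pos
  intro j _
  positivity

lemma RR_eq (m : ℕ) : ∀ y : ℝ, 0 < y → RR y m = (m.factorial : ℝ) / ∏ j ∈ range (m + 1), (y + j) := by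
  induction m with
  | zero =>
    intro y hy
    simp [RR]
  | succ m ih =>
    intro y hy
    rw [RR_rec, ih y hy, ih (y + 1) (by linarith)]
    have hP : ∏ j ∈ range (m + 2), (y + j) = (∏ j ∈ range (m + 1), (y + j)) * (y + (m + 1)) := by
      rw [Finset.prod_range_succ]; push_cast; ring_nf
    have hQ : ∏ j ∈ range (m + 2), (y + j) = (∏ j ∈ range (m + 1), (y + 1 + j)) * y := by
      rw [Finset.prod_range_succ' (fun j => y + (j : ℕ)) (m + 1)]
      have e1 : (∏ k ∈ range (m + 1), (y + ((k + 1 : ℕ) : ℝ)))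
          = ∏ j ∈ range (m + 1), (y + 1 + (j : ℝ)) :=
        Finset.prod_congr rfl fun j _ => by push_cast; ring
      rw [e1]
      norm_num
    have hne1 : (∏ j ∈ range (m + 1), (y + j)) ≠ 0 := ne_of_gt (prod_pos_aux m y hy)
    have hne2 : (∏ j ∈ range (m + 1), (y + 1 + j)) ≠ 0 := by
      apply ne_of_gt; apply Finset.prod_pos; intro j _; positivity
    have hne3 : (∏ j ∈ range (m + 2), (y + j)) ≠ 0 := ne_of_gt (prod_pos_aux (m + 1) y hy)
    rw [div_sub_div _ _ hne1 hne2, div_eq_div_iff (by exact mul_ne_zero hne1 hne2) hne3]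
    push_cast [Nat.factorial_succ]
    linear_combination (m.factorial : ℝ) * (∏ j ∈ range (m + 1), (y + 1 + (j:ℝ))) * hP
      - (m.factorial : ℝ) * (∏ j ∈ range (m + 1), (y + (j:ℝ))) * hQ

lemma one_add_sum_le_prod_aux (a : ℕ → ℝ) (ha : ∀ j, 0 ≤ a j) :
    ∀ m : ℕ, 1 + ∑ j ∈ range m, a j ≤ ∏ j ∈ range m, (1 + a j) := by
  intro m
  induction m with
  | zero => simp
  | succ m ih =>
    rw [Finset.sum_range_succ, Finset.prod_range_succ]
    have h1 : 0 ≤ ∑ j ∈ range m, a j := Finset.sum_nonneg fun j _ => ha j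
    have h2 : (1 + ∑ j ∈ range m, a j) * (1 + a m) ≤ (∏ j ∈ range m, (1 + a j)) * (1 + a m) := by
      apply mul_le_mul_of_nonneg_right ih
      have := ha m; linarith
    have h3 : 1 + (∑ j ∈ range m, a j + a m) ≤ (1 + ∑ j ∈ range m, a j) * (1 + a m) := by
      have := ha m
      nlinarith
    linarith

lemma prod_lower (m : ℕ) (y v : ℝ) (hv : 0 < v) (hvy : v ≤ y) :
    (m.factorial : ℝ) * (v * (1 + v * ∑ j ∈ range m, (1 : ℝ) / (j + 1)))
      ≤ ∏ j ∈ range (m + 1), (y + j) := by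
  rw [Finset.prod_range_succ' (fun j => y + (j : ℕ)) m]
  have step1 : ∏ j ∈ range m, (((j : ℝ) + 1) * (1 + v / (j + 1)))
      ≤ ∏ j ∈ range m, (y + ((j + 1 : ℕ) : ℝ)) := by
    apply Finset.prod_le_prod
    · intro j _; positivity
    · intro j _
      have hj : (0 : ℝ) < (j : ℝ) + 1 := by positivity
      rw [mul_add, mul_one, mul_div_cancel₀ _ (ne_of_gt hj)]
      push_cast
      linarith
  have step2 : ∏ j ∈ range m, (((j : ℝ) + 1) * (1 + v / (j + 1)))
      = (m.factorial : ℝ) * ∏ j ∈ range m, (1 + v / (j + 1)) := by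
    rw [Finset.prod_mul_distrib]
    congr 1
    rw [← Finset.prod_range_add_one_eq_factorial m]
    push_cast
    rfl
  have step3 : 1 + v * ∑ j ∈ range m, (1 : ℝ) / (j + 1) ≤ ∏ j ∈ range m, (1 + v / (j + 1)) := by
    have := one_add_sum_le_prod_aux (fun j => v / ((j : ℝ) + 1)) (fun j => by positivity) m
    rw [Finset.mul_sum]
    calc 1 + ∑ j ∈ range m, v * ((1 : ℝ) / (j + 1))
        = 1 + ∑ j ∈ range m, v / ((j : ℝ) + 1) := by
          congr 1; exact Finset.sum_congr rfl fun j _ => by ring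
      _ ≤ _ := this
  have hfac : (0 : ℝ) < (m.factorial : ℝ) := by exact_mod_cast m.factorial_pos
  have hy0 : (0 : ℝ) < y := lt_of_lt_of_le hv hvy
  have hsum : (0 : ℝ) ≤ ∑ j ∈ range m, (1 : ℝ) / (j + 1) :=
    Finset.sum_nonneg fun j _ => by positivity
  calc (m.factorial : ℝ) * (v * (1 + v * ∑ j ∈ range m, (1 : ℝ) / (j + 1)))
      ≤ ((m.factorial : ℝ) * ∏ j ∈ range m, (1 + v / (j + 1))) * y := by
        have h1 : (m.factorial : ℝ) * (1 + v * ∑ j ∈ range m, (1 : ℝ) / (j + 1))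
            ≤ (m.factorial : ℝ) * ∏ j ∈ range m, (1 + v / (j + 1)) :=
          mul_le_mul_of_nonneg_left step3 (le_of_lt hfac)
        have h2 : (0 : ℝ) ≤ (m.factorial : ℝ) * (1 + v * ∑ j ∈ range m, (1 : ℝ) / (j + 1)) := by
          have : (0:ℝ) ≤ 1 + v * ∑ j ∈ range m, (1 : ℝ) / (j + 1) := by positivity
          positivity
        calc (m.factorial : ℝ) * (v * (1 + v * ∑ j ∈ range m, (1 : ℝ) / (j + 1)))
            = ((m.factorial : ℝ) * (1 + v * ∑ j ∈ range m, (1 : ℝ) / (j + 1))) * v := by ring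
          _ ≤ ((m.factorial : ℝ) * ∏ j ∈ range m, (1 + v / (j + 1))) * v :=
              mul_le_mul_of_nonneg_right h1 (le_of_lt hv)
          _ ≤ ((m.factorial : ℝ) * ∏ j ∈ range m, (1 + v / (j + 1))) * y := by
              apply mul_le_mul_of_nonneg_left hvy
              calc (0:ℝ) ≤ (m.factorial : ℝ) * (1 + v * ∑ j ∈ range m, (1 : ℝ) / (j + 1)) := h2
                _ ≤ _ := h1
    _ ≤ (∏ j ∈ range m, (y + ((j + 1 : ℕ) : ℝ))) * y := by
        apply mul_le_mul_of_nonneg_right _ (le_of_lt hy0)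
        rw [step2] at step1
        exact step1
    _ = (∏ k ∈ range m, (y + ((k + 1 : ℕ) : ℝ))) * (y + ((0 : ℕ) : ℝ)) := by norm_num

lemma RR_le (m : ℕ) (y v : ℝ) (hv : 0 < v) (hvy : v ≤ y) :
    RR y m ≤ (v * (1 + v * ∑ j ∈ range m, (1 : ℝ) / (j + 1)))⁻¹ := by
  have hy : (0 : ℝ) < y := lt_of_lt_of_le hv hvy
  rw [RR_eq m y hy]
  have hfac : (0 : ℝ) < (m.factorial : ℝ) := by exact_mod_cast m.factorial_pos
  have hsum : (0 : ℝ) ≤ ∑ j ∈ range m, (1 : ℝ) / (j + 1) :=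
    Finset.sum_nonneg fun j _ => by positivity
  have hD : (0 : ℝ) < v * (1 + v * ∑ j ∈ range m, (1 : ℝ) / (j + 1)) := by positivity
  have hlow := prod_lower m y v hv hvy
  have h1 : (m.factorial : ℝ) / ∏ j ∈ range (m + 1), (y + j)
      ≤ (m.factorial : ℝ) / ((m.factorial : ℝ) * (v * (1 + v * ∑ j ∈ range m, (1 : ℝ) / (j + 1)))) :=
    div_le_div_of_nonneg_left (le_of_lt hfac) (by positivity) hlow
  calc (m.factorial : ℝ) / ∏ j ∈ range (m + 1), (y + j) ≤ _ := h1
    _ = (v * (1 + v * ∑ j ∈ range m, (1 : ℝ) / (j + 1)))⁻¹ := by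
        rw [div_eq_iff (by positivity)]
        field_simp

lemma RR_nonneg (m : ℕ) (y : ℝ) (hy : 0 < y) : 0 ≤ RR y m := by
  rw [RR_eq m y hy]
  have := prod_pos_aux m y hy
  positivity

lemma bb_le_zero (n : ℕ) (x : ℝ) (hx : 0 < x) : bb x (n + 1) ≤ 0 := by
  rw [bb_int n x hx]
  simp only [neg_nonpos]
  apply intervalIntegral.integral_nonneg (by norm_num)
  intro t ht
  exact RR_nonneg n (x + t) (by have := ht.1; linarith)

lemma bb_lower (n : ℕ) (x v : ℝ) (hv : 0 < v) (hvx : v ≤ x) :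
    -((v * (1 + v * ∑ j ∈ range n, (1 : ℝ) / (j + 1)))⁻¹) ≤ bb x (n + 1) := by
  have hx : 0 < x := lt_of_lt_of_le hv hvx
  rw [bb_int n x hx, neg_le_neg_iff]
  have hle : ∫ t in (0:ℝ)..1, RR (x + t) n
      ≤ ∫ _t in (0:ℝ)..1, (v * (1 + v * ∑ j ∈ range n, (1 : ℝ) / (j + 1)))⁻¹ := by
    apply intervalIntegral.integral_mono_on (by norm_num) (RR_intble n x hx)
      intervalIntegrable_const
    intro t ht
    exact RR_le n (x + t) v hv (by have := ht.1; linarith)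
  calc ∫ t in (0:ℝ)..1, RR (x + t) n ≤ _ := hle
    _ = (v * (1 + v * ∑ j ∈ range n, (1 : ℝ) / (j + 1)))⁻¹ := by simp

theorem stmt6 (u : ℝ) (hu : 0 < u) :
    HasSum (fun m : ℕ =>
        ∑ k ∈ range (m + 1), (m.choose k : ℝ) * (-1) ^ k * Real.log (k + u + 1))
      (Real.log u) := by
  set a : ℕ → ℝ := fun m => ∑ k ∈ range (m + 1), (m.choose k : ℝ) * (-1) ^ k
    * Real.log (k + u + 1) with ha_def
  have ha_eq : ∀ m, a m = bb (u + 1) m := by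
    intro m
    simp only [ha_def, bb]
    exact Finset.sum_congr rfl fun k _ => by rw [add_assoc]
  have hM : Filter.Tendsto (fun n : ℕ => (u * (1 + u * ∑ j ∈ range n, (1 : ℝ) / (j + 1)))⁻¹)
      Filter.atTop (nhds 0) := by
    apply Filter.Tendsto.inv_tendsto_atTop
    apply Filter.Tendsto.const_mul_atTop hu
    apply Filter.tendsto_atTop_add_const_left
    exact Filter.Tendsto.const_mul_atTop hu Real.tendsto_sum_range_one_div_nat_succ_atTop
  have hbb1 : Filter.Tendsto (fun n : ℕ => bb u (n + 1)) Filter.atTop (nhds 0) := by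
    apply tendsto_of_tendsto_of_tendsto_of_le_of_le (g := fun n : ℕ =>
      -((u * (1 + u * ∑ j ∈ range n, (1 : ℝ) / (j + 1)))⁻¹)) (h := fun _ => (0:ℝ))
    · simpa using hM.neg
    · exact tendsto_const_nhds
    · exact fun n => bb_lower n u u hu le_rfl
    · exact fun n => bb_le_zero n u hu
  have hbb : Filter.Tendsto (fun n : ℕ => bb u n) Filter.atTop (nhds 0) :=
    (Filter.tendsto_add_atTop_iff_nat 1).mp hbb1
  have hrec : ∀ m, a m = bb u m - bb u (m + 1) := by
    intro m
    rw [ha_eq m, bb_rec m u]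
    ring
  have hpart : ∀ N, ∑ m ∈ range N, a m = Real.log u - bb u N := by
    intro N
    calc ∑ m ∈ range N, a m = ∑ m ∈ range N, (bb u m - bb u (m + 1)) :=
          Finset.sum_congr rfl fun m _ => hrec m
      _ = bb u 0 - bb u N := Finset.sum_range_sub' (bb u) N
      _ = Real.log u - bb u N := by simp [bb]
  set g : ℕ → ℝ := fun m => -(a (m + 1)) with hg_def
  have hg_nonneg : ∀ m, 0 ≤ g m := by
    intro m
    simp only [hg_def, neg_nonneg]
    rw [ha_eq (m + 1)]
    exact bb_le_zero m (u + 1) (by linarith)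
  have hg_part : ∀ N, ∑ m ∈ range N, g m = a 0 - Real.log u + bb u (N + 1) := by
    intro N
    have h1 : ∑ m ∈ range (N + 1), a m = ∑ m ∈ range N, a (m + 1) + a 0 :=
      Finset.sum_range_succ' a N
    have h2 : ∑ m ∈ range N, g m = -∑ m ∈ range N, a (m + 1) := by
      simp [hg_def]
    rw [h2]
    have := hpart (N + 1)
    rw [h1] at this
    linarith
  have hg_tendsto : Filter.Tendsto (fun N => ∑ m ∈ range N, g m) Filter.atTop
      (nhds (a 0 - Real.log u)) := by
    simp only [hg_part]
    have : Filter.Tendsto (fun N : ℕ => a 0 - Real.log u + bb u (N + 1)) Filter.atTop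
        (nhds (a 0 - Real.log u + 0)) := Filter.Tendsto.const_add _ hbb1
    simpa using this
  have hg_sum : HasSum g (a 0 - Real.log u) :=
    (hasSum_iff_tendsto_nat_of_nonneg hg_nonneg _).mpr hg_tendsto
  have h3 : HasSum (fun m => a (m + 1)) (Real.log u - a 0) := by
    have := hg_sum.neg
    simp only [hg_def, neg_neg] at this
    rwa [neg_sub] at this
  have h4 : HasSum a (Real.log u - a 0 + ∑ i ∈ range 1, a i) :=
    (hasSum_nat_add_iff 1).mp h3
  have h5 : HasSum a (Real.log u) := by
    convert h4 using 1
    simp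
  exact h5
end

section
/- The limit as m tends to infinity of the sum over k from 1 to m of binom(m,k) * (-1)^k / k * ln(k!) equals the Euler–Mascheroni constant γ. -/
open Filter Finset Real
open MeasureTheory

noncomputable def gg (j : ℕ) : ℝ → ℝ := fun u => (1 - (1-u)^j) / (-Real.log (1-u))
noncomputable def gg2 (j : ℕ) : ℝ → ℝ := fun u => (1 - (1-u)^j) / u
noncomputable def psi (m : ℕ) (u : ℝ) : ℝ :=
  ((∑ i ∈ Icc 1 m, u^i / i) / u - 1) / (-Real.log (1-u))
noncomputable def phi (u : ℝ) : ℝ := 1/u + 1/Real.log (1-u)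

-- ∫ s in 0..b, exp (c*s) = (exp (c*b) - 1)/c
lemma integral_exp_mul (c : ℝ) (hc : c ≠ 0) (b : ℝ) :
    ∫ s in (0:ℝ)..b, Real.exp (c * s) = (Real.exp (c * b) - 1) / c := by
  have h : ∀ s ∈ Set.uIcc (0:ℝ) b, HasDerivAt (fun x => Real.exp (c * x) / c) (Real.exp (c * s)) s := by
    intro s _
    have h1 : HasDerivAt (fun x : ℝ => c * x) c s := by simpa using (hasDerivAt_id s).const_mul c
    have h2 := (h1.exp).div_const c
    simpa [mul_comm, mul_div_cancel_left₀ _ hc] using h2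
  have hint : IntervalIntegrable (fun s => Real.exp (c * s)) volume 0 b :=
    (Real.continuous_exp.comp (continuous_const.mul continuous_id)).intervalIntegrable 0 b
  rw [intervalIntegral.integral_eq_sub_of_hasDerivAt h hint]
  simp [sub_div]

-- ∫ u in Ioo 0 1, (1-u)^s du = 1/(s+1),  s > 0 (rpow)
lemma integral_one_sub_rpow {s : ℝ} (hs : 0 < s) :
    ∫ u in Set.Ioo (0:ℝ) 1, (1 - u) ^ s = 1 / (s + 1) := by
  rw [← MeasureTheory.integral_Ioc_eq_integral_Ioo,
    ← intervalIntegral.integral_of_le (by norm_num : (0:ℝ) ≤ 1)]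
  have := intervalIntegral.integral_comp_sub_left (a := (0:ℝ)) (b := 1) (fun x : ℝ => x ^ s) 1
  rw [this, integral_rpow (Or.inl (by linarith : (-1:ℝ) < s))]
  norm_num
  rw [Real.zero_rpow (by linarith : s + 1 ≠ 0)]
  norm_num




lemma finIoo (a b : ℝ) : IsFiniteMeasure (volume.restrict (Set.Ioo a b)) :=
  ⟨by rw [Measure.restrict_apply_univ, Real.volume_Ioo]; exact ENNReal.ofReal_lt_top⟩

lemma K1 (n : ℕ) :
    ∫ u in Set.Ioo (0:ℝ) 1, (1 - (1-u)^n) / (-Real.log (1-u)) = Real.log (n+1) := by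
  set F : ℝ → ℝ → ℝ := fun s u => Real.exp (Real.log (1 - u) * s) with hF
  have hmeas : Measurable (Function.uncurry F) := by
    apply Measurable.exp
    exact ((Real.measurable_log.comp (measurable_const.sub measurable_snd))).mul measurable_fst
  haveI f1 := finIoo 0 (n:ℝ)
  haveI f2 := finIoo 0 1
  have hInt : Integrable (Function.uncurry F)
      ((volume.restrict (Set.Ioo (0:ℝ) (n:ℝ))).prod (volume.restrict (Set.Ioo (0:ℝ) 1))) := by
    apply (integrable_const (1:ℝ)).mono' hmeas.aestronglyMeasurable
    rw [MeasureTheory.Measure.prod_restrict]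
    filter_upwards [ae_restrict_mem (measurableSet_Ioo.prod measurableSet_Ioo)] with p hp
    rcases hp with ⟨hs, hu⟩
    have h1 : Real.log (1 - p.2) < 0 :=
      Real.log_neg (by linarith [hu.2]) (by linarith [hu.1])
    have : Real.log (1 - p.2) * p.1 ≤ 0 :=
      mul_nonpos_of_nonpos_of_nonneg h1.le hs.1.le
    simpa [Function.uncurry, hF, abs_of_pos (Real.exp_pos _)] using Real.exp_le_one_iff.mpr this
  -- inner integral in s
  have hinner : ∀ u ∈ Set.Ioo (0:ℝ) 1,
      (∫ s in Set.Ioo (0:ℝ) (n:ℝ), F s u) = (1 - (1-u)^n) / (-Real.log (1-u)) := by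
    intro u hu
    have h1u : (0:ℝ) < 1 - u := by linarith [hu.2]
    have hc : Real.log (1 - u) ≠ 0 := (Real.log_neg h1u (by linarith [hu.1])).ne
    rw [← MeasureTheory.integral_Ioc_eq_integral_Ioo,
      ← intervalIntegral.integral_of_le (by positivity : (0:ℝ) ≤ (n:ℝ))]
    rw [show (fun s => F s u) = fun s => Real.exp (Real.log (1-u) * s) from rfl]
    rw [integral_exp_mul _ hc]
    rw [mul_comm, Real.exp_nat_mul, Real.exp_log h1u]
    rw [div_eq_div_iff hc (neg_ne_zero.mpr hc)]
    ring
  calc ∫ u in Set.Ioo (0:ℝ) 1, (1 - (1-u)^n) / (-Real.log (1-u))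
      = ∫ u in Set.Ioo (0:ℝ) 1, (∫ s in Set.Ioo (0:ℝ) (n:ℝ), F s u) :=
        (setIntegral_congr_fun measurableSet_Ioo (fun u hu => (hinner u hu).symm))
    _ = ∫ s in Set.Ioo (0:ℝ) (n:ℝ), (∫ u in Set.Ioo (0:ℝ) 1, F s u) :=
        (MeasureTheory.integral_integral_swap hInt).symm
    _ = ∫ s in Set.Ioo (0:ℝ) (n:ℝ), 1/(s+1) := by
        apply setIntegral_congr_fun measurableSet_Ioo
        intro s hs
        have : (fun u => F s u) = fun u => Real.exp (Real.log (1-u) * s) := rfl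
        calc ∫ u in Set.Ioo (0:ℝ) 1, F s u
            = ∫ u in Set.Ioo (0:ℝ) 1, (1-u) ^ s := by
              apply setIntegral_congr_fun measurableSet_Ioo
              intro u hu
              simp only [hF]
              rw [Real.rpow_def_of_pos (by linarith [hu.2] : (0:ℝ) < 1 - u)]
          _ = 1/(s+1) := integral_one_sub_rpow hs.1
    _ = Real.log (n+1) := by
        rw [← MeasureTheory.integral_Ioc_eq_integral_Ioo,
          ← intervalIntegral.integral_of_le (by positivity : (0:ℝ) ≤ (n:ℝ))]
        have := intervalIntegral.integral_comp_add_right (a := (0:ℝ)) (b := (n:ℝ))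
          (fun x : ℝ => 1/x) 1
        rw [this, integral_one_div (by
          intro h
          rcases Set.mem_uIcc.mp h with ⟨h1, _⟩ | ⟨_, h2⟩ <;> norm_num at * <;> linarith)]
        norm_num



lemma gg_nonneg {j : ℕ} {u : ℝ} (hu : u ∈ Set.Ioo (0:ℝ) 1) : 0 ≤ gg j u := by
  have h1 : (0:ℝ) < 1 - u := by linarith [hu.2]
  have hL : Real.log (1 - u) < 0 := Real.log_neg h1 (by linarith [hu.1])
  have h2 : (1-u)^j ≤ 1 := pow_le_one₀ h1.le (by linarith [hu.1])
  exact div_nonneg (by linarith) (by linarith)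

lemma gg_le {j : ℕ} {u : ℝ} (hu : u ∈ Set.Ioo (0:ℝ) 1) : gg j u ≤ j := by
  have h1 : (0:ℝ) < 1 - u := by linarith [hu.2]
  have hL : Real.log (1 - u) < 0 := Real.log_neg h1 (by linarith [hu.1])
  have hLu : u ≤ -Real.log (1-u) := by
    have := Real.log_le_sub_one_of_pos h1; linarith
  have hbern : 1 - (j:ℝ) * u ≤ (1-u)^j := by
    have := one_add_mul_le_pow (by linarith [hu.2] : (-2:ℝ) ≤ -u) j
    calc 1 - (j:ℝ)*u = 1 + j*(-u) := by ring
      _ ≤ (1 + -u)^j := this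
      _ = (1-u)^j := by ring_nf
  calc gg j u ≤ ((j:ℝ) * u) / u := by
        apply div_le_div₀ (mul_nonneg j.cast_nonneg hu.1.le) (by linarith) hu.1 hLu
    _ = j := mul_div_cancel_right₀ _ (ne_of_gt hu.1)
  
lemma gg_measurable (j : ℕ) : Measurable (gg j) := by
  apply Measurable.div
  · exact (measurable_const.sub ((measurable_const.sub measurable_id).pow_const j))
  · exact (Real.measurable_log.comp (measurable_const.sub measurable_id)).neg

lemma gg_integrable (j : ℕ) : IntegrableOn (gg j) (Set.Ioo (0:ℝ) 1) := by
  apply (integrable_const (j:ℝ)).mono' (gg_measurable j).aestronglyMeasurable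
  filter_upwards [ae_restrict_mem measurableSet_Ioo] with u hu
  rw [Real.norm_eq_abs, abs_of_nonneg (gg_nonneg hu)]
  exact gg_le hu

lemma log_factorial (k : ℕ) :
    Real.log (Nat.factorial k) = ∑ j ∈ range k, Real.log (j+1) := by
  induction k with
  | zero => simp
  | succ n ih =>
    rw [Finset.sum_range_succ, ← ih, Nat.factorial_succ, Nat.cast_mul, Real.log_mul
      (by positivity) (by positivity : ((Nat.factorial n : ℝ)) ≠ 0)]
    push_cast
    ring

lemma K2 (n : ℕ) :
    ∫ u in Set.Ioo (0:ℝ) 1, (1 - (1-u)^n) / u = (harmonic n : ℝ) := by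
  have hpt : ∀ u ∈ Set.Ioo (0:ℝ) 1,
      (1 - (1-u)^n) / u = ∑ j ∈ range n, (1-u)^j := by
    intro u hu
    have hx : (1:ℝ) - u ≠ 1 := by intro h; have := hu.1; linarith [sub_eq_self.mp h] 
    rw [geom_sum_eq hx, div_eq_div_iff (ne_of_gt hu.1)
      (by intro h; rw [sub_eq_zero] at h; exact hx (by linarith) : (1:ℝ) - u - 1 ≠ 0)]
    ring
  rw [setIntegral_congr_fun measurableSet_Ioo hpt]
  rw [MeasureTheory.integral_finset_sum]
  · have : ∀ j ∈ range n, (∫ u in Set.Ioo (0:ℝ) 1, (1-u)^j) = ((j:ℝ)+1)⁻¹ := by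
      intro j _
      rw [← MeasureTheory.integral_Ioc_eq_integral_Ioo,
        ← intervalIntegral.integral_of_le (by norm_num : (0:ℝ) ≤ 1)]
      rw [intervalIntegral.integral_comp_sub_left (fun x : ℝ => x ^ j) 1]
      norm_num [integral_pow]
    rw [Finset.sum_congr rfl this]
    rw [harmonic]
    push_cast
    rfl
  · intro j _
    apply (integrable_const (1:ℝ)).mono'
      (((measurable_const.sub measurable_id').pow_const j).aestronglyMeasurable)
    filter_upwards [ae_restrict_mem measurableSet_Ioo] with u hu
    rw [Real.norm_eq_abs, abs_of_nonneg (pow_nonneg (by simp; linarith [hu.2]) j)]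
    exact pow_le_one₀ (by simp; linarith [hu.2]) (by simp; linarith [hu.1])


lemma binom_sub (M : ℕ) (x : ℝ) :
    ∑ k ∈ Icc 1 M, (M.choose k : ℝ) * (-1)^k * x^k = (1-x)^M - 1 := by
  have hb : (1 - x)^M = ∑ k ∈ range (M+1), (-x)^k * 1^(M-k) * (M.choose k) := by
    rw [← add_pow]; ring_nf
  have hsplit : ∑ k ∈ range (M+1), (-x)^k * 1^(M-k) * (M.choose k)
      = 1 + ∑ k ∈ Icc 1 M, (-x)^k * 1^(M-k) * (M.choose k) := by
    rw [Finset.range_eq_Ico, Finset.sum_eq_sum_Ico_succ_bot (Nat.succ_pos M)]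
    simp [← Finset.Ico_add_one_right_eq_Icc]
  rw [hb, hsplit]
  have : ∀ k ∈ Icc 1 M, (-x)^k * 1^(M-k) * ((M.choose k : ℝ))
      = (M.choose k : ℝ) * (-1)^k * x^k := by
    intro k _; rw [neg_pow]; ring
  rw [Finset.sum_congr rfl this]
  ring

lemma idA (m : ℕ) (x : ℝ) :
    ∑ k ∈ Icc 1 m, (m.choose k : ℝ) * (-1)^k * x^k / k
      = -∑ i ∈ Icc 1 m, (1 - (1-x)^i) / i := by
  induction m with
  | zero => simp
  | succ m ih =>
    have hpascal : ∀ k ∈ Icc 1 (m+1), ((m+1).choose k : ℝ) * (-1)^k * x^k / k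
        = (m.choose k : ℝ) * (-1)^k * x^k / k
          + ((m+1).choose k : ℝ) * (-1)^k * x^k / (m+1) := by
      intro k hk
      obtain ⟨hk1, hk2⟩ := Finset.mem_Icc.mp hk
      obtain ⟨j, rfl⟩ := Nat.exists_eq_add_of_le hk1
      have h1' : ((m:ℝ)+1) * (m.choose j) = ((m+1).choose (j+1) : ℝ) * ((j:ℝ)+1) := by
        exact_mod_cast congrArg Nat.cast (Nat.add_one_mul_choose_eq m j)
      have hc2 : (((m+1).choose (j+1) : ℝ)) = (m.choose (j+1) : ℝ) + (m.choose j : ℝ) := by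
        rw [Nat.choose_succ_succ']; push_cast; ring
      have hch : ((m+1).choose (1+j):ℝ) * ((m:ℝ)+1)
          = (m.choose (1+j):ℝ) * ((m:ℝ)+1) + ((m+1).choose (1+j):ℝ) * (1+(j:ℝ)) := by
        rw [show 1 + j = j + 1 by ring]
        linear_combination ((m:ℝ)+1) * hc2 + h1'
      have hk0 : ((1+j : ℕ) : ℝ) ≠ 0 := by positivity
      have hm0 : ((m:ℝ)+1) ≠ 0 := by positivity
      push_cast at hk0 ⊢
      rw [div_add_div _ _ hk0 hm0, div_eq_div_iff hk0 (mul_ne_zero hk0 hm0)]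
      linear_combination ((-1:ℝ)^(1+j) * x^(1+j) * (1+(j:ℝ))) * hch
    rw [Finset.sum_congr rfl hpascal, Finset.sum_add_distrib]
    have hA : ∑ k ∈ Icc 1 (m+1), (m.choose k : ℝ) * (-1)^k * x^k / k
        = ∑ k ∈ Icc 1 m, (m.choose k : ℝ) * (-1)^k * x^k / k := by
      rw [Finset.sum_Icc_succ_top (by omega : 1 ≤ m + 1)]
      simp [Nat.choose_succ_self]
    have hB : ∑ k ∈ Icc 1 (m+1), ((m+1).choose k : ℝ) * (-1)^k * x^k / (m+1)
        = ((1-x)^(m+1) - 1) / (m+1) := by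
      rw [← binom_sub (m+1) x, Finset.sum_div]
    have hC : ∑ i ∈ Icc 1 (m+1), (1 - (1-x)^i) / (i:ℝ)
        = ∑ i ∈ Icc 1 m, (1 - (1-x)^i) / (i:ℝ) + (1 - (1-x)^(m+1)) / ((m:ℝ)+1) := by
      rw [Finset.sum_Icc_succ_top (by omega : 1 ≤ m + 1)]
      push_cast; ring_nf
    rw [hA, hB, ih, hC]
    push_cast
    ring






lemma geom_pt {u : ℝ} (hu : u ∈ Set.Ioo (0:ℝ) 1) (k : ℕ) :
    ∑ j ∈ range k, (1-u)^j = (1-(1-u)^k)/u := by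
  have hx : (1:ℝ) - u ≠ 1 := by
    intro h; have := hu.1; rw [sub_eq_self] at h; linarith
  rw [geom_sum_eq hx, div_eq_div_iff
    (by intro h; rw [sub_eq_zero] at h; exact hx (by linarith) : (1:ℝ) - u - 1 ≠ 0)
    (ne_of_gt hu.1)]
  ring

lemma pointwise {m : ℕ} (hm : 1 ≤ m) {u : ℝ} (hu : u ∈ Set.Ioo (0:ℝ) 1) :
    ∑ k ∈ Icc 1 m, ((m.choose k:ℝ) * (-1)^k / k) * (∑ j ∈ range k, gg j u)
      = psi m u := by
  have h1u : (0:ℝ) < 1 - u := by linarith [hu.2]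
  have hL : 0 < -Real.log (1-u) := by
    have := Real.log_neg h1u (by linarith [hu.1]); linarith
  set L : ℝ := -Real.log (1-u) with hLdef
  have hGk : ∀ k : ℕ, ∑ j ∈ range k, gg j u = ((k:ℝ) - (1-(1-u)^k)/u) / L := by
    intro k
    unfold gg
    rw [← Finset.sum_div]
    congr 1
    rw [Finset.sum_sub_distrib, Finset.sum_const, Finset.card_range, geom_pt hu k]
    simp
  have hterm : ∀ k ∈ Icc 1 m, ((m.choose k:ℝ) * (-1)^k / k) * (∑ j ∈ range k, gg j u)
      = ((m.choose k:ℝ)*(-1)^k - ((m.choose k:ℝ)*(-1)^k*(1-(1-u)^k)/k)/u) / L := by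
    intro k hk
    have hk1 := (Finset.mem_Icc.mp hk).1
    have hk0 : ((k:ℝ)) ≠ 0 := Nat.cast_ne_zero.mpr (by omega)
    have hnum : ((m.choose k:ℝ) * (-1)^k / k) * ((k:ℝ) - (1-(1-u)^k)/u)
        = (m.choose k:ℝ)*(-1)^k - ((m.choose k:ℝ)*(-1)^k*(1-(1-u)^k)/k)/u := by
      field_simp
    rw [hGk k, ← mul_div_assoc, hnum]
  rw [Finset.sum_congr rfl hterm, ← Finset.sum_div]
  unfold psi
  rw [← hLdef]
  congr 1
  rw [Finset.sum_sub_distrib, ← Finset.sum_div]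
  have h1 : ∑ k ∈ Icc 1 m, (m.choose k:ℝ)*(-1)^k = -1 := by
    have hb := binom_sub m 1
    simp only [one_pow, mul_one, sub_self] at hb
    rw [hb, zero_pow (by omega : m ≠ 0)]
    norm_num
  have h2 : ∑ k ∈ Icc 1 m, (m.choose k:ℝ)*(-1)^k*(1-(1-u)^k)/k
      = -∑ i ∈ Icc 1 m, u^i/i := by
    have e1 : ∀ k ∈ Icc 1 m, (m.choose k:ℝ)*(-1)^k*(1-(1-u)^k)/k
        = (m.choose k:ℝ)*(-1)^k*1^k/k - (m.choose k:ℝ)*(-1)^k*(1-u)^k/k := by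
      intro k _
      rw [← sub_div]
      ring_nf
    rw [Finset.sum_congr rfl e1, Finset.sum_sub_distrib, idA m 1, idA m (1-u)]
    have e2 : ∀ i ∈ Icc 1 m, (1 - (1-(1:ℝ))^i)/(i:ℝ) = 1/(i:ℝ) := by
      intro i hi
      rw [sub_self, zero_pow (by have := (Finset.mem_Icc.mp hi).1; omega : i ≠ 0), sub_zero]
    have e3 : ∀ i ∈ Icc 1 m, (1 - (1-((1:ℝ)-u))^i)/(i:ℝ) = (1 - u^i)/(i:ℝ) := by
      intro i _
      rw [sub_sub_cancel]
    rw [Finset.sum_congr rfl e2, Finset.sum_congr rfl e3]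
    have e4 : ∀ i ∈ Icc 1 m, (1:ℝ)/i - (1-u^i)/(i:ℝ) = u^i/(i:ℝ) := by
      intro i _; ring
    calc -∑ i ∈ Icc 1 m, (1:ℝ)/i - -∑ i ∈ Icc 1 m, (1-u^i)/(i:ℝ)
        = -(∑ i ∈ Icc 1 m, (1:ℝ)/i - ∑ i ∈ Icc 1 m, (1-u^i)/(i:ℝ)) := by ring
      _ = -(∑ i ∈ Icc 1 m, ((1:ℝ)/i - (1-u^i)/(i:ℝ))) := by rw [Finset.sum_sub_distrib]
      _ = -∑ i ∈ Icc 1 m, u^i/(i:ℝ) := by rw [Finset.sum_congr rfl e4]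
  rw [h1, h2]
  ring



lemma phi_nonneg {u : ℝ} (hu : u ∈ Set.Ioo (0:ℝ) 1) : 0 ≤ phi u := by
  have h1u : (0:ℝ) < 1 - u := by linarith [hu.2]
  have hL : Real.log (1-u) < 0 := Real.log_neg h1u (by linarith [hu.1])
  have hle : u ≤ -Real.log (1-u) := by
    have := Real.log_le_sub_one_of_pos h1u; linarith
  have : 1/(-Real.log (1-u)) ≤ 1/u := one_div_le_one_div_of_le hu.1 hle
  unfold phi
  rw [one_div_neg_eq_neg_one_div] at this
  linarith

lemma phi_le_one {u : ℝ} (hu : u ∈ Set.Ioo (0:ℝ) 1) : phi u ≤ 1 := by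
  have h1u : (0:ℝ) < 1 - u := by linarith [hu.2]
  have hL : Real.log (1-u) < 0 := Real.log_neg h1u (by linarith [hu.1])
  have hkey : (1-u) * (-Real.log (1-u)) ≤ u := by
    have h2 := Real.log_le_sub_one_of_pos (show (0:ℝ) < (1-u)⁻¹ by positivity)
    rw [Real.log_inv] at h2
    have h3 : (1-u) * (-Real.log (1-u)) ≤ (1-u) * ((1-u)⁻¹ - 1) :=
      mul_le_mul_of_nonneg_left h2 h1u.le
    have h4 : (1-u) * ((1-u)⁻¹ - 1) = u := by field_simp; ring
    linarith
  have h5 : (1-u)/u ≤ 1/(-Real.log (1-u)) := by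
    rw [div_le_div_iff₀ hu.1 (by linarith)]
    linarith [hkey]
  have h6 : 1/u - 1/(-Real.log (1-u)) ≤ 1/u - (1-u)/u := by linarith
  have h7 : 1/u - (1-u)/u = 1 := by
    rw [div_sub_div_same, sub_sub_cancel, div_self (ne_of_gt hu.1)]
  unfold phi
  rw [one_div_neg_eq_neg_one_div] at h6
  linarith

lemma phi_measurable : Measurable phi := by
  apply Measurable.add
  · exact measurable_const.div measurable_id
  · exact measurable_const.div (Real.measurable_log.comp (measurable_const.sub measurable_id))

lemma phi_integrable : IntegrableOn phi (Set.Ioo (0:ℝ) 1) := by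
  apply (integrable_const (1:ℝ)).mono' phi_measurable.aestronglyMeasurable
  filter_upwards [ae_restrict_mem measurableSet_Ioo] with u hu
  rw [Real.norm_eq_abs, abs_of_nonneg (phi_nonneg hu)]
  exact phi_le_one hu

lemma gg2_measurable (j : ℕ) : Measurable (gg2 j) :=
  (measurable_const.sub ((measurable_const.sub measurable_id).pow_const j)).div measurable_id

lemma gg2_nonneg {j : ℕ} {u : ℝ} (hu : u ∈ Set.Ioo (0:ℝ) 1) : 0 ≤ gg2 j u := by
  have h1 : (0:ℝ) < 1 - u := by linarith [hu.2]
  have h2 : (1-u)^j ≤ 1 := pow_le_one₀ h1.le (by linarith [hu.1])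
  exact div_nonneg (by linarith) hu.1.le

lemma gg2_le {j : ℕ} {u : ℝ} (hu : u ∈ Set.Ioo (0:ℝ) 1) : gg2 j u ≤ j := by
  have h1 : (0:ℝ) < 1 - u := by linarith [hu.2]
  have hbern : 1 - (j:ℝ) * u ≤ (1-u)^j := by
    have := one_add_mul_le_pow (by linarith [hu.2] : (-2:ℝ) ≤ -u) j
    calc 1 - (j:ℝ)*u = 1 + j*(-u) := by ring
      _ ≤ (1 + -u)^j := this
      _ = (1-u)^j := by ring_nf
  calc gg2 j u ≤ ((j:ℝ) * u) / u :=
        div_le_div₀ (mul_nonneg j.cast_nonneg hu.1.le) (by linarith) hu.1 le_rfl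
    _ = j := mul_div_cancel_right₀ _ (ne_of_gt hu.1)

lemma gg2_integrable (j : ℕ) : IntegrableOn (gg2 j) (Set.Ioo (0:ℝ) 1) := by
  apply (integrable_const (j:ℝ)).mono' (gg2_measurable j).aestronglyMeasurable
  filter_upwards [ae_restrict_mem measurableSet_Ioo] with u hu
  rw [Real.norm_eq_abs, abs_of_nonneg (gg2_nonneg hu)]
  exact gg2_le hu




lemma integral_phi :
    ∫ u in Set.Ioo (0:ℝ) 1, phi u = Real.eulerMascheroniConstant := by
  set f : ℕ → ℝ → ℝ := fun n u => (1 - (1-u)^n) * phi u with hf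
  have hfmeas : ∀ n, Measurable (f n) := fun n =>
    (measurable_const.sub ((measurable_const.sub measurable_id).pow_const n)).mul phi_measurable
  have hfint : ∀ n, IntegrableOn (f n) (Set.Ioo (0:ℝ) 1) := by
    intro n
    apply (integrable_const (1:ℝ)).mono' (hfmeas n).aestronglyMeasurable
    filter_upwards [ae_restrict_mem measurableSet_Ioo] with u hu
    have h1 : (0:ℝ) ≤ 1 - u := by linarith [hu.2]
    have h2 : (1-u)^n ≤ 1 := pow_le_one₀ h1 (by linarith [hu.1])
    have h3 : 0 ≤ (1-u)^n := pow_nonneg h1 n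
    rw [Real.norm_eq_abs, abs_of_nonneg (mul_nonneg (by linarith) (phi_nonneg hu))]
    calc (1 - (1-u)^n) * phi u ≤ 1 * 1 :=
      mul_le_mul (by linarith) (phi_le_one hu) (phi_nonneg hu) one_pos.le
    _ = 1 := mul_one 1
  have hint : ∀ n, ∫ u in Set.Ioo (0:ℝ) 1, f n u = (harmonic n : ℝ) - Real.log (n+1) := by
    intro n
    have hpt : ∀ u ∈ Set.Ioo (0:ℝ) 1, f n u = gg2 n u - gg n u := by
      intro u hu
      have h1u : (0:ℝ) < 1 - u := by linarith [hu.2]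
      have hL : Real.log (1-u) < 0 := Real.log_neg h1u (by linarith [hu.1])
      simp only [hf, phi, gg, gg2]
      ring
    rw [setIntegral_congr_fun measurableSet_Ioo hpt,
      integral_sub (gg2_integrable n) (gg_integrable n)]
    rw [show (∫ u in Set.Ioo (0:ℝ) 1, gg2 n u) = (harmonic n : ℝ) from K2 n,
      show (∫ u in Set.Ioo (0:ℝ) 1, gg n u) = Real.log (n+1) from K1 n]
  have hMCT : Tendsto (fun n => ∫ u in Set.Ioo (0:ℝ) 1, f n u) atTop
      (nhds (∫ u in Set.Ioo (0:ℝ) 1, phi u)) := by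
    apply integral_tendsto_of_tendsto_of_monotone hfint phi_integrable
    · filter_upwards [ae_restrict_mem measurableSet_Ioo] with u hu
      apply monotone_nat_of_le_succ
      intro n
      have h1 : (0:ℝ) ≤ 1 - u := by linarith [hu.2]
      have h2 : (1-u)^(n+1) ≤ (1-u)^n :=
        pow_le_pow_of_le_one h1 (by linarith [hu.1]) (Nat.le_succ n)
      exact mul_le_mul_of_nonneg_right (by linarith) (phi_nonneg hu)
    · filter_upwards [ae_restrict_mem measurableSet_Ioo] with u hu
      have h0 : (0:ℝ) ≤ 1 - u := by linarith [hu.2]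
      have h1 : (1:ℝ) - u < 1 := by linarith [hu.1]
      have hpow : Tendsto (fun n : ℕ => (1-u)^n) atTop (nhds 0) :=
        tendsto_pow_atTop_nhds_zero_of_lt_one h0 h1
      have h2 : Tendsto (fun n : ℕ => (1 - (1-u)^n) * phi u) atTop (nhds ((1 - 0) * phi u)) :=
        (Tendsto.sub (tendsto_const_nhds (x := (1:ℝ))) hpow).mul_const (phi u)
      simpa using h2
  have hGamma : Tendsto (fun n => ∫ u in Set.Ioo (0:ℝ) 1, f n u) atTop
      (nhds Real.eulerMascheroniConstant) := by
    have := Real.tendsto_harmonic_sub_log_add_one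
    apply Tendsto.congr ?_ this
    intro n
    rw [hint n]
  exact tendsto_nhds_unique hMCT hGamma




lemma sum_gg_integrable (k : ℕ) :
    IntegrableOn (fun u => ∑ j ∈ range k, gg j u) (Set.Ioo (0:ℝ) 1) :=
  integrable_finset_sum _ (fun j _ => gg_integrable j)

lemma a_eq {m : ℕ} (hm : 1 ≤ m) :
    (∑ k ∈ Icc 1 m, (m.choose k : ℝ) * (-1)^k / k * Real.log (Nat.factorial k))
      = ∫ u in Set.Ioo (0:ℝ) 1, psi m u := by
  have hstep : ∀ k : ℕ, Real.log (Nat.factorial k)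
      = ∫ u in Set.Ioo (0:ℝ) 1, ∑ j ∈ range k, gg j u := by
    intro k
    rw [MeasureTheory.integral_finset_sum _ (fun j _ => gg_integrable j), log_factorial k]
    exact Finset.sum_congr rfl (fun j _ => (K1 j).symm)
  calc ∑ k ∈ Icc 1 m, (m.choose k : ℝ) * (-1)^k / k * Real.log (Nat.factorial k)
      = ∑ k ∈ Icc 1 m, ∫ u in Set.Ioo (0:ℝ) 1,
          ((m.choose k : ℝ) * (-1)^k / k) * (∑ j ∈ range k, gg j u) := by
        apply Finset.sum_congr rfl
        intro k _
        rw [hstep k, ← integral_const_mul]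
    _ = ∫ u in Set.Ioo (0:ℝ) 1, ∑ k ∈ Icc 1 m,
          ((m.choose k : ℝ) * (-1)^k / k) * (∑ j ∈ range k, gg j u) := by
        rw [MeasureTheory.integral_finset_sum _
          (fun k _ => (sum_gg_integrable k).const_mul _)]
    _ = ∫ u in Set.Ioo (0:ℝ) 1, psi m u :=
        setIntegral_congr_fun measurableSet_Ioo (fun u hu => pointwise hm hu)

lemma psi_integrable {m : ℕ} (hm : 1 ≤ m) : IntegrableOn (psi m) (Set.Ioo (0:ℝ) 1) := by
  apply Integrable.congr (f := fun u => ∑ k ∈ Icc 1 m,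
    ((m.choose k:ℝ) * (-1)^k / k) * (∑ j ∈ range k, gg j u))
    (integrable_finset_sum _ (fun k _ => (sum_gg_integrable k).const_mul _))
  filter_upwards [ae_restrict_mem measurableSet_Ioo] with u hu
  exact pointwise hm hu

lemma psi_mono_pt {u : ℝ} (hu : u ∈ Set.Ioo (0:ℝ) 1) : Monotone (fun m => psi m u) := by
  apply monotone_nat_of_le_succ
  intro m
  have h1u : (0:ℝ) < 1 - u := by linarith [hu.2]
  have hu0 : 0 < u := hu.1
  have hL : 0 < -Real.log (1-u) := by
    have := Real.log_neg h1u (by linarith [hu.1]); linarith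
  have hS : (∑ i ∈ Icc 1 m, u^i/(i:ℝ)) ≤ ∑ i ∈ Icc 1 (m+1), u^i/(i:ℝ) := by
    apply Finset.sum_le_sum_of_subset_of_nonneg
    · exact Finset.Icc_subset_Icc_right (Nat.le_succ m)
    · intro i _ _; positivity
  unfold psi
  gcongr

lemma psi_tendsto_pt {u : ℝ} (hu : u ∈ Set.Ioo (0:ℝ) 1) :
    Tendsto (fun m => psi m u) atTop (nhds (phi u)) := by
  have h1u : (0:ℝ) < 1 - u := by linarith [hu.2]
  have hu0 : 0 < u := hu.1
  have hlog : Real.log (1-u) < 0 := Real.log_neg h1u (by linarith [hu.1])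
  have habs : |u| < 1 := by rw [abs_of_pos hu0]; exact hu.2
  have hs := (hasSum_pow_div_log_of_abs_lt_one habs).tendsto_sum_nat
  have hS : Tendsto (fun n : ℕ => ∑ i ∈ Icc 1 n, u^i/(i:ℝ)) atTop
      (nhds (-Real.log (1-u))) := by
    apply hs.congr
    intro n
    rw [← Finset.Ico_add_one_right_eq_Icc, Finset.sum_Ico_eq_sum_range]
    norm_num
    apply Finset.sum_congr rfl
    intro i _
    push_cast
    rw [add_comm 1 (i:ℝ), add_comm 1 i]
  have hmain := ((hS.div_const u).sub_const 1).div_const (-Real.log (1-u))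
  have hval : ((-Real.log (1-u))/u - 1)/(-Real.log (1-u)) = phi u := by
    unfold phi
    have hc : Real.log (1-u) ≠ 0 := ne_of_lt hlog
    field_simp
    ring
  rw [hval] at hmain
  exact hmain

lemma tendsto_int_psi :
    Tendsto (fun m => ∫ u in Set.Ioo (0:ℝ) 1, psi m u) atTop
      (nhds (∫ u in Set.Ioo (0:ℝ) 1, phi u)) := by
  have key : Tendsto (fun n : ℕ => ∫ u in Set.Ioo (0:ℝ) 1, psi (n+1) u) atTop
      (nhds (∫ u in Set.Ioo (0:ℝ) 1, phi u)) := by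
    apply integral_tendsto_of_tendsto_of_monotone
      (fun n => psi_integrable (by omega)) phi_integrable
    · filter_upwards [ae_restrict_mem measurableSet_Ioo] with u hu
      intro a b hab
      exact psi_mono_pt hu (by omega : a+1 ≤ b+1)
    · filter_upwards [ae_restrict_mem measurableSet_Ioo] with u hu
      exact (psi_tendsto_pt hu).comp (tendsto_add_atTop_nat 1)
  exact (tendsto_add_atTop_iff_nat 1).mp key

theorem stmt7 :
    Tendsto (fun m : ℕ =>
        ∑ k ∈ Icc 1 m, (m.choose k : ℝ) * (-1) ^ k / k * Real.log (Nat.factorial k))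
      atTop (nhds Real.eulerMascheroniConstant) := by
  have h := tendsto_int_psi
  rw [integral_phi] at h
  apply Tendsto.congr' ?_ h
  filter_upwards [eventually_ge_atTop 1] with m hm
  exact (a_eq hm).symm
end

section
/- The Euler–Mascheroni constant γ equals the sum over j from 1 to infinity of (1/j) times the sum over i from 1 to j of binom(j−1, i−1) * (-1)^i * ln i. -/
open Finset Real MeasureTheory Filter Topology Set

namespace SerGamma


lemma exp_neg_mul_integrableOn {c : ℝ} (hc : 0 < c) :
    IntegrableOn (fun t : ℝ => exp (-(c * t))) (Ioi 0) := by
  simpa [neg_mul] using exp_neg_integrableOn_Ioi 0 hc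

lemma integral_exp_neg_mul {c : ℝ} (hc : 0 < c) :
    ∫ t in Ioi (0:ℝ), exp (-(c * t)) = 1 / c := by
  have := MeasureTheory.integral_comp_mul_left_Ioi (fun x : ℝ => exp (-x)) 0 hc
  simp only [mul_zero] at this
  rw [this, integral_exp_neg_Ioi_zero]
  simp [one_div]

lemma one_sub_exp_le {s : ℝ} : 1 - exp (-s) ≤ s := by
  have := add_one_le_exp (-s); linarith

lemma frullani_integrand_integrable {a : ℝ} (ha : 1 ≤ a) :
    IntegrableOn (fun t : ℝ => (exp (-t) - exp (-(a * t))) / t) (Ioi 0) := by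
  have hmeas : AEStronglyMeasurable (fun t : ℝ => (exp (-t) - exp (-(a * t))) / t)
      (volume.restrict (Ioi 0)) := by
    apply ContinuousOn.aestronglyMeasurable _ measurableSet_Ioi
    exact ContinuousOn.div (by fun_prop) continuousOn_id (fun t ht => ne_of_gt ht)
  refine Integrable.mono' (((exp_neg_mul_integrableOn one_pos).const_mul (a - 1))) hmeas ?_
  rw [ae_restrict_iff' measurableSet_Ioi]
  filter_upwards with t ht
  simp only [Set.mem_Ioi] at ht
  have h1 : exp (-(a * t)) ≤ exp (-t) := by
    apply exp_le_exp.2; nlinarith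
  have h2 : exp (-t) - exp (-(a * t)) ≤ (a - 1) * t * exp (-t) := by
    have : exp (-t) - exp (-(a * t)) = exp (-t) * (1 - exp (-((a - 1) * t))) := by
      rw [mul_sub, mul_one, ← exp_add]; ring_nf
    rw [this]
    have hb := one_sub_exp_le (s := (a - 1) * t)
    nlinarith [exp_nonneg (-t), exp_pos (-t)]
  rw [Real.norm_eq_abs, abs_div, abs_of_nonneg (by linarith), abs_of_pos ht,
    div_le_iff₀ ht]
  calc exp (-t) - exp (-(a * t)) ≤ (a - 1) * t * exp (-t) := h2
    _ = (a - 1) * exp (-t) * t * 1 := by ring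
    _ ≤ (a - 1) * exp (-(1 * t)) * t := by
        simp only [one_mul]
        nlinarith [exp_nonneg (-t)]

noncomputable def Fr (a : ℝ) : ℝ := ∫ t in Ioi (0:ℝ), (exp (-t) - exp (-(a * t))) / t

lemma Fr_hasDerivAt {x₀ : ℝ} (hx : 1 ≤ x₀) : HasDerivAt Fr x₀⁻¹ x₀ := by
  have main := hasDerivAt_integral_of_dominated_loc_of_deriv_le
    (F := fun a t => (exp (-t) - exp (-(a * t))) / t)
    (F' := fun a t => exp (-(a * t)))
    (μ := volume.restrict (Ioi 0)) (x₀ := x₀)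
    (bound := fun t => exp (-(2⁻¹ * t))) (s := Metric.ball x₀ 2⁻¹) (Metric.ball_mem_nhds x₀ (by norm_num))
    ?_ ?_ ?_ ?_ ?_ ?_
  · have := main.2
    rwa [integral_exp_neg_mul (by linarith), one_div] at this
  · filter_upwards with x
    apply ContinuousOn.aestronglyMeasurable _ measurableSet_Ioi
    exact ContinuousOn.div (by fun_prop) continuousOn_id (fun t ht => ne_of_gt ht)
  · exact frullani_integrand_integrable hx
  · apply ContinuousOn.aestronglyMeasurable _ measurableSet_Ioi
    fun_prop
  · rw [ae_restrict_iff' measurableSet_Ioi]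
    filter_upwards with t ht x hxb
    simp only [Set.mem_Ioi] at ht
    rw [Metric.mem_ball, Real.dist_eq, abs_lt] at hxb
    have hx2 : (2:ℝ)⁻¹ ≤ x := by linarith
    rw [Real.norm_eq_abs, abs_of_pos (exp_pos _), exp_le_exp]
    nlinarith
  · exact (exp_neg_mul_integrableOn (by norm_num))
  · rw [ae_restrict_iff' measurableSet_Ioi]
    filter_upwards with t ht x hxb
    simp only [Set.mem_Ioi] at ht
    have h1 : HasDerivAt (fun x : ℝ => -(x * t)) (-t) x := (hasDerivAt_mul_const t).neg
    have h2 := ((hasDerivAt_const x (exp (-t))).sub h1.exp).div_const t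
    convert h2 using 1
    · rfl
    · rfl
    · field_simp
      ring

lemma frullani {a : ℝ} (ha : 1 ≤ a) : Fr a = log a := by
  have h := intervalIntegral.integral_eq_sub_of_hasDerivAt
    (f := Fr) (f' := fun x => x⁻¹) (a := 1) (b := a)
    (fun x hx => by
      apply Fr_hasDerivAt
      rcases hx with ⟨h1, h2⟩
      simp only [min_def, max_def] at h1 h2
      split_ifs at h1 h2 <;> linarith)
    (by
      apply intervalIntegral.intervalIntegrable_inv
      · intro x hx
        rcases hx with ⟨h1, h2⟩
        simp only [min_def, max_def] at h1 h2
        split_ifs at h1 h2 <;> nlinarith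
      · exact continuousOn_id)
  have h1 : Fr 1 = 0 := by
    unfold Fr
    simp
  rw [integral_inv (by
      intro hx
      rcases hx with ⟨h1', h2'⟩
      simp only [min_def, max_def] at h1' h2'
      split_ifs at h1' h2' <;> linarith)] at h
  rw [h1, sub_zero, div_one] at h
  linarith [h]




lemma exp_lt_one_of_pos {t : ℝ} (ht : 0 < t) : exp (-t) < 1 := by
  rw [exp_lt_one_iff]; linarith

noncomputable def G : ℝ → ℝ := fun t => exp (-t) / (1 - exp (-t)) - exp (-t) / t

noncomputable def g : ℝ → ℝ := fun t => exp (-t) / (1 - exp (-t)) - 1 / t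

lemma abs_g_le {t : ℝ} (ht : 0 < t) : |g t| ≤ 1 := by
  have he1 : exp (-t) < 1 := exp_lt_one_of_pos ht
  have hu : 0 < 1 - exp (-t) := by linarith
  have hle : t + 1 ≤ exp t := add_one_le_exp t
  have hle' : 1 - t ≤ exp (-t) := by have := add_one_le_exp (-t); linarith
  have hexp : exp (-t) / (1 - exp (-t)) = 1 / (exp t - 1) := by
    rw [exp_neg]
    have h0 : 0 < exp t := exp_pos t
    have h1 : 1 < exp t := by nlinarith [exp_pos t, inv_pos.2 h0]
    field_simp
  have h1 : 1 < exp t := by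
    nlinarith [exp_pos t, exp_neg t ▸ he1, inv_pos.2 (exp_pos t)]
  rw [g, hexp, abs_le]
  constructor
  · -- -1 ≤ 1/(exp t - 1) - 1/t  ⇔  1/t - 1/(exp t - 1) ≤ 1
    rw [neg_le, neg_sub]
    rw [div_sub_div _ _ (ne_of_gt ht) (by linarith), div_le_one (by nlinarith)]
    -- (exp t - 1) - t ≤ t * (exp t - 1)
    have key : (1 - t) * exp t ≤ 1 := by
      have := add_one_le_exp (-t)
      have h2 : 1 - t ≤ exp (-t) := by linarith
      calc (1 - t) * exp t ≤ exp (-t) * exp t := by nlinarith [exp_pos t]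
        _ = 1 := by rw [← exp_add]; simp
    nlinarith
  · have : 1 / (exp t - 1) ≤ 1 / t := by
      apply one_div_le_one_div_of_le ht; linarith
    linarith [one_div_pos.2 ht]

lemma g_contOn : ContinuousOn g (Ioi 0) := by
  apply ContinuousOn.sub
  · apply ContinuousOn.div (by fun_prop) (by fun_prop)
    intro t ht
    simp only [Set.mem_Ioi] at ht
    have := exp_lt_one_of_pos ht
    intro h; linarith [h]
  · exact ContinuousOn.div continuousOn_const continuousOn_id
      (fun t ht => ne_of_gt ht)

lemma G_contOn : ContinuousOn G (Ioi 0) := by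
  apply ContinuousOn.sub
  · apply ContinuousOn.div (by fun_prop) (by fun_prop)
    intro t ht
    simp only [Set.mem_Ioi] at ht
    have := exp_lt_one_of_pos ht
    intro h; linarith [h]
  · exact ContinuousOn.div (by fun_prop) continuousOn_id (fun t ht => ne_of_gt ht)

lemma G_eq {t : ℝ} (ht : 0 < t) : G t = exp (-t) * (1 + g t) := by
  have he1 : exp (-t) < 1 := exp_lt_one_of_pos ht
  have hu : (1 : ℝ) - exp (-t) ≠ 0 := by linarith
  rw [G, g]
  field_simp
  ring

lemma G_integrableOn : IntegrableOn G (Ioi 0) := by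
  refine Integrable.mono' (((exp_neg_integrableOn_Ioi 0 one_pos).const_mul 2)) 
    (G_contOn.aestronglyMeasurable measurableSet_Ioi) ?_
  rw [ae_restrict_iff' measurableSet_Ioi]
  filter_upwards with t ht
  simp only [Set.mem_Ioi] at ht
  rw [G_eq ht, Real.norm_eq_abs, abs_mul, abs_of_pos (exp_pos _)]
  have := abs_g_le ht
  have h2 : |1 + g t| ≤ 2 := by
    rw [abs_le] at this ⊢; constructor <;> linarith [this.1, this.2]
  calc exp (-t) * |1 + g t| ≤ exp (-t) * 2 := by nlinarith [exp_pos (-t)]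
    _ = 2 * exp (-1 * t) := by ring_nf
  
lemma exp_pow_eq (k : ℕ) : (fun t : ℝ => exp (-t) ^ (k+1)) = fun t : ℝ => exp (-(((k:ℝ)+1) * t)) := by
  funext t
  rw [← Real.exp_nat_mul]
  push_cast
  ring_nf

lemma exp_pow_integrableOn (k : ℕ) : IntegrableOn (fun t : ℝ => exp (-t) ^ (k+1)) (Ioi 0) := by
  rw [exp_pow_eq]
  have := exp_neg_integrableOn_Ioi 0 (b := (k:ℝ)+1) (by positivity)
  apply this.congr_fun _ measurableSet_Ioi
  intro t ht
  ring_nf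

lemma integral_exp_pow (k : ℕ) : ∫ t in Ioi (0:ℝ), exp (-t) ^ (k+1) = 1 / ((k:ℝ)+1) := by
  rw [exp_pow_eq, integral_exp_neg_mul (by positivity)]

lemma geom_identity (n : ℕ) {t : ℝ} (ht : 0 < t) :
    G t - exp (-t) ^ (n+1) * g t =
      (∑ k ∈ range (n+1), exp (-t) ^ (k+1)) - (exp (-t) - exp (-(((n:ℝ)+1) * t))) / t := by
  have he1 : exp (-t) < 1 := exp_lt_one_of_pos ht
  have hu : (1:ℝ) - exp (-t) ≠ 0 := by linarith
  have hr1 : exp (-t) ≠ 1 := by linarith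
  have hsum : ∑ k ∈ range (n+1), exp (-t) ^ (k+1) =
      exp (-t) * ((exp (-t) ^ (n+1) - 1) / (exp (-t) - 1)) := by
    rw [← geom_sum_eq hr1 (n+1), Finset.mul_sum]
    congr 1; funext k; ring
  have hx : exp (-(((n:ℝ)+1) * t)) = exp (-t) ^ (n+1) := by
    rw [← Real.exp_nat_mul]; push_cast; ring_nf
  rw [hsum, hx, G, g]
  have ht' : t ≠ 0 := ne_of_gt ht
  have h1 : exp (-t) - 1 ≠ 0 := by intro h; apply hr1; linarith
  field_simp
  ring

lemma harmonic_cast (n : ℕ) : (harmonic n : ℝ) = ∑ k ∈ range n, 1 / ((k:ℝ)+1) := by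
  rw [harmonic]
  push_cast
  simp [one_div]

lemma gmul_integrableOn (n : ℕ) :
    IntegrableOn (fun t : ℝ => exp (-t) ^ (n+1) * g t) (Ioi 0) := by
  have hmeas : AEStronglyMeasurable (fun t : ℝ => exp (-t) ^ (n+1) * g t)
      (volume.restrict (Ioi 0)) := by
    apply ContinuousOn.aestronglyMeasurable _ measurableSet_Ioi
    exact ContinuousOn.mul (by fun_prop) g_contOn
  refine Integrable.mono' (exp_neg_integrableOn_Ioi 0 one_pos) hmeas ?_
  rw [ae_restrict_iff' measurableSet_Ioi]
  filter_upwards with t ht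
  simp only [Set.mem_Ioi] at ht
  rw [Real.norm_eq_abs, abs_mul, abs_pow, abs_of_pos (exp_pos _)]
  have h1 : exp (-t) ^ (n+1) ≤ exp (-t) := by
    calc exp (-t) ^ (n+1) ≤ exp (-t) ^ 1 :=
      pow_le_pow_of_le_one (exp_nonneg _) (le_of_lt (exp_lt_one_of_pos ht)) (by omega)
    _ = exp (-t) := pow_one _
  have h2 := abs_g_le ht
  have h3 : (0:ℝ) ≤ exp (-t) ^ (n+1) := by positivity
  calc exp (-t) ^ (n+1) * |g t| ≤ exp (-t) ^ (n+1) * 1 := by nlinarith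
    _ ≤ exp (-1 * t) := by rw [mul_one]; simpa using h1

lemma integral_G_eq : ∫ t in Ioi (0:ℝ), G t = eulerMascheroniConstant := by
  set I : ℕ → ℝ := fun n => ∫ t in Ioi (0:ℝ), exp (-t) ^ (n+1) * g t with hI
  have h0 : Tendsto I atTop (𝓝 0) := by
    have key := MeasureTheory.tendsto_integral_of_dominated_convergence
      (μ := volume.restrict (Ioi (0:ℝ)))
      (F := fun (n : ℕ) (t : ℝ) => exp (-t) ^ (n+1) * g t)
      (f := fun _ => (0:ℝ)) (bound := fun t => exp (-1 * t))
      (fun n => (gmul_integrableOn n).aestronglyMeasurable)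
      (exp_neg_integrableOn_Ioi 0 one_pos) ?_ ?_
    · simpa using key
    · intro n
      rw [ae_restrict_iff' measurableSet_Ioi]
      filter_upwards with t ht
      simp only [Set.mem_Ioi] at ht
      rw [Real.norm_eq_abs, abs_mul, abs_pow, abs_of_pos (exp_pos _)]
      have h1 : exp (-t) ^ (n+1) ≤ exp (-t) := by
        calc exp (-t) ^ (n+1) ≤ exp (-t) ^ 1 :=
          pow_le_pow_of_le_one (exp_nonneg _) (le_of_lt (exp_lt_one_of_pos ht)) (by omega)
        _ = exp (-t) := pow_one _
      have h2 := abs_g_le ht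
      have h3 : (0:ℝ) ≤ exp (-t) ^ (n+1) := by positivity
      calc exp (-t) ^ (n+1) * |g t| ≤ exp (-t) ^ (n+1) * 1 := by nlinarith
        _ ≤ exp (-1 * t) := by rw [mul_one]; simpa using h1
    · rw [ae_restrict_iff' measurableSet_Ioi]
      filter_upwards with t ht
      simp only [Set.mem_Ioi] at ht
      have hgeo : Tendsto (fun n : ℕ => exp (-t) ^ (n+1)) atTop (𝓝 0) :=
        (tendsto_pow_atTop_nhds_zero_of_lt_one (exp_nonneg _)
          (exp_lt_one_of_pos ht)).comp (tendsto_add_atTop_nat 1)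
      apply squeeze_zero_norm _ (by simpa using hgeo.mul_const 1)
      intro n
      rw [Real.norm_eq_abs, abs_mul, abs_pow, abs_of_pos (exp_pos _)]
      have h2 := abs_g_le ht
      have h3 : (0:ℝ) ≤ exp (-t) ^ (n+1) := by positivity
      nlinarith
  have hEq : ∀ n : ℕ, I n = (∫ t in Ioi (0:ℝ), G t) - ((harmonic (n+1) : ℝ) - log ((n:ℝ)+1)) := by
    intro n
    have key : ∫ t in Ioi (0:ℝ), (G t - exp (-t) ^ (n+1) * g t) =
        (harmonic (n+1) : ℝ) - log ((n:ℝ)+1) := by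
      rw [MeasureTheory.setIntegral_congr_fun measurableSet_Ioi
        (fun t (ht : t ∈ Ioi (0:ℝ)) => geom_identity n ht)]
      rw [MeasureTheory.integral_sub
        (integrable_finset_sum _ (fun k _ => exp_pow_integrableOn k))
        (frullani_integrand_integrable (a := (n:ℝ)+1) (by push_cast; linarith [Nat.cast_nonneg (α := ℝ) n]))]
      rw [MeasureTheory.integral_finset_sum _ (fun k _ => exp_pow_integrableOn k)]
      have hfr : ∫ t in Ioi (0:ℝ), (exp (-t) - exp (-(((n:ℝ)+1) * t))) / t = log ((n:ℝ)+1) :=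
        frullani (a := (n:ℝ)+1) (by linarith [Nat.cast_nonneg (α := ℝ) n])
      rw [hfr, harmonic_cast]
      congr 1
      refine Finset.sum_congr rfl (fun k _ => ?_)
      exact integral_exp_pow k
    rw [MeasureTheory.integral_sub G_integrableOn (gmul_integrableOn n)] at key
    rw [hI]
    linarith
  have h2 : Tendsto (fun n : ℕ => (harmonic (n+1) : ℝ) - log ((n:ℝ)+1)) atTop
      (𝓝 eulerMascheroniConstant) := by
    have := Real.tendsto_harmonic_sub_log.comp (tendsto_add_atTop_nat 1)
    apply this.congr
    intro n
    simp only [Function.comp_apply]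
    push_cast
    ring_nf
  have h3 : Tendsto I atTop (𝓝 ((∫ t in Ioi (0:ℝ), G t) - eulerMascheroniConstant)) := by
    have := (tendsto_const_nhds (x := ∫ t in Ioi (0:ℝ), G t) (f := atTop (α := ℕ))).sub h2
    apply this.congr
    intro n
    exact (hEq n).symm
  have := tendsto_nhds_unique h0 h3
  linarith
/-- the summand identity -/
lemma binom_identity (m : ℕ) (hm : 1 ≤ m) (t : ℝ) :
    ∑ k ∈ range (m+1), (m.choose k : ℝ) * (-1) ^ (k+1) * (exp (-t) - exp (-(((k:ℝ)+1) * t)))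
      = exp (-t) * (1 - exp (-t)) ^ m := by
  have halt : ∑ k ∈ range (m+1), (m.choose k : ℝ) * (-1) ^ k = 0 := by
    have := Int.alternating_sum_range_choose_of_ne (n := m) (by omega)
    have h2 : ((∑ i ∈ range (m+1), ((-1) ^ i * m.choose i : ℤ) : ℤ) : ℝ) = 0 := by
      rw [this]; norm_num
    push_cast at h2
    rw [← h2]
    refine Finset.sum_congr rfl (fun k _ => by ring)
  have hbin : ∑ k ∈ range (m+1), (m.choose k : ℝ) * (-1) ^ k * exp (-t) ^ k
      = (1 - exp (-t)) ^ m := by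
    have := add_pow (-exp (-t)) 1 m
    simp only [one_pow, mul_one] at this
    have h2 : -exp (-t) + 1 = 1 - exp (-t) := by ring
    rw [h2] at this
    rw [this]
    refine Finset.sum_congr rfl (fun k _ => ?_)
    rw [neg_pow]
    ring
  have hsplit : ∀ k : ℕ, exp (-(((k:ℝ)+1) * t)) = exp (-t) * exp (-t) ^ k := by
    intro k
    rw [← Real.exp_nat_mul, ← exp_add]
    ring_nf
  calc ∑ k ∈ range (m+1), (m.choose k : ℝ) * (-1) ^ (k+1) * (exp (-t) - exp (-(((k:ℝ)+1) * t)))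
      = ∑ k ∈ range (m+1), ((-(exp (-t))) * ((m.choose k : ℝ) * (-1) ^ k)
          + exp (-t) * ((m.choose k : ℝ) * (-1) ^ k * exp (-t) ^ k)) := by
        refine Finset.sum_congr rfl (fun k _ => ?_)
        rw [hsplit k]
        ring
    _ = (-(exp (-t))) * (∑ k ∈ range (m+1), (m.choose k : ℝ) * (-1) ^ k)
          + exp (-t) * (∑ k ∈ range (m+1), (m.choose k : ℝ) * (-1) ^ k * exp (-t) ^ k) := by
        rw [Finset.sum_add_distrib, Finset.mul_sum, Finset.mul_sum]
    _ = exp (-t) * (1 - exp (-t)) ^ m := by rw [halt, hbin]; ring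

lemma term_integral (m : ℕ) (hm : 1 ≤ m) :
    ∫ t in Ioi (0:ℝ), exp (-t) * (1 - exp (-t)) ^ m / t
      = ∑ k ∈ range (m+1), (m.choose k : ℝ) * (-1) ^ (k+1) * log ((k:ℝ)+1) := by
  have hpt : ∀ t ∈ Ioi (0:ℝ), exp (-t) * (1 - exp (-t)) ^ m / t
      = ∑ k ∈ range (m+1), (m.choose k : ℝ) * (-1) ^ (k+1)
          * ((exp (-t) - exp (-(((k:ℝ)+1) * t))) / t) := by
    intro t ht
    rw [← binom_identity m hm t, Finset.sum_div]
    exact Finset.sum_congr rfl (fun k _ => by rw [mul_div_assoc])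
  rw [MeasureTheory.setIntegral_congr_fun measurableSet_Ioi hpt]
  rw [MeasureTheory.integral_finset_sum (f := fun (k : ℕ) (x : ℝ) => (m.choose k : ℝ) * (-1) ^ (k+1)
      * ((exp (-x) - exp (-(((k:ℝ)+1) * x))) / x)) _ (fun k _ =>
    ((frullani_integrand_integrable (a := (k:ℝ)+1)
      (by linarith [Nat.cast_nonneg (α := ℝ) k])).const_mul _))]
  refine Finset.sum_congr rfl (fun k _ => ?_)
  rw [MeasureTheory.integral_const_mul]
  congr 1
  exact frullani (by linarith [Nat.cast_nonneg (α := ℝ) k])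

/-- pointwise HasSum -/
lemma pointwise_hasSum {t : ℝ} (ht : 0 < t) :
    HasSum (fun n : ℕ => (1 / ((n:ℝ)+2)) * (exp (-t) * (1 - exp (-t)) ^ (n+1) / t)) (G t) := by
  set u : ℝ := 1 - exp (-t) with hu
  have he1 : exp (-t) < 1 := exp_lt_one_of_pos ht
  have hu0 : 0 < u := by simp [hu]; linarith
  have hu1 : u < 1 := by simp [hu]; linarith [exp_pos (-t)]
  have habs : |u| < 1 := by rw [abs_of_pos hu0]; exact hu1
  have h := Real.hasSum_pow_div_log_of_abs_lt_one habs
  have hlog : -log (1 - u) = t := by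
    simp [hu, Real.log_exp]
  rw [hlog] at h
  have hshift : HasSum (fun n : ℕ => u ^ (n+2) / ((n:ℝ)+2)) (t - u) := by
    have h2 : t - u + ∑ i ∈ range 1, u ^ (i+1) / ((i:ℝ)+1) = t := by simp
    have h3 := (hasSum_nat_add_iff (f := fun n : ℕ => u ^ (n+1) / ((n:ℝ)+1)) 1
      (g := t - u)).mpr (by rw [h2]; exact h)
    have h4 : (fun n : ℕ => u ^ (n+2) / ((n:ℝ)+2))
        = fun n : ℕ => u ^ (n+1+1) / (((n+1:ℕ):ℝ)+1) := by
      funext n; push_cast; ring_nf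
    rw [h4]
    exact h3
  have hc := hshift.mul_left (exp (-t) / (u * t))
  have hfun : (fun n : ℕ => exp (-t) / (u * t) * (u ^ (n+2) / ((n:ℝ)+2)))
      = fun n : ℕ => (1 / ((n:ℝ)+2)) * (exp (-t) * (1 - exp (-t)) ^ (n+1) / t) := by
    funext n
    rw [← hu]
    have : u ^ (n+2) = u * u ^ (n+1) := by ring
    rw [this]
    field_simp
  have hval : exp (-t) / (u * t) * (t - u) = G t := by
    rw [G, ← hu]
    field_simp
  rw [hfun, hval] at hc
  exact hc

noncomputable def F : ℕ → ℝ → ℝ :=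
  fun n t => (1 / ((n:ℝ)+2)) * (exp (-t) * (1 - exp (-t)) ^ (n+1) / t)

lemma F_nonneg {n : ℕ} {t : ℝ} (ht : 0 < t) : 0 ≤ F n t := by
  have h1 := exp_lt_one_of_pos ht
  have h2 : (0:ℝ) ≤ 1 - exp (-t) := by linarith
  have := exp_pos (-t)
  unfold F
  positivity

lemma F_meas (n : ℕ) : AEStronglyMeasurable (F n) (volume.restrict (Ioi 0)) := by
  apply ContinuousOn.aestronglyMeasurable _ measurableSet_Ioi
  apply ContinuousOn.mul continuousOn_const
  exact ContinuousOn.div (by fun_prop) continuousOn_id (fun t ht => ne_of_gt ht)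

lemma main_hasSum :
    HasSum (fun n : ℕ => ∫ t in Ioi (0:ℝ), F n t) Real.eulerMascheroniConstant := by
  rw [← integral_G_eq]
  apply MeasureTheory.hasSum_integral_of_dominated_convergence (bound := F) F_meas
  · intro n
    rw [ae_restrict_iff' measurableSet_Ioi]
    filter_upwards with t ht
    simp only [Set.mem_Ioi] at ht
    rw [Real.norm_eq_abs, abs_of_nonneg (F_nonneg ht)]
  · rw [ae_restrict_iff' measurableSet_Ioi]
    filter_upwards with t ht
    simp only [Set.mem_Ioi] at ht
    exact (pointwise_hasSum ht).summable
  · apply G_integrableOn.congr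
    rw [EventuallyEq, ae_restrict_iff' measurableSet_Ioi]
    filter_upwards with t ht
    simp only [Set.mem_Ioi] at ht
    exact ((pointwise_hasSum ht).tsum_eq).symm
  · rw [ae_restrict_iff' measurableSet_Ioi]
    filter_upwards with t ht
    simp only [Set.mem_Ioi] at ht
    exact pointwise_hasSum ht

lemma integral_F (n : ℕ) :
    ∫ t in Ioi (0:ℝ), F n t
      = (1 / ((n:ℝ)+2)) * ∑ k ∈ range (n+2), ((n+1).choose k : ℝ) * (-1) ^ (k+1) * log ((k:ℝ)+1) := by
  unfold F
  rw [MeasureTheory.integral_const_mul]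
  congr 1
  exact term_integral (n+1) (by omega)


end SerGamma

open SerGamma in
theorem stmt8 :
    HasSum (fun j : ℕ =>
        (1 / (j + 1 : ℝ)) *
          ∑ i ∈ Icc 1 (j + 1), (Nat.choose j (i - 1) : ℝ) * (-1) ^ i * Real.log i)
      Real.eulerMascheroniConstant := by
  set a : ℕ → ℝ := fun j =>
    (1 / (j + 1 : ℝ)) *
      ∑ i ∈ Icc 1 (j + 1), (Nat.choose j (i - 1) : ℝ) * (-1) ^ i * Real.log i with ha
  have key : ∀ n : ℕ, ∫ t in Ioi (0:ℝ), F n t = a (n+1) := by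
    intro n
    rw [integral_F, ha]
    simp only []
    have hsum : ∑ i ∈ Icc 1 (n+1+1), (Nat.choose (n+1) (i - 1) : ℝ) * (-1) ^ i * Real.log i
        = ∑ k ∈ range (n+2), ((n+1).choose k : ℝ) * (-1) ^ (k+1) * log ((k:ℝ)+1) := by
      rw [← Finset.Ico_add_one_right_eq_Icc, Finset.sum_Ico_eq_sum_range]
      have h3 : n + 1 + 1 + 1 - 1 = n + 2 := by omega
      rw [h3]
      refine Finset.sum_congr rfl (fun k _ => ?_)
      have h4 : 1 + k - 1 = k := by omega
      rw [h4]
      have h5 : ((1 + k : ℕ) : ℝ) = (k:ℝ) + 1 := by push_cast; ring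
      rw [h5]
      ring
    rw [← hsum]
    congr 2
    push_cast
    ring
  have h := main_hasSum
  have h2 : HasSum (fun n : ℕ => a (n+1)) Real.eulerMascheroniConstant := by
    have : (fun n : ℕ => ∫ t in Ioi (0:ℝ), F n t) = fun n : ℕ => a (n+1) := funext key
    rwa [this] at h
  have h3 := (hasSum_nat_add_iff (f := a) 1).mp h2
  have h4 : a 0 = 0 := by
    rw [ha]
    norm_num
  simpa [h4] using h3
end

section
/- For each positive integer m and each positive integer j, the sum over k from 1 to m of binom(m,k) * (-1)^(k+1) / k * ln(1 + k/j) equals 1/j minus the integral from 0 to 1/j of g_m(1/u) du, where g_m(z) = m!/((z+1)(z+2)...(z+m)). -/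
open Finset Real

lemma pf_identity (m : ℕ) : ∀ z : ℝ, (∀ k ∈ Finset.range (m + 1), z + (k : ℝ) ≠ 0) →
    ∑ k ∈ Finset.range (m + 1), (m.choose k : ℝ) * (-1) ^ k / (z + k) =
      (m.factorial : ℝ) / ∏ k ∈ Finset.range (m + 1), (z + k) := by
  induction m with
  | zero =>
    intro z hz
    simp
  | succ m ih =>
    intro z hz
    have hz0 : ∀ k ∈ Finset.range (m + 1), z + (k : ℝ) ≠ 0 := by
      intro k hk
      exact hz k (Finset.mem_range.2 (by simp at hk; omega))
    have hz1 : ∀ k ∈ Finset.range (m + 1), (z + 1) + (k : ℝ) ≠ 0 := by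
      intro k hk
      have := hz (k + 1) (Finset.mem_range.2 (by simp at hk; omega))
      push_cast at this
      intro h; apply this; linarith
    -- split the sum
    have split : ∑ k ∈ Finset.range (m + 2), ((m + 1).choose k : ℝ) * (-1) ^ k / (z + k)
        = (∑ k ∈ Finset.range (m + 1), (m.choose k : ℝ) * (-1) ^ k / (z + k))
          - ∑ k ∈ Finset.range (m + 1), (m.choose k : ℝ) * (-1) ^ k / ((z + 1) + k) := by
      rw [Finset.sum_range_succ' (fun k => ((m + 1).choose k : ℝ) * (-1) ^ k / (z + k)) (m + 1)]
      have hsplit : ∀ i ∈ Finset.range (m + 1),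
          ((m + 1).choose (i + 1) : ℝ) * (-1) ^ (i + 1) / (z + (i + 1 : ℕ))
          = (m.choose (i + 1) : ℝ) * (-1) ^ (i + 1) / (z + ((i + 1 : ℕ) : ℝ))
            - (m.choose i : ℝ) * (-1) ^ i / ((z + 1) + i) := by
        intro i _
        have hp : ((m + 1).choose (i + 1) : ℝ) = m.choose i + m.choose (i + 1) := by
          exact_mod_cast congrArg (Nat.cast : ℕ → ℝ) (Nat.choose_succ_succ m i)
        have hne : z + ((i + 1 : ℕ) : ℝ) = (z + 1) + i := by push_cast; ring
        rw [hp, hne, pow_succ]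
        ring
      rw [Finset.sum_congr rfl hsplit, Finset.sum_sub_distrib]
      have htail : (∑ i ∈ Finset.range (m + 1),
            (m.choose (i + 1) : ℝ) * (-1) ^ (i + 1) / (z + ((i + 1 : ℕ) : ℝ)))
            + ((m + 1).choose 0 : ℝ) * (-1) ^ (0 : ℕ) / (z + (0 : ℕ))
          = ∑ k ∈ Finset.range (m + 1), (m.choose k : ℝ) * (-1) ^ k / (z + k) := by
        rw [show (((m + 1).choose 0 : ℝ) * (-1) ^ (0 : ℕ) / (z + (0 : ℕ)))
              = (m.choose 0 : ℝ) * (-1) ^ (0 : ℕ) / (z + ((0 : ℕ) : ℝ)) by simp]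
        rw [← Finset.sum_range_succ' (fun k => (m.choose k : ℝ) * (-1) ^ k / (z + k)) (m + 1)]
        rw [Finset.sum_range_succ]
        simp [Nat.choose_succ_self]
      linarith [htail]
    rw [split, ih z hz0, ih (z + 1) hz1]
    -- now the algebraic identity
    set A := ∏ k ∈ Finset.range (m + 1), (z + (k : ℝ)) with hA
    set B := ∏ k ∈ Finset.range (m + 1), ((z + 1) + (k : ℝ)) with hB
    have hCA : ∏ k ∈ Finset.range (m + 2), (z + (k : ℝ)) = A * (z + ((m + 1 : ℕ) : ℝ)) := by
      rw [Finset.prod_range_succ]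
    have hCB : ∏ k ∈ Finset.range (m + 2), (z + (k : ℝ)) = B * z := by
      rw [Finset.prod_range_succ' (fun k => (z + (k : ℝ))) (m + 1)]
      simp only [Nat.cast_zero, add_zero]
      congr 1
      apply Finset.prod_congr rfl
      intro i _
      push_cast
      ring
    have hAne : A ≠ 0 := Finset.prod_ne_zero_iff.2 hz0
    have hBne : B ≠ 0 := Finset.prod_ne_zero_iff.2 hz1
    have hzne : z ≠ 0 := by
      have := hz 0 (Finset.mem_range.2 (by omega)); simpa using this
    have htop : z + ((m + 1 : ℕ) : ℝ) ≠ 0 := hz (m + 1) (Finset.mem_range.2 (by omega))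
    have e1 : (m.factorial : ℝ) / A
        = (m.factorial : ℝ) * (z + ((m + 1 : ℕ) : ℝ)) / (A * (z + ((m + 1 : ℕ) : ℝ))) := by
      rw [mul_div_mul_right _ _ htop]
    have e2 : (m.factorial : ℝ) / B = (m.factorial : ℝ) * z / (B * z) := by
      rw [mul_div_mul_right _ _ hzne]
    rw [e1, e2, ← hCA, ← hCB, div_sub_div_same]
    congr 1
    push_cast [Nat.factorial_succ]
    ring

lemma pointwise_eq (m : ℕ) (u : ℝ) (hu : 0 < u) :
    (m.factorial : ℝ) / ∏ i ∈ Finset.Icc 1 m, (1 / u + (i : ℝ))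
      = ∑ k ∈ Finset.range (m + 1), (m.choose k : ℝ) * (-1) ^ k / (1 + k * u) := by
  have hune : u ≠ 0 := ne_of_gt hu
  have hz : ∀ k ∈ Finset.range (m + 1), (1 / u) + (k : ℝ) ≠ 0 := by
    intro k _
    positivity
  have key := pf_identity m (1 / u) hz
  have hterm : ∀ k ∈ Finset.range (m + 1),
      (m.choose k : ℝ) * (-1) ^ k / (1 + k * u)
        = (1 / u) * ((m.choose k : ℝ) * (-1) ^ k / (1 / u + k)) := by
    intro k hk
    have h1 : 1 / u + (k : ℝ) ≠ 0 := hz k hk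
    have h2 : (1 : ℝ) + k * u ≠ 0 := by positivity
    field_simp
  rw [Finset.sum_congr rfl hterm, ← Finset.mul_sum, key]
  have hP : ∏ k ∈ Finset.range (m + 1), (1 / u + (k : ℝ))
      = (1 / u) * ∏ i ∈ Finset.Icc 1 m, (1 / u + (i : ℝ)) := by
    rw [Finset.prod_range_succ' (fun k => (1 / u + (k : ℝ))) m]
    simp only [Nat.cast_zero, add_zero]
    rw [mul_comm]
    congr 1
    rw [show Finset.Icc 1 m = Finset.Ico 1 (m + 1) by rfl,
      Finset.prod_Ico_eq_prod_range]
    apply Finset.prod_congr rfl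
    intro i _
    push_cast
    ring
  rw [hP]
  have hPne : ∏ i ∈ Finset.Icc 1 m, (1 / u + (i : ℝ)) ≠ 0 := by
    apply Finset.prod_ne_zero_iff.2
    intro i _
    positivity
  field_simp

theorem stmt13 (m j : ℕ) (hm : 0 < m) (hj : 0 < j) :
    ∑ k ∈ Icc 1 m, (m.choose k : ℝ) * (-1) ^ (k + 1) / k * Real.log (1 + (k : ℝ) / j) =
      1 / j - ∫ u in (0 : ℝ)..(1 / j),
        (m.factorial : ℝ) / ∏ i ∈ Icc 1 m, (1 / u + i) := by
  have hjpos : (0 : ℝ) < 1 / j := by positivity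
  set c : ℝ := 1 / j with hc
  set h : ℝ → ℝ := fun u => ∑ k ∈ Finset.range (m + 1), (m.choose k : ℝ) * (-1) ^ k / (1 + k * u)
    with hh
  -- replace the integrand a.e.
  have hcongr : ∫ u in (0 : ℝ)..c, (m.factorial : ℝ) / ∏ i ∈ Finset.Icc 1 m, (1 / u + (i : ℝ))
      = ∫ u in (0 : ℝ)..c, h u := by
    apply intervalIntegral.integral_congr_ae
    apply MeasureTheory.ae_of_all
    intro u hu
    rw [Set.mem_uIoc] at hu
    have hupos : 0 < u := by
      rcases hu with h1 | h1
      · exact h1.1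
      · linarith [h1.1, h1.2]
    exact pointwise_eq m u hupos
  -- antiderivative
  set F : ℝ → ℝ := fun u => u - ∑ k ∈ Finset.Icc 1 m,
      (m.choose k : ℝ) * (-1) ^ (k + 1) / k * Real.log (1 + k * u) with hF
  have hderiv : ∀ u ∈ Set.uIcc (0 : ℝ) c, HasDerivAt F (h u) u := by
    intro u hu
    rw [Set.uIcc_of_le (le_of_lt hjpos)] at hu
    have hu0 : 0 ≤ u := hu.1
    have hne : ∀ k : ℕ, (1 : ℝ) + k * u ≠ 0 := by
      intro k
      positivity
    have hsum : HasDerivAt (fun u : ℝ => ∑ k ∈ Finset.Icc 1 m,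
        (m.choose k : ℝ) * (-1) ^ (k + 1) / k * Real.log (1 + k * u))
        (∑ k ∈ Finset.Icc 1 m, (m.choose k : ℝ) * (-1) ^ (k + 1) / (1 + k * u)) u := by
      apply HasDerivAt.fun_sum
      intro k hk
      have hk1 : 1 ≤ k := (Finset.mem_Icc.1 hk).1
      have hkne : (k : ℝ) ≠ 0 := Nat.cast_ne_zero.2 (by omega)
      have hlog : HasDerivAt (fun u : ℝ => Real.log (1 + k * u)) (k / (1 + k * u)) u := by
        have haff : HasDerivAt (fun u : ℝ => 1 + (k : ℝ) * u) (k : ℝ) u := by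
          simpa using (hasDerivAt_id u).const_mul (k : ℝ) |>.const_add 1
        simpa using haff.log (hne k)
      have := hlog.const_mul ((m.choose k : ℝ) * (-1) ^ (k + 1) / k)
      refine this.congr_deriv ?_
      rw [div_mul_div_comm, mul_comm (k : ℝ) (1 + k * u), mul_div_mul_right _ _ hkne]
    have : HasDerivAt F (1 - ∑ k ∈ Finset.Icc 1 m,
        (m.choose k : ℝ) * (-1) ^ (k + 1) / (1 + k * u)) u := (hasDerivAt_id u).sub hsum
    convert this using 1
    rw [hh]
    simp only
    rw [Finset.sum_range_succ' (fun k => (m.choose k : ℝ) * (-1) ^ k / (1 + k * u)) m]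
    rw [show Finset.Icc 1 m = Finset.Ico 1 (m + 1) by rfl, Finset.sum_Ico_eq_sum_range]
    simp only [Nat.add_sub_cancel, Nat.cast_zero, zero_mul, add_zero, Nat.choose_zero_right,
      Nat.cast_one, pow_zero]
    have : ∀ i ∈ Finset.range m, (m.choose (i + 1) : ℝ) * (-1) ^ (i + 1) / (1 + (i + 1 : ℕ) * u)
        = -((m.choose (1 + i) : ℝ) * (-1) ^ (1 + i + 1) / (1 + (1 + i : ℕ) * u)) := by
      intro i _
      rw [show 1 + i = i + 1 by ring]
      rw [pow_succ]
      ring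
    rw [Finset.sum_congr rfl this, Finset.sum_neg_distrib]
    ring
  have hint : IntervalIntegrable h MeasureTheory.volume 0 c := by
    apply ContinuousOn.intervalIntegrable
    apply continuousOn_finset_sum
    intro k _
    apply ContinuousOn.div continuousOn_const
    · exact (continuous_const.add (continuous_const.mul continuous_id)).continuousOn
    · intro u hu
      rw [Set.uIcc_of_le (le_of_lt hjpos)] at hu
      have : (0 : ℝ) ≤ u := hu.1
      positivity
  have hFTC := intervalIntegral.integral_eq_sub_of_hasDerivAt hderiv hint
  rw [hcongr, hFTC]
  have hF0 : F 0 = 0 := by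
    simp [hF]
  have hFc : F c = c - ∑ k ∈ Finset.Icc 1 m,
      (m.choose k : ℝ) * (-1) ^ (k + 1) / k * Real.log (1 + (k : ℝ) / j) := by
    rw [hF]
    simp only [sub_right_inj]
    apply Finset.sum_congr rfl
    intro k _
    congr 2
    rw [hc]
    ring
  rw [hF0, hFc]
  ring
end

section
/- For each positive integer m ≥ 2 and all real u with 0 < u ≤ 1, one has 0 < g_m(1/u) ≤ 2·g_1(1/u)/(m+1), where g_m(z) = m!/((z+1)(z+2)...(z+m)). -/
open Finset

noncomputable def g (m : ℕ) (z : ℝ) : ℝ := (m.factorial : ℝ) / ∏ i ∈ Icc 1 m, (z + i)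

lemma prodPos (m : ℕ) (z : ℝ) (hz : 0 < z) : 0 < ∏ i ∈ Icc 1 m, (z + (i : ℝ)) :=
  Finset.prod_pos fun i _ => by positivity

lemma gPos (m : ℕ) (z : ℝ) (hz : 0 < z) : 0 < g m z :=
  div_pos (by positivity) (prodPos m z hz)

lemma gSucc (n : ℕ) (z : ℝ) (hz : 0 < z) :
    g (n + 1) z = g n z * ((n + 1) / (z + (n + 1))) := by
  have hP := prodPos n z hz
  have hz' : (0:ℝ) < z + (n + 1) := by positivity
  unfold g
  rw [Finset.prod_Icc_succ_top (by omega : 1 ≤ n + 1)]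
  push_cast [Nat.factorial_succ]
  field_simp

lemma gKey (m : ℕ) (hm : 1 ≤ m) (z : ℝ) (hz : 1 ≤ z) :
    g m z ≤ 2 * g 1 z / (m + 1) := by
  have hz0 : (0:ℝ) < z := lt_of_lt_of_le one_pos hz
  induction m with
  | zero => omega
  | succ n ih =>
    rcases Nat.lt_or_ge n 1 with h | h
    · interval_cases n
      norm_num
    · have ih' := ih h
      rw [gSucc n z hz0]
      have hfac : (n + 1 : ℝ) / (z + (n + 1)) ≤ (n + 1) / (n + 2) := by
        apply div_le_div_of_nonneg_left (by positivity) (by positivity)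
        linarith
      have hg := gPos n z hz0
      have h1 := gPos 1 z hz0
      calc g n z * ((n + 1) / (z + (n + 1)))
          ≤ (2 * g 1 z / (n + 1)) * ((n + 1) / (n + 2)) := by
            apply mul_le_mul ih' hfac (by positivity) (by positivity)
        _ = 2 * g 1 z / ((↑(n + 1) : ℝ) + 1) := by
            push_cast
            field_simp
            ring

theorem stmt14 (m : ℕ) (hm : 2 ≤ m) (u : ℝ) (hu : 0 < u) (hu1 : u ≤ 1) :
    0 < g m (1 / u) ∧ g m (1 / u) ≤ 2 * g 1 (1 / u) / (m + 1) := by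
  have hz : (1:ℝ) ≤ 1 / u := (le_div_iff₀ hu).mpr (by linarith)
  exact ⟨gPos m _ (lt_of_lt_of_le one_pos hz), gKey m (by omega) _ hz⟩
end

section
/- The following infinite product identity holds: 1 = (2/1)·(2/3)·(8/9)·(128/135)···, where the m-th factor (m ≥ 0) is the product over k from 0 to m of (k+2)^(binom(m,k)·(-1)^k). -/
open Filter Finset

lemma Ppos (n : ℕ) (t : ℝ) (ht : 0 ≤ t) :
    0 < ∏ i ∈ range n, (1 + ((i : ℝ) + 1) * t) :=
  Finset.prod_pos fun i _ => by positivity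

lemma G_eq (n : ℕ) : ∀ t : ℝ, 0 ≤ t →
    ∑ j ∈ range (n + 1), ((-1 : ℝ) ^ j * (n.choose j)) / (1 + (j : ℝ) * t)
      = (n.factorial : ℝ) * t ^ n / ∏ i ∈ range n, (1 + ((i : ℝ) + 1) * t) := by
  induction n with
  | zero => intro t ht; simp
  | succ n ih =>
    intro t ht
    have h1t : (0 : ℝ) < 1 + t := by linarith
    set s : ℝ := t / (1 + t) with hs
    have hs0 : 0 ≤ s := div_nonneg ht h1t.le
    have hPt : 0 < ∏ i ∈ range n, (1 + ((i : ℝ) + 1) * t) := Ppos n t ht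
    have hPs : 0 < ∏ i ∈ range n, (1 + ((i : ℝ) + 1) * s) := Ppos n s hs0
    have hden : ∀ j : ℕ, (0:ℝ) < 1 + (j : ℝ) * t := fun j => by positivity
    have hfac : ∀ i : ℕ, 1 + ((i : ℝ) + 1) * t = (1 + t) * (1 + (i : ℝ) * s) := by
      intro i; rw [hs]; field_simp; ring
    have e1 : ∀ i : ℕ, (1 + ((i:ℝ)+1) * s) * (1+t) = 1 + ((i:ℝ)+1+1) * t := by
      intro i; rw [hs]; field_simp; ring
    have hsn : s ^ n = t ^ n / (1+t)^n := by rw [hs, div_pow]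
    clear_value s
    rw [Finset.sum_range_succ']
    have hsplit : ∀ i ∈ range (n+1),
        ((-1 : ℝ) ^ (i+1) * ((n+1).choose (i+1))) / (1 + ((i:ℕ)+1 : ℕ) * t)
        = ((-1 : ℝ) ^ (i+1) * (n.choose (i+1))) / (1 + ((i:ℝ)+1) * t)
          + (-((-1 : ℝ) ^ i * (n.choose i))) / ((1 + t) * (1 + (i : ℝ) * s)) := by
      intro i _
      rw [Nat.choose_succ_succ]
      push_cast
      rw [← hfac i]
      push_cast
      have := hden (i+1)
      push_cast at this
      field_simp
      ring
    rw [Finset.sum_congr rfl hsplit, Finset.sum_add_distrib]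
    -- first sum equals G_n(t) - 1
    have hsum1 : (∑ i ∈ range (n+1),
        ((-1 : ℝ) ^ (i+1) * ((n.choose (i+1)):ℝ)) / (1 + ((i:ℝ)+1) * t))
        = (n.factorial : ℝ) * t ^ n / (∏ i ∈ range n, (1 + ((i : ℝ) + 1) * t)) - 1 := by
      have e := Finset.sum_range_succ' (fun j => ((-1:ℝ)^j * ((n.choose j):ℝ)) / (1 + (j:ℝ) * t)) (n+1)
      rw [Finset.sum_range_succ _ (n+1), ih t ht] at e
      beta_reduce at e
      norm_num [Nat.choose_succ_self] at e
      linarith [e]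
    rw [hsum1]
    -- second sum
    have hP : (∏ i ∈ range n, (1 + ((i : ℝ) + 1) * s)) * (1+t)^(n+1)
        = ∏ i ∈ range (n+1), (1 + ((i : ℝ) + 1) * t) := by
      calc (∏ i ∈ range n, (1 + ((i:ℝ)+1)*s)) * (1+t)^(n+1)
          = (∏ i ∈ range n, ((1 + ((i:ℝ)+1)*s) * (1+t))) * (1+t) := by
            rw [Finset.prod_mul_distrib, Finset.prod_const, Finset.card_range, pow_succ]; ring
        _ = (∏ i ∈ range n, (1 + ((i:ℝ)+1+1)*t)) * (1+t) := by
            rw [Finset.prod_congr rfl fun i _ => e1 i]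
        _ = ∏ i ∈ range (n+1), (1 + ((i : ℝ) + 1) * t) := by
            rw [Finset.prod_range_succ' (fun i => 1 + ((i : ℝ) + 1) * t) n]
            congr 1
            · exact Finset.prod_congr rfl fun i _ => by push_cast; ring
            · norm_num
    have hsum2 : (∑ i ∈ range (n+1), (-((-1 : ℝ) ^ i * ((n.choose i):ℝ))) / ((1 + t) * (1 + (i : ℝ) * s)))
        = -((n.factorial : ℝ) * t ^ n / ∏ i ∈ range (n+1), (1 + ((i : ℝ) + 1) * t)) := by
      have h2a : (∑ i ∈ range (n+1), (-((-1 : ℝ) ^ i * ((n.choose i):ℝ))) / ((1 + t) * (1 + (i : ℝ) * s)))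
          = -(1/(1+t)) * ∑ i ∈ range (n+1), ((-1 : ℝ) ^ i * ((n.choose i):ℝ)) / (1 + (i : ℝ) * s) := by
        rw [Finset.mul_sum]
        refine Finset.sum_congr rfl fun i _ => ?_
        have hi : (0:ℝ) < 1 + (i:ℝ) * s := by positivity
        field_simp
      rw [h2a, ih s hs0, ← hP, hsn]
      have hPs' : (∏ i ∈ range n, (1 + ((i:ℝ) + 1) * s)) ≠ 0 := hPs.ne'
      field_simp
      ring
    have hPt1 : (∏ i ∈ range (n+1), (1 + ((i : ℝ) + 1) * t))
        = (∏ i ∈ range n, (1 + ((i : ℝ) + 1) * t)) * (1 + ((n:ℝ)+1) * t) := by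
      rw [Finset.prod_range_succ]
    have hlast : (0:ℝ) < 1 + ((n:ℝ)+1) * t := by positivity
    have hfact : ((n+1).factorial : ℝ) = ((n:ℝ)+1) * (n.factorial : ℝ) := by
      push_cast [Nat.factorial_succ]; ring
    rw [hsum2, hPt1, hfact]
    norm_num
    field_simp
    ring

lemma one_add_sum_le_prod (s : Finset ℕ) (a : ℕ → ℝ) (ha : ∀ i ∈ s, 0 ≤ a i) :
    1 + ∑ i ∈ s, a i ≤ ∏ i ∈ s, (1 + a i) := by
  classical
  revert ha
  induction s using Finset.cons_induction with
  | empty => intro _; simp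
  | cons j s hj ih =>
    intro ha
    rw [Finset.sum_cons, Finset.prod_cons]
    have h1 : 0 ≤ a j := ha j (Finset.mem_cons_self j s)
    have h2 : ∀ i ∈ s, 0 ≤ a i := fun i hi => ha i (Finset.mem_cons.2 (Or.inr hi))
    have ih' := ih h2
    have hsum : 0 ≤ ∑ i ∈ s, a i := Finset.sum_nonneg h2
    nlinarith

lemma prod_lower_s17 (M : ℕ) (t : ℝ) (ht : 0 < t) :
    (M.factorial : ℝ) * t ^ M * (∑ i ∈ range M, 1/((i:ℝ)+1))
      ≤ t * ∏ i ∈ range M, (1 + ((i:ℝ)+1) * t) := by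
  have hsplit : (∏ i ∈ range M, (1 + ((i:ℝ)+1)*t))
      = ((M.factorial : ℝ) * t ^ M) * ∏ i ∈ range M, (1 + 1/(((i:ℝ)+1)*t)) := by
    have e : ∀ i ∈ range M, (1 + ((i:ℝ)+1)*t) = (((i:ℝ)+1)*t) * (1 + 1/(((i:ℝ)+1)*t)) := by
      intro i _
      have hi : (0:ℝ) < ((i:ℝ)+1)*t := by positivity
      field_simp
      ring
    rw [Finset.prod_congr rfl e, Finset.prod_mul_distrib, Finset.prod_mul_distrib,
      Finset.prod_const, Finset.card_range]
    have : (∏ i ∈ range M, ((i:ℝ)+1)) = (M.factorial : ℝ) := by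
      exact_mod_cast Finset.prod_range_add_one_eq_factorial M
    rw [this]
  rw [hsplit]
  have h1 : (∑ i ∈ range M, 1/((i:ℝ)+1)) / t ≤ ∏ i ∈ range M, (1 + 1/(((i:ℝ)+1)*t)) := by
    have hb := one_add_sum_le_prod (range M) (fun i => 1/(((i:ℝ)+1)*t)) (fun i _ => by positivity)
    have e : ∑ i ∈ range M, 1/(((i:ℝ)+1)*t) = (∑ i ∈ range M, 1/((i:ℝ)+1))/t := by
      rw [Finset.sum_div]
      exact Finset.sum_congr rfl fun i _ => by rw [← div_div]
    rw [e] at hb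
    linarith
  calc (M.factorial : ℝ) * t ^ M * (∑ i ∈ range M, 1/((i:ℝ)+1))
      = (M.factorial : ℝ) * t ^ M * ((∑ i ∈ range M, 1/((i:ℝ)+1))/t) * t := by
        field_simp
    _ ≤ (M.factorial : ℝ) * t ^ M * (∏ i ∈ range M, (1 + 1/(((i:ℝ)+1)*t))) * t := by
        have hnn : (0:ℝ) ≤ (M.factorial : ℝ) * t ^ M := by positivity
        have := mul_le_mul_of_nonneg_left h1 hnn
        exact mul_le_mul_of_nonneg_right this ht.le
    _ = t * ((M.factorial : ℝ) * t ^ M * ∏ i ∈ range M, (1 + 1/(((i:ℝ)+1)*t))) := by ring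

lemma F_bound (M : ℕ) (hM : 1 ≤ M) (t : ℝ) (ht : t ∈ Set.Ioc (0:ℝ) 1) :
    ‖∑ j ∈ range (M+1), (-1:ℝ)^j * (M.choose j) * ((j:ℝ)/(1 + (j:ℝ)*t))‖
      ≤ (∑ i ∈ range M, 1/((i:ℝ)+1))⁻¹ := by
  obtain ⟨ht0, ht1⟩ := ht
  have hH : 0 < ∑ i ∈ range M, 1/((i:ℝ)+1) :=
    Finset.sum_pos (fun i _ => by positivity) (nonempty_range_iff.2 (by omega))
  have hterm : ∀ j ∈ range (M+1), (-1:ℝ)^j * (M.choose j) * ((j:ℝ)/(1 + (j:ℝ)*t))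
      = (1/t) * ((-1:ℝ)^j * (M.choose j)) - (1/t) * (((-1:ℝ)^j * (M.choose j))/(1 + (j:ℝ)*t)) := by
    intro j _
    have hj : (0:ℝ) < 1 + (j:ℝ)*t := by positivity
    field_simp
    ring
  rw [Finset.sum_congr rfl hterm, Finset.sum_sub_distrib, ← Finset.mul_sum, ← Finset.mul_sum]
  have hzero : ∑ j ∈ range (M+1), ((-1:ℝ)^j * ((M.choose j):ℝ)) = 0 := by
    have h := Int.alternating_sum_range_choose_of_ne (n := M) (by omega)
    have h2 := congrArg (fun z : ℤ => (z:ℝ)) h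
    push_cast at h2
    convert h2 using 2
  rw [hzero, mul_zero, zero_sub, G_eq M t ht0.le, norm_neg]
  have hP : 0 < ∏ i ∈ range M, (1 + ((i:ℝ)+1)*t) := Ppos M t ht0.le
  have hval : 0 ≤ 1/t * ((M.factorial:ℝ) * t^M / ∏ i ∈ range M, (1 + ((i:ℝ)+1)*t)) := by positivity
  rw [Real.norm_eq_abs, abs_of_nonneg hval]
  have key := prod_lower_s17 M t ht0
  rw [inv_eq_one_div, le_div_iff₀ hH]
  have e : 1/t * ((M.factorial:ℝ)*t^M / ∏ i ∈ range M, (1 + ((i:ℝ)+1)*t)) * (∑ i ∈ range M, 1/((i:ℝ)+1))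
      = ((M.factorial:ℝ)*t^M*(∑ i ∈ range M, 1/((i:ℝ)+1)))/(t * ∏ i ∈ range M, (1 + ((i:ℝ)+1)*t)) := by
    field_simp
  rw [e, div_le_one (by positivity)]
  exact key

lemma log_eq_integral (j : ℕ) :
    Real.log ((j:ℝ)+1) = ∫ t in (0:ℝ)..1, (j:ℝ)/(1 + (j:ℝ)*t) := by
  have hcont : ContinuousOn (fun t : ℝ => (j:ℝ)/(1 + (j:ℝ)*t)) (Set.uIcc 0 1) := by
    apply ContinuousOn.div continuousOn_const
    · exact (continuous_const.add (continuous_const.mul continuous_id)).continuousOn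
    · intro x hx
      rw [Set.uIcc_of_le (by norm_num : (0:ℝ) ≤ 1)] at hx
      have h0 : 0 ≤ x := hx.1
      positivity
  have hderiv : ∀ x ∈ Set.uIcc (0:ℝ) 1,
      HasDerivAt (fun u => Real.log (1 + (j:ℝ)*u)) ((j:ℝ)/(1 + (j:ℝ)*x)) x := by
    intro x hx
    rw [Set.uIcc_of_le (by norm_num : (0:ℝ) ≤ 1)] at hx
    have h0 : 0 ≤ x := hx.1
    have hpos : (0:ℝ) < 1 + (j:ℝ)*x := by positivity
    have h1 : HasDerivAt (fun u : ℝ => 1 + (j:ℝ)*u) (j:ℝ) x := by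
      simpa using ((hasDerivAt_id x).const_mul (j:ℝ)).const_add 1
    have h2 := (Real.hasDerivAt_log hpos.ne').comp x h1
    simpa [div_eq_mul_inv, mul_comm, Function.comp_def] using h2
  have h := intervalIntegral.integral_eq_sub_of_hasDerivAt hderiv hcont.intervalIntegrable
  rw [h]
  simp [add_comm]

lemma T_eq (M : ℕ) :
    ∑ j ∈ range (M+1), (-1:ℝ)^j * (M.choose j) * Real.log ((j:ℝ)+1)
      = ∫ t in (0:ℝ)..1, ∑ j ∈ range (M+1), (-1:ℝ)^j * (M.choose j) * ((j:ℝ)/(1 + (j:ℝ)*t)) := by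
  have hint : ∀ j ∈ range (M+1),
      IntervalIntegrable (fun t : ℝ => (-1:ℝ)^j * (M.choose j) * ((j:ℝ)/(1 + (j:ℝ)*t))) MeasureTheory.volume 0 1 := by
    intro j _
    apply ContinuousOn.intervalIntegrable
    apply ContinuousOn.mul continuousOn_const
    apply ContinuousOn.div continuousOn_const
    · exact (continuous_const.add (continuous_const.mul continuous_id)).continuousOn
    · intro x hx
      rw [Set.uIcc_of_le (by norm_num : (0:ℝ) ≤ 1)] at hx
      have h0 : 0 ≤ x := hx.1
      positivity
  rw [intervalIntegral.integral_finset_sum hint]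
  refine Finset.sum_congr rfl fun j _ => ?_
  rw [intervalIntegral.integral_const_mul, ← log_eq_integral j]

lemma T_bound (M : ℕ) (hM : 1 ≤ M) :
    ‖∑ j ∈ range (M+1), (-1:ℝ)^j * (M.choose j) * Real.log ((j:ℝ)+1)‖
      ≤ (∑ i ∈ range M, 1/((i:ℝ)+1))⁻¹ := by
  rw [T_eq M]
  have h := intervalIntegral.norm_integral_le_of_norm_le_const (a := (0:ℝ)) (b := 1)
    (C := (∑ i ∈ range M, 1/((i:ℝ)+1))⁻¹)
    (f := fun t => ∑ j ∈ range (M+1), (-1:ℝ)^j * (M.choose j) * ((j:ℝ)/(1 + (j:ℝ)*t)))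
    (by
      intro x hx
      rw [Set.uIoc_of_le (by norm_num : (0:ℝ) ≤ 1)] at hx
      exact F_bound M hM x hx)
  simpa using h

lemma S_eq (M : ℕ) :
    ∑ m ∈ range M, ∑ k ∈ range (m+1), (-1:ℝ)^k * (m.choose k) * Real.log ((k:ℝ)+2)
      = ∑ k ∈ range M, (-1:ℝ)^k * (M.choose (k+1)) * Real.log ((k:ℝ)+2) := by
  induction M with
  | zero => simp
  | succ M ih =>
    rw [Finset.sum_range_succ, ih]
    have hsp : ∀ k ∈ range (M+1), (-1:ℝ)^k * (((M+1).choose (k+1)):ℝ) * Real.log ((k:ℝ)+2)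
        = (-1:ℝ)^k * ((M.choose (k+1)):ℝ) * Real.log ((k:ℝ)+2)
          + (-1:ℝ)^k * ((M.choose k):ℝ) * Real.log ((k:ℝ)+2) := by
      intro k _
      rw [Nat.choose_succ_succ']
      push_cast
      ring
    rw [Finset.sum_congr rfl hsp, Finset.sum_add_distrib,
      Finset.sum_range_succ (fun k => (-1:ℝ)^k * ((M.choose (k+1)):ℝ) * Real.log ((k:ℝ)+2)) M]
    simp [Nat.choose_succ_self]

lemma T_neg (M : ℕ) :
    ∑ j ∈ range (M+1), (-1:ℝ)^j * (M.choose j) * Real.log ((j:ℝ)+1)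
      = -∑ k ∈ range M, (-1:ℝ)^k * (M.choose (k+1)) * Real.log ((k:ℝ)+2) := by
  rw [Finset.sum_range_succ' (fun j => (-1:ℝ)^j * ((M.choose j)) * Real.log ((j:ℝ)+1)) M]
  have e : ∀ k ∈ range M, (-1:ℝ)^(k+1) * ((M.choose (k+1)):ℝ) * Real.log (((k+1:ℕ):ℝ)+1)
      = -((-1:ℝ)^k * ((M.choose (k+1)):ℝ) * Real.log ((k:ℝ)+2)) := by
    intro k _
    push_cast
    rw [show ((k:ℝ)+1+1) = (k:ℝ)+2 from by ring]
    ring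
  rw [Finset.sum_congr rfl e]
  simp

theorem stmt17 :
    Tendsto (fun M : ℕ =>
        ∏ m ∈ range M, ∏ k ∈ range (m + 1),
          ((k : ℝ) + 2) ^ ((-1 : ℤ) ^ k * (m.choose k : ℤ)))
      atTop (nhds 1) := by
  have key : ∀ M : ℕ, (∏ m ∈ range M, ∏ k ∈ range (m+1),
        ((k:ℝ)+2) ^ ((-1:ℤ)^k * (m.choose k : ℤ)))
      = Real.exp (∑ m ∈ range M, ∑ k ∈ range (m+1),
          (-1:ℝ)^k * (m.choose k) * Real.log ((k:ℝ)+2)) := by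
    intro M
    rw [Real.exp_sum]
    refine Finset.prod_congr rfl fun m _ => ?_
    rw [Real.exp_sum]
    refine Finset.prod_congr rfl fun k _ => ?_
    have hk : (0:ℝ) < (k:ℝ)+2 := by positivity
    rw [← Real.exp_log (zpow_pos hk ((-1:ℤ)^k * (m.choose k : ℤ))), Real.log_zpow]
    congr 1
    push_cast
    ring
  have hS : Tendsto (fun M : ℕ => ∑ m ∈ range M, ∑ k ∈ range (m+1),
      (-1:ℝ)^k * (m.choose k) * Real.log ((k:ℝ)+2)) atTop (nhds 0) := by
    apply squeeze_zero_norm' (a := fun M : ℕ => (∑ i ∈ range M, 1/((i:ℝ)+1))⁻¹)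
    · filter_upwards [eventually_ge_atTop 1] with M hM
      have h1 : ‖∑ m ∈ range M, ∑ k ∈ range (m+1), (-1:ℝ)^k * (m.choose k) * Real.log ((k:ℝ)+2)‖
          = ‖∑ j ∈ range (M+1), (-1:ℝ)^j * (M.choose j) * Real.log ((j:ℝ)+1)‖ := by
        rw [S_eq M, T_neg M, norm_neg]
      rw [h1]
      exact T_bound M hM
    · have h := Real.tendsto_sum_range_one_div_nat_succ_atTop.inv_tendsto_atTop
      convert h using 2
      rfl
  have hmain := (Real.continuous_exp.tendsto 0).comp hS
  rw [Real.exp_zero] at hmain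
  apply hmain.congr
  intro M
  exact (key M).symm
end

section
/- For each real u > 0, the difference between the m-th partial alternating binomial sum Σ_{k=1}^{m} binom(m,k)(-1)^(k+1)/(ku+1) and 1 equals −g_m(1/u), where g_m(z) = m!/((z+1)...(z+m)); in particular 1 − Σ_{k=1}^{m} binom(m,k)(-1)^(k+1)/(ku+1) = m!/((1/u+1)(1/u+2)...(1/u+m)). -/
open Finset

lemma aux19shift (x : ℝ) : ∀ n : ℕ, x * ∏ i ∈ range n, (x + 1 + (i:ℝ)) =
    (∏ i ∈ range n, (x + (i:ℝ))) * (x + (n:ℝ)) := by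
  intro n
  induction n with
  | zero => simp
  | succ n ihn =>
    rw [Finset.prod_range_succ, Finset.prod_range_succ]
    push_cast
    push_cast at ihn
    linear_combination (x + 1 + (n:ℝ)) * ihn

lemma aux19 (m : ℕ) : ∀ x : ℝ, 0 < x →
    ∑ k ∈ range (m + 1), (-1 : ℝ) ^ k * (m.choose k) / (x + k) =
      (m.factorial : ℝ) / ∏ i ∈ range (m + 1), (x + i) := by
  induction m with
  | zero => intro x hx; simp
  | succ m ih =>
    intro x hx
    have hx1 : (0:ℝ) < x + 1 := by linarith
    have hA : (0:ℝ) < ∏ i ∈ range (m + 1), (x + i) := by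
      apply Finset.prod_pos; intro i _; positivity
    have hB : (0:ℝ) < ∏ i ∈ range (m + 1), (x + 1 + i) := by
      apply Finset.prod_pos; intro i _; positivity
    have hsplit : ∑ k ∈ range (m + 2), (-1 : ℝ) ^ k * ((m+1).choose k) / (x + k) =
        (∑ k ∈ range (m + 1), (-1 : ℝ) ^ k * (m.choose k) / (x + k))
        - ∑ k ∈ range (m + 1), (-1 : ℝ) ^ k * (m.choose k) / ((x + 1) + k) := by
      rw [Finset.sum_range_succ' (fun k => (-1 : ℝ) ^ k * ((m+1).choose k) / (x + k)) (m+1)]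
      have e1 : ∀ j ∈ range (m+1), (-1 : ℝ) ^ (j+1) * (((m+1).choose (j+1) : ℕ) : ℝ) / (x + ((j+1 : ℕ) : ℝ)) =
          (-1 : ℝ) ^ (j+1) * (m.choose j) / (x + ((j+1 : ℕ) : ℝ))
          + (-1 : ℝ) ^ (j+1) * (m.choose (j+1)) / (x + ((j+1 : ℕ) : ℝ)) := by
        intro j _
        rw [Nat.choose_succ_succ]
        push_cast
        ring
      rw [Finset.sum_congr rfl e1, Finset.sum_add_distrib]
      have e2 : ∑ j ∈ range (m+1), (-1 : ℝ) ^ (j+1) * (m.choose j : ℝ) / (x + ((j+1 : ℕ) : ℝ)) =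
          - ∑ k ∈ range (m + 1), (-1 : ℝ) ^ k * (m.choose k) / ((x + 1) + k) := by
        rw [← Finset.sum_neg_distrib]
        apply Finset.sum_congr rfl
        intro j _
        push_cast
        ring
      have e3 : (∑ j ∈ range (m+1), (-1 : ℝ) ^ (j+1) * (m.choose (j+1) : ℝ) / (x + ((j+1 : ℕ) : ℝ)))
          + (-1 : ℝ) ^ 0 * ((m.choose 0 : ℕ) : ℝ) / (x + ((0 : ℕ) : ℝ)) =
          ∑ k ∈ range (m + 1), (-1 : ℝ) ^ k * (m.choose k) / (x + k) := by
        rw [← Finset.sum_range_succ' (fun k => (-1 : ℝ) ^ k * (m.choose k) / (x + k)) (m+1)]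
        rw [Finset.sum_range_succ]
        simp
      rw [e2]
      push_cast [Nat.choose_zero_right] at e3 ⊢
      linarith [e3]
    rw [hsplit, ih x hx, ih (x+1) hx1]
    have hPx : ∏ i ∈ range (m + 2), (x + i) = (∏ i ∈ range (m + 1), (x + i)) * (x + ((m:ℝ)+1)) := by
      rw [Finset.prod_range_succ]; push_cast; ring_nf
    have hrel : x * ∏ i ∈ range (m + 1), (x + 1 + i) =
        (∏ i ∈ range (m + 1), (x + i)) * (x + ((m:ℝ)+1)) := by
      have : x * ∏ i ∈ range (m + 1), (x + 1 + (i:ℝ)) =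
          (∏ i ∈ range (m + 1), (x + (i:ℝ))) * (x + ((m+1 : ℕ):ℝ)) := aux19shift x (m+1)
      push_cast at this ⊢
      linarith [this]
    rw [hPx]
    have hfac : (((m+1).factorial : ℕ) : ℝ) = ((m:ℝ)+1) * m.factorial := by
      rw [Nat.factorial_succ]; push_cast; ring
    rw [hfac]
    have hne1 : (x + ((m:ℝ)+1)) ≠ 0 := by positivity
    field_simp
    linear_combination hrel

theorem stmt19 (u : ℝ) (hu : 0 < u) (m : ℕ) (hm : 0 < m) :
    1 - ∑ k ∈ Icc 1 m, (m.choose k : ℝ) * (-1) ^ (k + 1) / (k * u + 1) =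
      (m.factorial : ℝ) / ∏ i ∈ Icc 1 m, (1 / u + i) := by
  have hx : (0:ℝ) < 1/u := by positivity
  have key := aux19 m (1/u) hx
  have hterm : ∀ k : ℕ, k ∈ range (m+1) → (-1 : ℝ) ^ k * (m.choose k : ℝ) / (1/u + (k:ℝ)) =
      u * ((-1 : ℝ) ^ k * (m.choose k) / ((k:ℝ) * u + 1)) := by
    intro k _
    have h1 : (0:ℝ) < (k:ℝ) * u + 1 := by positivity
    have h2 : (0:ℝ) < 1/u + (k:ℝ) := by positivity
    field_simp
    ring
  rw [Finset.sum_congr rfl hterm, ← Finset.mul_sum] at key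
  have hP : (0:ℝ) < ∏ i ∈ Icc 1 m, (1/u + (i:ℝ)) := by
    apply Finset.prod_pos; intro i hi; positivity
  have hprod : ∏ i ∈ range (m + 1), (1/u + (i:ℝ)) = (1/u) * ∏ i ∈ Icc 1 m, (1/u + (i:ℝ)) := by
    have h1 : ∏ i ∈ Icc 1 m, (1/u + (i:ℝ)) = ∏ i ∈ Ico 1 (m+1), (1/u + (i:ℝ)) := by
      congr 1
    rw [h1, Finset.prod_Ico_eq_prod_range]
    have h2 := Finset.prod_range_succ' (fun i => (1/u + (i:ℝ))) m
    rw [h2]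
    simp only [Nat.add_sub_cancel]
    have h3 : ∏ i ∈ range m, (1/u + ((1 + i : ℕ):ℝ)) = ∏ i ∈ range m, (1/u + (((i+1:ℕ)):ℝ)) := by
      apply Finset.prod_congr rfl; intro i _; push_cast; ring
    rw [h3]
    push_cast
    ring
  rw [hprod] at key
  have hdiv : (m.factorial : ℝ) / (1/u * ∏ i ∈ Icc 1 m, (1/u + (i:ℝ))) =
      u * ((m.factorial : ℝ) / ∏ i ∈ Icc 1 m, (1/u + (i:ℝ))) := by
    have hu' : u ≠ 0 := ne_of_gt hu
    have hP' : (∏ i ∈ Icc 1 m, (1/u + (i:ℝ))) ≠ 0 := ne_of_gt hP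
    field_simp
  rw [hdiv] at key
  have key2 : ∑ k ∈ range (m + 1), (-1 : ℝ) ^ k * (m.choose k) / ((k:ℝ) * u + 1) =
      (m.factorial : ℝ) / ∏ i ∈ Icc 1 m, (1/u + (i:ℝ)) :=
    mul_left_cancel₀ (ne_of_gt hu) key
  rw [← key2]
  have hsum : ∑ k ∈ range (m + 1), (-1 : ℝ) ^ k * (m.choose k) / ((k:ℝ) * u + 1) =
      1 + ∑ k ∈ Icc 1 m, (-1 : ℝ) ^ k * (m.choose k) / ((k:ℝ) * u + 1) := by
    rw [Finset.sum_range_succ' (fun k => (-1 : ℝ) ^ k * (m.choose k) / ((k:ℝ) * u + 1)) m]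
    have h1 : ∑ k ∈ Icc 1 m, (-1 : ℝ) ^ k * (m.choose k : ℝ) / ((k:ℝ) * u + 1) =
        ∑ i ∈ range m, (-1 : ℝ) ^ (1+i) * (m.choose (1+i) : ℝ) / (((1+i:ℕ):ℝ) * u + 1) := by
      rw [show Icc 1 m = Ico 1 (m+1) by congr 1, Finset.sum_Ico_eq_sum_range]
      simp
    rw [h1]
    have h2 : ∀ i ∈ range m, (-1 : ℝ) ^ (i+1) * (m.choose (i+1) : ℝ) / (((i+1:ℕ):ℝ) * u + 1) =
        (-1 : ℝ) ^ (1+i) * (m.choose (1+i) : ℝ) / (((1+i:ℕ):ℝ) * u + 1) := by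
      intro i _
      rw [add_comm 1 i]
    rw [Finset.sum_congr rfl h2]
    simp
    ring
  rw [hsum]
  have hneg : ∑ k ∈ Icc 1 m, (m.choose k : ℝ) * (-1) ^ (k + 1) / ((k:ℝ) * u + 1)
      = - ∑ k ∈ Icc 1 m, (-1 : ℝ) ^ k * (m.choose k) / ((k:ℝ) * u + 1) := by
    rw [← Finset.sum_neg_distrib]
    apply Finset.sum_congr rfl
    intro k _
    rw [pow_succ]
    ring
  rw [hneg]
  ring
end
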